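/- arXiv:math/0403329 — 5 statements merged into one kernel-verified Lean document; each statement's English description precedes it below -/
import Mathlib

section
/- Let G be a compact connected Hausdorff topological group with identity element e, let X be a connected Hausdorff topological space, and let p : X → G be a k-sheeted covering map for some positive integer k. Then for every point ẽ ∈ p⁻¹(e) there exists a group structure on X with identity element ẽ such that X, with its given topology, is a topological group (multiplication and inversion are continuous) and p : X → G is a group homomorphism (hence a continuous surjective homomorphism of compact groups). -/
/-- A `k`-sheeted covering map: a continuous surjection such that every point of the base
has an open neighborhood `W` whose preimage is partitioned into `k` disjoint open sets,
each mapped homeomorphically onto `W` by `p`. -/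
def IsCoveringOfDegree {X Y : Type*} [TopologicalSpace X] [TopologicalSpace Y]
    (k : ℕ) (p : X → Y) : Prop :=
  Continuous p ∧ Function.Surjective p ∧
    ∀ y : Y, ∃ W : Set Y, IsOpen W ∧ y ∈ W ∧
      ∃ V : Fin k → Set X,
        (∀ i, IsOpen (V i)) ∧
        (Pairwise fun i j => Disjoint (V i) (V j)) ∧
        (⋃ i, V i) = p ⁻¹' W ∧
        ∀ i, ∃ e : (V i) ≃ₜ W, ∀ x : (V i), p x = e x

namespace CoveringGroupAux

variable {E B : Type*} [TopologicalSpace E] [TopologicalSpace B]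


variable {E B : Type*} [TopologicalSpace E] [TopologicalSpace B]

theorem injOn_sheet {p : E → B} {V : Set E} {W : Set B} (e : V ≃ₜ W)
    (he : ∀ x : V, p x = e x) : Set.InjOn p V := by
  intro a ha b hb hab
  have h1 : (e ⟨a, ha⟩ : B) = e ⟨b, hb⟩ := by
    rw [← he ⟨a, ha⟩, ← he ⟨b, hb⟩]; exact hab
  have h2 : e ⟨a, ha⟩ = e ⟨b, hb⟩ := Subtype.coe_injective h1
  have h3 : (⟨a, ha⟩ : V) = ⟨b, hb⟩ := e.toEquiv.injective h2
  exact congrArg Subtype.val h3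

/-- Uniqueness of lifts through a covering, over a preconnected domain. -/
theorem lift_unique {k : ℕ} {p : E → B} (hp : IsCoveringOfDegree k p)
    {Z : Type*} [TopologicalSpace Z] [PreconnectedSpace Z]
    {f g : Z → E} (hf : Continuous f) (hg : Continuous g)
    (hfg : ∀ z, p (f z) = p (g z)) {z₀ : Z} (h0 : f z₀ = g z₀) : ∀ z, f z = g z := by
  set S : Set Z := {z | f z = g z} with hSdef
  have hopen : IsOpen S := by
    rw [isOpen_iff_forall_mem_open]
    intro z hz
    obtain ⟨W, hWo, hyW, V, hVo, hVd, hVu, hVe⟩ := hp.2.2 (p (f z))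
    have hfz : f z ∈ p ⁻¹' W := by simpa using hyW
    have : f z ∈ ⋃ i, V i := by rw [hVu]; exact hfz
    obtain ⟨i, hi⟩ := Set.mem_iUnion.mp this
    obtain ⟨e, he⟩ := hVe i
    refine ⟨f ⁻¹' (V i) ∩ g ⁻¹' (V i), ?_, (hf.isOpen_preimage _ (hVo i)).inter
      (hg.isOpen_preimage _ (hVo i)), ⟨hi, by rwa [Set.mem_preimage, ← hz]⟩⟩
    rintro w ⟨hw1, hw2⟩
    exact injOn_sheet e he hw1 hw2 (hfg w)
  have hclosed : IsClosed S := by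
    rw [← isOpen_compl_iff, isOpen_iff_forall_mem_open]
    intro z hz
    obtain ⟨W, hWo, hyW, V, hVo, hVd, hVu, hVe⟩ := hp.2.2 (p (f z))
    have hfz : f z ∈ ⋃ i, V i := by rw [hVu]; simpa using hyW
    have hgz : g z ∈ ⋃ i, V i := by
      rw [hVu]; simpa [← hfg z] using hyW
    obtain ⟨i, hi⟩ := Set.mem_iUnion.mp hfz
    obtain ⟨j, hj⟩ := Set.mem_iUnion.mp hgz
    have hij : i ≠ j := by
      rintro rfl
      obtain ⟨e, he⟩ := hVe i
      exact hz (injOn_sheet e he hi hj (hfg z))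
    refine ⟨f ⁻¹' (V i) ∩ g ⁻¹' (V j), ?_, (hf.isOpen_preimage _ (hVo i)).inter
      (hg.isOpen_preimage _ (hVo j)), ⟨hi, hj⟩⟩
    rintro w ⟨hw1, hw2⟩ hw
    have : f w ∈ V j := by rw [hw]; exact hw2
    exact (Set.disjoint_left.mp (hVd hij) hw1) this
  have hne : S = Set.univ := by
    rcases isClopen_iff.mp ⟨hclosed, hopen⟩ with h | h
    · have hz0 : z₀ ∈ S := h0
      rw [h] at hz0
      simp at hz0
    · exact h
  intro z
  have : z ∈ S := hne ▸ Set.mem_univ z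
  exact this



/-- Every fiber of a `k`-sheeted covering has exactly `k` elements (as a finset). -/
theorem fiber_card {k : ℕ} {p : E → B} (hp : IsCoveringOfDegree k p) (y : B) :
    ∃ s : Finset E, s.card = k ∧ ∀ x : E, x ∈ s ↔ p x = y := by
  classical
  obtain ⟨W, hWo, hyW, V, hVo, hVd, hVu, hVe⟩ := hp.2.2 y
  choose e he using hVe
  set f : Fin k → E := fun i => ((e i).symm ⟨y, hyW⟩ : E) with hf
  have hfV : ∀ i, f i ∈ V i := fun i => ((e i).symm ⟨y, hyW⟩).2
  have hpf : ∀ i, p (f i) = y := by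
    intro i
    have := he i ((e i).symm ⟨y, hyW⟩)
    rw [this]
    simp
  have hinj : Function.Injective f := by
    intro i j hij
    by_contra hne
    have h1 : f i ∈ V j := hij ▸ hfV j
    exact (Set.disjoint_left.mp (hVd hne) (hfV i)) h1
  refine ⟨Finset.univ.image f, ?_, ?_⟩
  · rw [Finset.card_image_of_injective _ hinj, Finset.card_univ, Fintype.card_fin]
  · intro x
    simp only [Finset.mem_image, Finset.mem_univ, true_and]
    constructor
    · rintro ⟨i, rfl⟩; exact hpf i
    · intro hx
      have hx' : x ∈ ⋃ i, V i := by rw [hVu]; simpa [hx] using hyW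
      obtain ⟨i, hi⟩ := Set.mem_iUnion.mp hx'
      refine ⟨i, ?_⟩
      have h1 : e i ⟨x, hi⟩ = ⟨y, hyW⟩ := by
        apply Subtype.coe_injective
        show ((e i ⟨x, hi⟩ : W) : B) = y
        rw [← he i ⟨x, hi⟩]; exact hx
      have h2 : (⟨x, hi⟩ : V i) = (e i).symm ⟨y, hyW⟩ := by
        rw [← h1]; simp
      rw [hf]
      exact (congrArg Subtype.val h2).symm

/-- A finite-sheeted covering is a closed map. -/
theorem closedMap {k : ℕ} {p : E → B} (hp : IsCoveringOfDegree k p) : IsClosedMap p := by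
  intro C hC
  rw [← isOpen_compl_iff, isOpen_iff_forall_mem_open]
  intro y hy
  obtain ⟨W, hWo, hyW, V, hVo, hVd, hVu, hVe⟩ := hp.2.2 y
  choose e he using hVe
  have hA : ∀ i, IsClosed ((e i) '' (Subtype.val ⁻¹' C) : Set W) := by
    intro i
    have himg : (⇑(e i) '' (Subtype.val ⁻¹' C) : Set W) = ⇑(e i).symm ⁻¹' (Subtype.val ⁻¹' C) := by
      ext w
      constructor
      · rintro ⟨u, hu, rfl⟩
        simpa using hu
      · intro hw
        exact ⟨(e i).symm w, hw, by simp⟩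
    rw [himg]
    have : IsClosed (Subtype.val ⁻¹' C : Set (V i)) := hC.preimage continuous_subtype_val
    exact this.preimage (e i).symm.continuous
  have hF : ∀ i, ∃ F : Set B, IsClosed F ∧
      Subtype.val ⁻¹' F = ((e i) '' (Subtype.val ⁻¹' C) : Set W) := by
    intro i
    exact isClosed_induced_iff.mp (hA i)
  choose F hFc hFe using hF
  refine ⟨W ∩ ⋂ i, (F i)ᶜ, ?_, hWo.inter (isOpen_iInter_of_finite fun i => (hFc i).isOpen_compl),
    ⟨hyW, ?_⟩⟩
  · rintro y' ⟨hy'W, hy'F⟩ ⟨x, hxC, hpx⟩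
    have hx' : x ∈ ⋃ i, V i := by rw [hVu]; simpa [hpx] using hy'W
    obtain ⟨i, hi⟩ := Set.mem_iUnion.mp hx'
    have h1 : e i ⟨x, hi⟩ ∈ ((e i) '' (Subtype.val ⁻¹' C) : Set W) :=
      Set.mem_image_of_mem _ (by simpa using hxC)
    rw [← hFe i] at h1
    have h2 : (↑(e i ⟨x, hi⟩) : B) ∈ F i := h1
    have h3 : (↑(e i ⟨x, hi⟩) : B) = y' := by rw [← he i ⟨x, hi⟩]; exact hpx
    rw [h3] at h2
    exact (Set.mem_iInter.mp hy'F i) h2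
  · rw [Set.mem_iInter]
    intro i hyF
    have h1 : (⟨y, hyW⟩ : W) ∈ Subtype.val ⁻¹' (F i) := hyF
    rw [hFe i] at h1
    obtain ⟨u, huC, heu⟩ := h1
    apply hy
    refine ⟨u, by simpa using huC, ?_⟩
    rw [he i u, heu]

/-- The total space of a finite covering of a compact space is compact. -/
theorem compactSpace {k : ℕ} {p : E → B} [CompactSpace B]
    (hp : IsCoveringOfDegree k p) : CompactSpace E := by
  have hproper : IsProperMap p := by
    rw [isProperMap_iff_isClosedMap_and_compact_fibers]
    refine ⟨hp.1, closedMap hp, ?_⟩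
    intro y
    obtain ⟨s, hscard, hsmem⟩ := fiber_card hp y
    have : p ⁻¹' {y} = ↑s := by
      ext x; simp [hsmem x]
    rw [this]
    exact s.finite_toSet.isCompact
  rw [← isCompact_univ_iff]
  simpa using hproper.isCompact_preimage isCompact_univ



/-- Star-refinement lemma. -/
theorem star_cover {X : Type*} [TopologicalSpace X] [CompactSpace X] [T2Space X]
    {U₀ : Set (X × X)}
    (hU₀o : IsOpen U₀) (hU₀d : ∀ x : X, (x, x) ∈ U₀) :
    ∃ B : X → Set X, (∀ x, IsOpen (B x)) ∧ (∀ x, x ∈ B x) ∧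
      ∀ x x', (B x ∩ B x').Nonempty → B x ×ˢ B x' ⊆ U₀ := by
  classical
  have hA : ∀ x : X, ∃ A : Set X, IsOpen A ∧ x ∈ A ∧ A ×ˢ A ⊆ U₀ := by
    intro x
    rcases isOpen_prod_iff.mp hU₀o x x (hU₀d x) with ⟨A₁, A₂, h1, h2, hx1, hx2, hsub⟩
    exact ⟨A₁ ∩ A₂, h1.inter h2, ⟨hx1, hx2⟩,
      fun q hq => hsub ⟨hq.1.1, hq.2.2⟩⟩
  choose A hAo hAx hAU using hA
  obtain ⟨sA, hsA⟩ := isCompact_univ.elim_finite_subcover A hAo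
    (fun x _ => Set.mem_iUnion.mpr ⟨x, hAx x⟩)
  obtain ⟨v, hvcov, hvo, hvcl⟩ :=
    exists_subset_iUnion_closure_subset (s := (Set.univ : Set X))
      (u := fun t : ↥sA => A ↑t) isClosed_univ (fun t => hAo ↑t)
      (fun x _ => Set.toFinite _)
      (by
        intro x _
        have hx := hsA (Set.mem_univ x)
        simp only [Set.mem_iUnion] at hx ⊢
        obtain ⟨i, hi, hmem⟩ := hx
        exact ⟨⟨i, hi⟩, hmem⟩)
  refine ⟨fun x => ⋂ t : ↥sA, (if x ∈ closure (v t) then A ↑t else (closure (v t))ᶜ),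
    ?_, ?_, ?_⟩
  · intro x
    apply isOpen_iInter_of_finite
    intro t
    split
    · exact hAo _
    · exact isClosed_closure.isOpen_compl
  · intro x
    refine Set.mem_iInter.mpr fun t => ?_
    split
    · next h => exact hvcl t h
    · next h => exact h
  · rintro x x' ⟨z, hzx, hzx'⟩ ⟨w, w'⟩ ⟨hw, hw'⟩
    have hz : z ∈ ⋃ t : ↥sA, v t := hvcov (Set.mem_univ z)
    obtain ⟨t₀, hzt⟩ := Set.mem_iUnion.mp hz
    have hzc : z ∈ closure (v t₀) := subset_closure hzt
    have hxcl : x ∈ closure (v t₀) := by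
      by_contra hxc
      have := Set.mem_iInter.mp hzx t₀
      rw [if_neg hxc] at this
      exact this hzc
    have hxcl' : x' ∈ closure (v t₀) := by
      by_contra hxc
      have := Set.mem_iInter.mp hzx' t₀
      rw [if_neg hxc] at this
      exact this hzc
    have hBsub : ∀ u, u ∈ (⋂ t : ↥sA, (if x ∈ closure (v t) then A ↑t else (closure (v t))ᶜ))
        → u ∈ A ↑t₀ := by
      intro u hu
      have := Set.mem_iInter.mp hu t₀
      rwa [if_pos hxcl] at this
    have hBsub' : ∀ u, u ∈ (⋂ t : ↥sA, (if x' ∈ closure (v t) then A ↑t else (closure (v t))ᶜ))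
        → u ∈ A ↑t₀ := by
      intro u hu
      have := Set.mem_iInter.mp hu t₀
      rwa [if_pos hxcl'] at this
    exact hAU ↑t₀ ⟨hBsub w hw, hBsub' w' hw'⟩

/-- There is an open neighborhood of the diagonal on which `p` is "injective". -/
theorem exists_diag_nbhd [T2Space B] {k : ℕ} {p : E → B} (hp : IsCoveringOfDegree k p) :
    ∃ U₀ : Set (E × E), IsOpen U₀ ∧ (∀ x : E, (x, x) ∈ U₀) ∧
      ∀ z z' : E, (z, z') ∈ U₀ → p z = p z' → z = z' := by
  refine ⟨{w | p w.1 = p w.2 → w.1 = w.2}, ?_, fun x => fun _ => rfl,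
    fun z z' hw hpz => hw hpz⟩
  rw [isOpen_iff_forall_mem_open]
  rintro ⟨z, z'⟩ hz
  by_cases hpzz : p z = p z'
  · -- then z = z'; use a sheet
    have hzz : z = z' := hz hpzz
    subst hzz
    obtain ⟨W, hWo, hyW, V, hVo, hVd, hVu, hVe⟩ := hp.2.2 (p z)
    have : z ∈ ⋃ i, V i := by rw [hVu]; simpa using hyW
    obtain ⟨i, hi⟩ := Set.mem_iUnion.mp this
    obtain ⟨e, he⟩ := hVe i
    refine ⟨V i ×ˢ V i, ?_, (hVo i).prod (hVo i), ⟨hi, hi⟩⟩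
    rintro ⟨u, u'⟩ ⟨hu, hu'⟩ hpu
    exact injOn_sheet e he hu hu' hpu
  · -- p-values differ on a neighborhood
    refine ⟨(fun w : E × E => (p w.1, p w.2)) ⁻¹' (Set.diagonal B)ᶜ, ?_, ?_, ?_⟩
    · rintro ⟨u, u'⟩ hu hpu
      exact absurd hpu hu
    · exact IsOpen.preimage
        ((hp.1.comp continuous_fst).prodMk (hp.1.comp continuous_snd))
        isClosed_diagonal.isOpen_compl
    · exact fun h => hpzz h

/-- Charts with all sheets small with respect to a given system of neighborhoods. -/
theorem exists_small_charts {k : ℕ} {p : E → B} (hp : IsCoveringOfDegree k p)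
    (Bs : E → Set E) (hBx : ∀ x, x ∈ Bs x) (hBo : ∀ x, IsOpen (Bs x)) (g : B) :
    ∃ W' : Set B, IsOpen W' ∧ g ∈ W' ∧
      ∀ z : E, p z ∈ W' → ∃ V : Set E, z ∈ V ∧ IsOpen V ∧ (∃ x₀, V ⊆ Bs x₀) ∧
        ∃ e : V ≃ₜ W', ∀ v : V, p v = e v := by
  classical
  obtain ⟨W, hWo, hgW, V, hVo, hVd, hVu, hVe⟩ := hp.2.2 g
  choose e he using hVe
  set x : Fin k → E := fun i => ((e i).symm ⟨g, hgW⟩ : E) with hx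
  set N : Fin k → Set B := fun i =>
    Subtype.val '' ((e i) '' (Subtype.val ⁻¹' (Bs (x i)))) with hN
  have hNo : ∀ i, IsOpen (N i) := by
    intro i
    exact hWo.isOpenMap_subtype_val _
      ((e i).isOpenMap _ (IsOpen.preimage continuous_subtype_val (hBo (x i))))
  have hgN : ∀ i, g ∈ N i := by
    intro i
    refine ⟨(e i) ((e i).symm ⟨g, hgW⟩), ⟨(e i).symm ⟨g, hgW⟩, ?_, rfl⟩, by simp⟩
    show ((e i).symm ⟨g, hgW⟩ : E) ∈ Bs (x i)
    exact hBx (x i)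
  set W' : Set B := W ∩ ⋂ i, N i with hW'
  have hW'W : W' ⊆ W := Set.inter_subset_left
  have hW'o : IsOpen W' := hWo.inter (isOpen_iInter_of_finite hNo)
  have hgW' : g ∈ W' := ⟨hgW, Set.mem_iInter.mpr hgN⟩
  refine ⟨W', hW'o, hgW', ?_⟩
  intro z hz
  have hzW : z ∈ ⋃ i, V i := by rw [hVu]; exact hW'W hz
  obtain ⟨i, hi⟩ := Set.mem_iUnion.mp hzW
  set V' : Set E := V i ∩ p ⁻¹' W' with hV'
  have hV'small : V' ⊆ Bs (x i) := by
    rintro v ⟨hvV, hvW⟩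
    have hvN : p v ∈ N i := (Set.mem_iInter.mp hvW.2) i
    obtain ⟨w, ⟨u, huB, heu⟩, hval⟩ := hvN
    have h1 : (e i) ⟨v, hvV⟩ = w := by
      apply Subtype.coe_injective
      show ((e i ⟨v, hvV⟩ : W) : B) = (w : B)
      rw [← he i ⟨v, hvV⟩]
      exact hval.symm
    have h2 : u = ⟨v, hvV⟩ := (e i).injective (by rw [heu, h1])
    have : (u : E) ∈ Bs (x i) := huB
    rwa [h2] at this
  -- the restricted homeomorphism
  have hmemW : ∀ w : W', ((w : B)) ∈ W := fun w => hW'W w.2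
  have hpinv : ∀ w : W', p ((e i).symm ⟨(w : B), hmemW w⟩ : E) = (w : B) := by
    intro w
    rw [he i ((e i).symm ⟨(w : B), hmemW w⟩)]
    simp
  refine ⟨V', ⟨hi, hz⟩, (hVo i).inter (IsOpen.preimage hp.1 hW'o), ⟨x i, hV'small⟩, ?_⟩
  refine ⟨{ toFun := fun u => ⟨p u, u.2.2⟩
            invFun := fun w => ⟨((e i).symm ⟨(w : B), hmemW w⟩ : E),
              ⟨((e i).symm ⟨(w : B), hmemW w⟩).2, by rw [Set.mem_preimage, hpinv w]; exact w.2⟩⟩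
            left_inv := ?_
            right_inv := ?_
            continuous_toFun := ?_
            continuous_invFun := ?_ }, ?_⟩
  · rintro ⟨u, huV, huW⟩
    apply Subtype.coe_injective
    show ((e i).symm ⟨p u, _⟩ : E) = u
    have h1 : (⟨p u, hW'W huW⟩ : W) = (e i) ⟨u, huV⟩ := by
      apply Subtype.coe_injective
      exact he i ⟨u, huV⟩
    rw [h1]
    simp
  · rintro ⟨w, hw⟩
    apply Subtype.coe_injective
    exact hpinv ⟨w, hw⟩
  · exact Continuous.subtype_mk (hp.1.comp continuous_subtype_val) _
  · have hc1 : Continuous fun w : W' => (⟨(w : B), hmemW w⟩ : W) :=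
      Continuous.subtype_mk continuous_subtype_val _
    exact Continuous.subtype_mk
      (continuous_subtype_val.comp ((e i).symm.continuous.comp hc1)) _
  · intro v
    rfl


/-- The hard kernel: existence of a continuous lift of the multiplication. -/
theorem exists_mul_lift
    {X G : Type*} [TopologicalSpace G] [Group G] [IsTopologicalGroup G]
    [CompactSpace G] [ConnectedSpace G] [T2Space G]
    [TopologicalSpace X] [ConnectedSpace X] [T2Space X]
    (k : ℕ) (hk : 0 < k) (p : X → G) (hp : IsCoveringOfDegree k p)
    (e' : X) (he : p e' = 1) :
    ∃ μ : X × X → X, Continuous μ ∧ (∀ a : X × X, p (μ a) = p a.1 * p a.2) ∧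
      μ (e', e') = e' := by
  classical
  have hXcpt : CompactSpace X := compactSpace hp
  obtain ⟨U₀, hU₀o, hU₀d, hU₀p⟩ := exists_diag_nbhd hp
  obtain ⟨Bs, hBo, hBx, hBstar⟩ := star_cover hU₀o hU₀d
  -- the "mate" relation: z is the companion of y over g * p y, within a common small sheet
  set Mate : G → X → X → Prop := fun g y z =>
    p z = g * p y ∧ ∃ V : Set X, (∃ a, V ⊆ Bs a) ∧ y ∈ V ∧ z ∈ V with hMatedef
  have hMuniq : ∀ {g y z z'}, Mate g y z → Mate g y z' → z = z' := by
    rintro g y z z' ⟨hpz, V, ⟨a, hVa⟩, hyV, hzV⟩ ⟨hpz', V', ⟨a', hVa'⟩, hyV', hzV'⟩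
    have hne : (Bs a ∩ Bs a').Nonempty := ⟨y, hVa hyV, hVa' hyV'⟩
    exact hU₀p z z' (hBstar a a' hne ⟨hVa hzV, hVa' hzV'⟩) (hpz.trans hpz'.symm)
  have hMsym : ∀ {g y z}, Mate g y z → Mate g⁻¹ z y := by
    rintro g y z ⟨hpz, V, hVs, hyV, hzV⟩
    exact ⟨by rw [hpz, inv_mul_cancel_left], V, hVs, hzV, hyV⟩
  -- charts with small sheets
  choose W hWo hWg hWsheet using fun g => exists_small_charts hp Bs hBx hBo g
  -- a "Lebesgue" neighborhood N of 1
  have hNh : ∀ h : G, ∃ (N₁ Q : Set G), IsOpen N₁ ∧ IsOpen Q ∧ (1:G) ∈ N₁ ∧ h ∈ Q ∧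
      ∃ m, ∀ n ∈ N₁, ∀ q ∈ Q, n * q ∈ W m := by
    intro h
    have hc : Continuous fun q : G × G => q.1 * q.2 := continuous_mul
    obtain ⟨N₁, Q, hN₁o, hQo, h1, h2, hsub⟩ := isOpen_prod_iff.mp
      (hc.isOpen_preimage _ (hWo h)) 1 h (by simpa using hWg h)
    refine ⟨N₁, Q, hN₁o, hQo, h1, h2, h, fun n hn q hq => ?_⟩
    have hmem : (n, q) ∈ N₁ ×ˢ Q := ⟨hn, hq⟩
    exact hsub hmem
  choose N₁ Q hN₁o hQo hN₁1 hQh gm hNQ using hNh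
  obtain ⟨sH, hsH⟩ := isCompact_univ.elim_finite_subcover Q hQo
    (fun h _ => Set.mem_iUnion.mpr ⟨h, hQh h⟩)
  set N₀ : Set G := ⋂ h ∈ sH, N₁ h with hN₀def
  have hN₀o : IsOpen N₀ := isOpen_biInter_finset (fun h _ => hN₁o h)
  have hN₀1 : (1:G) ∈ N₀ := Set.mem_iInter₂.mpr fun h _ => hN₁1 h
  set N : Set G := N₀ ∩ (fun g : G => g⁻¹) ⁻¹' N₀ with hNdef
  have hNo : IsOpen N := hN₀o.inter (IsOpen.preimage continuous_inv hN₀o)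
  have hN1 : (1:G) ∈ N := ⟨hN₀1, by simpa using hN₀1⟩
  have hNsym : ∀ g ∈ N, g⁻¹ ∈ N := by
    rintro g ⟨ha, hb⟩
    exact ⟨hb, by simpa using ha⟩
  have hLeb : ∀ h : G, ∃ m, h ∈ W m ∧ ∀ n ∈ N, n * h ∈ W m := by
    intro h
    have hh : h ∈ ⋃ h' ∈ sH, Q h' := hsH (Set.mem_univ h)
    simp only [Set.mem_iUnion] at hh
    obtain ⟨h', hh', hQ⟩ := hh
    refine ⟨gm h', ?_, ?_⟩
    · have := hNQ h' 1 (hN₁1 h') h hQ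
      simpa using this
    · intro n hn
      exact hNQ h' n (Set.mem_iInter₂.mp hn.1 h' hh') h hQ
  -- mate existence for g ∈ N
  have hMex : ∀ g ∈ N, ∀ y : X, ∃ z, Mate g y z := by
    intro g hg y
    obtain ⟨m, hym, hall⟩ := hLeb (p y)
    obtain ⟨V, hyV, hVo', hVsm, e, heV⟩ := hWsheet m y hym
    have hgy : g * p y ∈ W m := hall g hg
    refine ⟨((e.symm ⟨g * p y, hgy⟩ : V) : X), ?_, V, hVsm, hyV, (e.symm ⟨g * p y, hgy⟩).2⟩
    rw [heV (e.symm ⟨g * p y, hgy⟩)]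
    simp
  -- the mate function Φ
  obtain ⟨Φ, hΦm⟩ : ∃ Φ : G → X → X, ∀ g y z, Mate g y z → Φ g y = z := by
    refine ⟨fun g y => if h : ∃ z, Mate g y z then h.choose else y, ?_⟩
    intro g y z hm
    have hex : ∃ z', Mate g y z' := ⟨z, hm⟩
    show (if h : ∃ z, Mate g y z then h.choose else y) = z
    rw [dif_pos hex]
    exact hMuniq hex.choose_spec hm
  have hΦmate : ∀ g ∈ N, ∀ y, Mate g y (Φ g y) := by
    intro g hg y
    obtain ⟨z, hz⟩ := hMex g hg y
    rw [hΦm g y z hz]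
    exact hz
  have hΦp : ∀ g ∈ N, ∀ y, p (Φ g y) = g * p y := fun g hg y => (hΦmate g hg y).1
  -- continuity of Φ at points of N × X
  have hΦc : ∀ g₀ ∈ N, ∀ y₀ : X,
      ContinuousAt (fun q : G × X => Φ q.1 q.2) (g₀, y₀) := by
    intro g₀ hg₀ y₀
    obtain ⟨m, hym, hall⟩ := hLeb (p y₀)
    obtain ⟨V, hyV, hVo', hVsm, e, heV⟩ := hWsheet m y₀ hym
    set 𝒰 : Set (G × X) := (Set.univ ×ˢ V) ∩ (fun q : G × X => q.1 * p q.2) ⁻¹' (W m)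
      with h𝒰def
    have h𝒰o : IsOpen 𝒰 := (isOpen_univ.prod hVo').inter
      (IsOpen.preimage (continuous_fst.mul (hp.1.comp continuous_snd)) (hWo m))
    have h𝒰m : (g₀, y₀) ∈ 𝒰 := ⟨⟨trivial, hyV⟩, hall g₀ hg₀⟩
    have hres : ContinuousOn (fun q : G × X => Φ q.1 q.2) 𝒰 := by
      rw [continuousOn_iff_continuous_restrict]
      have hval : ∀ q : ↥𝒰, Φ (q : G × X).1 (q : G × X).2
          = ((e.symm ⟨(q : G × X).1 * p (q : G × X).2, q.2.2⟩ : V) : X) := by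
        rintro ⟨⟨g, y⟩, ⟨⟨-, hyV'⟩, hq⟩⟩
        apply hΦm
        refine ⟨?_, V, hVsm, hyV', (e.symm ⟨g * p y, hq⟩).2⟩
        rw [heV (e.symm ⟨g * p y, hq⟩)]
        simp
      have hform : Continuous (fun q : ↥𝒰 =>
          ((e.symm ⟨(q : G × X).1 * p (q : G × X).2, q.2.2⟩ : V) : X)) := by
        refine continuous_subtype_val.comp (e.symm.continuous.comp ?_)
        exact Continuous.subtype_mk
          ((continuous_fst.comp continuous_subtype_val).mul
            (hp.1.comp (continuous_snd.comp continuous_subtype_val))) _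
      exact hform.congr (fun q => (hval q).symm)
    exact hres.continuousAt (h𝒰o.mem_nhds h𝒰m)
  -- the key neighborhoods
  have hkey : ∀ x : X, ∃ O : Set X, IsOpen O ∧ x ∈ O ∧
      ∀ x' ∈ O, (p x' * (p x)⁻¹) ∈ N ∧ Mate (p x' * (p x)⁻¹) x x' := by
    intro x
    obtain ⟨m, hxm, -⟩ := hLeb (p x)
    obtain ⟨V, hxV, hVo', hVsm, e, heV⟩ := hWsheet m x hxm
    refine ⟨V ∩ (fun x' => p x' * (p x)⁻¹) ⁻¹' N,
      hVo'.inter (IsOpen.preimage (hp.1.mul continuous_const) hNo),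
      ⟨hxV, by simp only [Set.mem_preimage, mul_inv_cancel]; exact hN1⟩, ?_⟩
    rintro x' ⟨hx'V, hx'N⟩
    exact ⟨hx'N, (inv_mul_cancel_right (p x') (p x)).symm, V, hVsm, hxV, hx'V⟩
  -- the set of points admitting anchored lifts of left translation
  set 𝒜 : Set X := {x | ∃ l : X → X, Continuous l ∧ (∀ y, p (l y) = p x * p y) ∧ l e' = x}
    with h𝒜def
  have he'A : e' ∈ 𝒜 := ⟨id, continuous_id, fun y => by simp [he], rfl⟩
  have hAopen : IsOpen 𝒜 := by
    rw [isOpen_iff_forall_mem_open]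
    intro x hx
    obtain ⟨l, hlc, hlp, hle⟩ := hx
    obtain ⟨O, hOo, hxO, hOw⟩ := hkey x
    refine ⟨O, ?_, hOo, hxO⟩
    intro x' hx'
    obtain ⟨hnN, hmate⟩ := hOw x' hx'
    refine ⟨fun y => Φ (p x' * (p x)⁻¹) (l y), ?_, ?_, ?_⟩
    · rw [continuous_iff_continuousAt]
      intro y'
      have hin : ContinuousAt (fun y : X => ((p x' * (p x)⁻¹ : G), l y)) y' :=
        (continuous_const.prodMk hlc).continuousAt
      exact ContinuousAt.comp (f := fun y : X => ((p x' * (p x)⁻¹ : G), l y)) (hΦc _ hnN (l y')) hin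
    · intro y
      rw [hΦp _ hnN, hlp, ← mul_assoc, inv_mul_cancel_right]
    · show Φ (p x' * (p x)⁻¹) (l e') = x'
      rw [hle]
      exact hΦm _ _ _ hmate
  have hAclosed : IsClosed 𝒜 := by
    rw [← isOpen_compl_iff, isOpen_iff_forall_mem_open]
    intro x hx
    obtain ⟨O, hOo, hxO, hOw⟩ := hkey x
    refine ⟨O, ?_, hOo, hxO⟩
    intro x' hx' hx'A
    obtain ⟨l', hlc', hlp', hle'⟩ := hx'A
    obtain ⟨hnN, hmate⟩ := hOw x' hx'
    apply hx
    refine ⟨fun y => Φ (p x' * (p x)⁻¹)⁻¹ (l' y), ?_, ?_, ?_⟩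
    · rw [continuous_iff_continuousAt]
      intro y'
      have hin : ContinuousAt (fun y : X => (((p x' * (p x)⁻¹)⁻¹ : G), l' y)) y' :=
        (continuous_const.prodMk hlc').continuousAt
      exact ContinuousAt.comp (f := fun y : X => (((p x' * (p x)⁻¹)⁻¹ : G), l' y)) (hΦc _ (hNsym _ hnN) (l' y')) hin
    · intro y
      rw [hΦp _ (hNsym _ hnN), hlp', mul_inv_rev, inv_inv, mul_assoc, inv_mul_cancel_left]
    · show Φ (p x' * (p x)⁻¹)⁻¹ (l' e') = x
      rw [hle']
      exact hΦm _ _ _ (hMsym hmate)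
  have hAuniv : 𝒜 = Set.univ := by
    rcases isClopen_iff.mp ⟨hAclosed, hAopen⟩ with h | h
    · exact absurd (h ▸ he'A) (by simp)
    · exact h
  have hAx : ∀ x : X, ∃ l : X → X, Continuous l ∧ (∀ y, p (l y) = p x * p y) ∧ l e' = x :=
    fun x => by
      have : x ∈ 𝒜 := hAuniv ▸ Set.mem_univ x
      exact this
  choose lf hlc hlp hle using hAx
  refine ⟨fun a => lf a.1 a.2, ?_, fun a => hlp a.1 a.2, hle e'⟩
  -- continuity of the multiplication
  rw [continuous_iff_continuousAt]
  rintro ⟨x₀, y₀⟩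
  obtain ⟨O, hOo, hxO, hOw⟩ := hkey x₀
  have hFA : ContinuousAt (fun a : X × X => Φ (p a.1 * (p x₀)⁻¹) (lf x₀ a.2)) (x₀, y₀) := by
    have h1N : p x₀ * (p x₀)⁻¹ ∈ N := by
      rw [mul_inv_cancel]; exact hN1
    have hin : ContinuousAt (fun a : X × X => ((p a.1 * (p x₀)⁻¹ : G), lf x₀ a.2)) (x₀, y₀) :=
      (((hp.1.comp continuous_fst).mul continuous_const).prodMk
        ((hlc x₀).comp continuous_snd)).continuousAt
    exact ContinuousAt.comp (f := fun a : X × X => ((p a.1 * (p x₀)⁻¹ : G), lf x₀ a.2)) (hΦc _ h1N (lf x₀ y₀)) hin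
  have hagree : ∀ a ∈ O ×ˢ (Set.univ : Set X),
      lf a.1 a.2 = Φ (p a.1 * (p x₀)⁻¹) (lf x₀ a.2) := by
    rintro ⟨x, y⟩ ⟨hxO', -⟩
    obtain ⟨hnN, hmate⟩ := hOw x hxO'
    have hl2c : Continuous fun y' => Φ (p x * (p x₀)⁻¹) (lf x₀ y') := by
      rw [continuous_iff_continuousAt]
      intro y'
      have hin : ContinuousAt (fun y'' : X => ((p x * (p x₀)⁻¹ : G), lf x₀ y'')) y' :=
        (continuous_const.prodMk (hlc x₀)).continuousAt
      exact ContinuousAt.comp (f := fun y'' : X => ((p x * (p x₀)⁻¹ : G), lf x₀ y'')) (hΦc _ hnN (lf x₀ y')) hin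
    have hl2p : ∀ y', p (Φ (p x * (p x₀)⁻¹) (lf x₀ y')) = p x * p y' := by
      intro y'
      rw [hΦp _ hnN, hlp x₀, ← mul_assoc, inv_mul_cancel_right]
    have h0 : lf x e' = Φ (p x * (p x₀)⁻¹) (lf x₀ e') := by
      rw [hle x, hle x₀]
      exact (hΦm _ _ _ hmate).symm
    exact lift_unique hp (hlc x) hl2c
      (fun y' => by rw [hlp x y', hl2p y']) h0 y
  have hmem : O ×ˢ (Set.univ : Set X) ∈ nhds (x₀, y₀) :=
    (hOo.prod isOpen_univ).mem_nhds ⟨hxO, trivial⟩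
  exact hFA.congr (Filter.eventuallyEq_of_mem hmem (fun a ha => (hagree a ha).symm))


end CoveringGroupAux

open CoveringGroupAux in
/-- Covering group theorem: a finite-sheeted covering of a compact connected Hausdorff
topological group from a connected Hausdorff space carries a unique-identity topological
group structure making the covering map a homomorphism. -/
theorem covering_group_theorem_exists
    {X G : Type*} [TopologicalSpace G] [Group G] [IsTopologicalGroup G]
    [CompactSpace G] [ConnectedSpace G] [T2Space G]
    [TopologicalSpace X] [ConnectedSpace X] [T2Space X]
    (k : ℕ) (hk : 0 < k) (p : X → G) (hp : IsCoveringOfDegree k p)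
    (e' : X) (he : p e' = 1) :
    ∃ gr : Group X, gr.one = e' ∧ (@IsTopologicalGroup X _ gr) ∧
      ∀ x y : X, p (gr.mul x y) = p x * p y := by
  classical
  obtain ⟨μ, hμc, hμp, hμe⟩ := exists_mul_lift k hk p hp e' he
  -- identities
  have mul_one' : ∀ x, μ (x, e') = x := by
    have hc : Continuous fun x : X => μ (x, e') :=
      hμc.comp (continuous_id.prodMk continuous_const)
    have := lift_unique hp hc continuous_id
      (fun z => by rw [hμp (z, e'), he, mul_one]; rfl) (z₀ := e') hμe
    exact this
  have one_mul' : ∀ y, μ (e', y) = y := by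
    have hc : Continuous fun y : X => μ (e', y) :=
      hμc.comp (continuous_const.prodMk continuous_id)
    have := lift_unique hp hc continuous_id
      (fun z => by rw [hμp (e', z), he, one_mul]; rfl) (z₀ := e') hμe
    exact this
  -- associativity
  have assoc : ∀ a b c : X, μ (μ (a, b), c) = μ (a, μ (b, c)) := by
    have c1 : Continuous fun w : X × X × X => μ (μ (w.1, w.2.1), w.2.2) :=
      hμc.comp ((hμc.comp (continuous_fst.prodMk
        (continuous_fst.comp continuous_snd))).prodMk
        (continuous_snd.comp continuous_snd))
    have c2 : Continuous fun w : X × X × X => μ (w.1, μ (w.2.1, w.2.2)) :=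
      hμc.comp (continuous_fst.prodMk (hμc.comp ((continuous_fst.comp
        continuous_snd).prodMk (continuous_snd.comp continuous_snd))))
    have hpe : ∀ w : X × X × X, p (μ (μ (w.1, w.2.1), w.2.2)) = p (μ (w.1, μ (w.2.1, w.2.2))) := by
      intro w
      rw [hμp (μ (w.1, w.2.1), w.2.2), hμp (w.1, w.2.1),
        hμp (w.1, μ (w.2.1, w.2.2)), hμp (w.2.1, w.2.2), mul_assoc]
    have h0 : μ (μ (e', e'), e') = μ (e', μ (e', e')) := by rw [hμe, hμe]
    have := lift_unique hp c1 c2 hpe (z₀ := ((e' : X), (e' : X), (e' : X))) h0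
    intro a b c
    exact this (a, b, c)
  -- two right-translations by fiber elements agreeing somewhere agree, hence coincide
  have pairRigid : ∀ δ δ' : X, p δ = 1 → p δ' = 1 → (∃ z, μ (z, δ) = μ (z, δ')) → δ = δ' := by
    rintro δ δ' hδ hδ' ⟨z, hz⟩
    have c1 : Continuous fun w : X => μ (w, δ) := hμc.comp (continuous_id.prodMk continuous_const)
    have c2 : Continuous fun w : X => μ (w, δ') := hμc.comp (continuous_id.prodMk continuous_const)
    have hpe : ∀ w : X, p (μ (w, δ)) = p (μ (w, δ')) := by
      intro w; rw [hμp (w, δ), hμp (w, δ'), hδ, hδ']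
    have := lift_unique hp c1 c2 hpe (z₀ := z) hz e'
    rwa [one_mul', one_mul'] at this
  -- transitivity of the fiber monoid on fibers
  have trans : ∀ y y' : X, p y = p y' → ∃ δ, p δ = 1 ∧ μ (y, δ) = y' := by
    intro y y' hyy
    obtain ⟨K, hKcard, hKmem⟩ := fiber_card hp (1 : G)
    obtain ⟨Fy, hFcard, hFmem⟩ := fiber_card hp (p y)
    have hsub : K.image (fun δ => μ (y, δ)) ⊆ Fy := by
      intro x hx
      simp only [Finset.mem_image] at hx
      obtain ⟨δ, hδK, rfl⟩ := hx
      rw [hFmem, hμp (y, δ), (hKmem δ).mp hδK, mul_one]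
    have hinj : Set.InjOn (fun δ => μ (y, δ)) ↑K := by
      intro δ hδ δ' hδ' hmul
      exact pairRigid δ δ' ((hKmem δ).mp hδ) ((hKmem δ').mp hδ') ⟨y, hmul⟩
    have hcard : (K.image (fun δ => μ (y, δ))).card = Fy.card := by
      rw [Finset.card_image_of_injOn hinj, hKcard, hFcard]
    have heq : K.image (fun δ => μ (y, δ)) = Fy :=
      Finset.eq_of_subset_of_card_le hsub (le_of_eq hcard.symm)
    have hy'F : y' ∈ Fy := (hFmem y').mpr hyy.symm
    rw [← heq] at hy'F
    simp only [Finset.mem_image] at hy'F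
    obtain ⟨δ, hδK, hδ⟩ := hy'F
    exact ⟨δ, (hKmem δ).mp hδK, hδ⟩
  -- right inverses
  have right_inv : ∀ x : X, ∃ w, μ (x, w) = e' := by
    intro x
    obtain ⟨y₀, hy₀⟩ := hp.2.1 (p x)⁻¹
    have hz : p (μ (x, y₀)) = p e' := by rw [hμp (x, y₀), hy₀, mul_inv_cancel, he]
    obtain ⟨δ, hδ1, hδ2⟩ := trans (μ (x, y₀)) e' hz
    exact ⟨μ (y₀, δ), by rw [← assoc, hδ2]⟩
  set inv₀ : X → X := fun x => Classical.choose (right_inv x) with hinv₀def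
  have hinv₀ : ∀ x, μ (x, inv₀ x) = e' := fun x => Classical.choose_spec (right_inv x)
  have left_inv : ∀ a, μ (inv₀ a, a) = e' := by
    intro a
    have key : inv₀ (inv₀ a) = a := by
      calc inv₀ (inv₀ a) = μ (e', inv₀ (inv₀ a)) := (one_mul' _).symm
        _ = μ (μ (a, inv₀ a), inv₀ (inv₀ a)) := by rw [hinv₀ a]
        _ = μ (a, μ (inv₀ a, inv₀ (inv₀ a))) := assoc _ _ _
        _ = μ (a, e') := by rw [hinv₀ (inv₀ a)]
        _ = a := mul_one' a
    have h2 := hinv₀ (inv₀ a)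
    rwa [key] at h2
  -- compactness of X and continuity of inversion
  have : CompactSpace X := compactSpace hp
  let F : X × X ≃ X × X :=
    { toFun := fun a => (a.1, μ a)
      invFun := fun a => (a.1, μ (inv₀ a.1, a.2))
      left_inv := by
        rintro ⟨x, y⟩
        simp only
        rw [← assoc, left_inv, one_mul']
      right_inv := by
        rintro ⟨x, z⟩
        simp only
        rw [← assoc, hinv₀, one_mul'] }
  have hFc : Continuous F := continuous_fst.prodMk hμc
  let H : (X × X) ≃ₜ (X × X) := hFc.homeoOfEquivCompactToT2
  have hinvc : Continuous inv₀ := by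
    have hpt : ∀ x : X, inv₀ x = (H.symm (x, e')).2 := by
      intro x
      show inv₀ x = (F.symm (x, e')).2
      show inv₀ x = μ (inv₀ x, e')
      rw [mul_one']
    rw [show inv₀ = fun x => (H.symm (x, e')).2 from funext hpt]
    exact continuous_snd.comp (H.symm.continuous.comp
      (continuous_id.prodMk continuous_const))
  -- the group structure
  letI iG : Group X :=
    { mul := fun x y => μ (x, y)
      one := e'
      inv := inv₀
      mul_assoc := assoc
      one_mul := one_mul'
      mul_one := mul_one'
      inv_mul_cancel := left_inv }
  refine ⟨iG, rfl, ?_, fun x y => hμp (x, y)⟩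
  exact @IsTopologicalGroup.mk X _ iG ⟨hμc⟩ ⟨hinvc⟩
end

section
/- Let G be a compact connected abelian Hausdorff topological group with identity element e, let X be a connected Hausdorff topological space, and let p : X → G be a k-sheeted covering map for some positive integer k. Then for every point ẽ ∈ p⁻¹(e) there exists an abelian group structure on X with identity element ẽ such that X, with its given topology, is a topological group and p : X → G is a group homomorphism of abelian groups. -/
namespace CoverProofAux

open Set Classical

variable {X G : Type*} [TopologicalSpace X] [TopologicalSpace G]

/-- Normalized sheet data over an evenly covered neighborhood. -/
theorem sheets [Nonempty X] {k : ℕ} {p : X → G} (hp : IsCoveringOfDegree k p) (g : G) :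
    ∃ (W : Set G) (V : Fin k → Set X) (sec : Fin k → G → X),
      IsOpen W ∧ g ∈ W ∧ (∀ i, IsOpen (V i)) ∧ (⋃ i, V i) = p ⁻¹' W ∧
      (∀ i i', i ≠ i' → ∀ x, x ∈ V i → x ∈ V i' → False) ∧
      (∀ i, ContinuousOn (sec i) W) ∧
      (∀ i, ∀ h ∈ W, sec i h ∈ V i) ∧
      (∀ i, ∀ h ∈ W, p (sec i h) = h) ∧
      (∀ i, ∀ x ∈ V i, sec i (p x) = x) := by
  obtain ⟨W, hWo, hgW, V, hVo, hVd, hVu, hVe⟩ := hp.2.2 g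
  have hmemW : ∀ i, ∀ x ∈ V i, p x ∈ W := by
    intro i x hx
    have : x ∈ ⋃ i, V i := mem_iUnion.2 ⟨i, hx⟩
    rw [hVu] at this; exact this
  choose e he using hVe
  refine ⟨W, V, fun i g' => if h : g' ∈ W then ((((e i).symm ⟨g', h⟩) : V i) : X) else Classical.arbitrary X,
    hWo, hgW, hVo, hVu, ?_, ?_, ?_, ?_, ?_⟩
  · intro i i' hne x hx hx'
    exact (Set.disjoint_left.1 (hVd hne)) hx hx'
  · intro i
    rw [continuousOn_iff_continuous_restrict]
    have : (W.restrict fun g' => if h : g' ∈ W then ((((e i).symm ⟨g', h⟩) : V i) : X)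
        else Classical.arbitrary X) = fun w : W => ((((e i).symm w) : V i) : X) := by
      funext w
      exact dif_pos w.2
    refine (congrArg Continuous this).mpr ?_
    exact continuous_subtype_val.comp (e i).symm.continuous
  · intro i h hh
    simp only [dif_pos hh]
    exact ((e i).symm ⟨h, hh⟩).2
  · intro i h hh
    simp only [dif_pos hh]
    have := he i ((e i).symm ⟨h, hh⟩)
    rw [(e i).apply_symm_apply] at this
    exact this
  · intro i x hx
    have hpx : p x ∈ W := hmemW i x hx
    simp only [dif_pos hpx]
    have hx' : (⟨p x, hpx⟩ : W) = e i ⟨x, hx⟩ := by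
      apply Subtype.ext
      exact he i ⟨x, hx⟩
    rw [hx', (e i).symm_apply_apply]

/-- Unique lifting along the covering, over a preconnected domain. -/
theorem unique_lift [Nonempty X] {k : ℕ} {p : X → G} (hp : IsCoveringOfDegree k p)
    {Z : Type*} [TopologicalSpace Z] [PreconnectedSpace Z]
    {f g : Z → X} (hf : Continuous f) (hg : Continuous g) (hfg : ∀ z, p (f z) = p (g z))
    {z₀ : Z} (h0 : f z₀ = g z₀) : ∀ z, f z = g z := by
  have hcl : IsClopen {z | f z = g z} := by
    constructor
    · rw [← isOpen_compl_iff]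
      rw [isOpen_iff_forall_mem_open]
      intro z hz
      obtain ⟨W, V, sec, hWo, hgW, hVo, hVu, hdisj, -, -, -, hsecInv⟩ := sheets hp (p (f z))
      have hfz : f z ∈ ⋃ i, V i := by rw [hVu]; exact hgW
      have hgz : g z ∈ ⋃ i, V i := by rw [hVu, mem_preimage, ← hfg z]; exact hgW
      obtain ⟨i, hi⟩ := mem_iUnion.1 hfz
      obtain ⟨j, hj⟩ := mem_iUnion.1 hgz
      have hij : i ≠ j := by
        rintro rfl
        apply hz
        have h1 := hsecInv i (f z) hi
        have h2 := hsecInv i (g z) hj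
        show f z = g z
        rw [← h1, ← h2, hfg z]
      refine ⟨f ⁻¹' (V i) ∩ g ⁻¹' (V j), ?_, (hVo i).preimage hf |>.inter ((hVo j).preimage hg),
        ⟨hi, hj⟩⟩
      rintro w ⟨hwi, hwj⟩
      intro hw
      have : f w ∈ V j := by rw [hw]; exact hwj
      exact hdisj i j hij (f w) hwi this
    · rw [isOpen_iff_forall_mem_open]
      intro z hz
      obtain ⟨W, V, sec, hWo, hgW, hVo, hVu, hdisj, -, -, -, hsecInv⟩ := sheets hp (p (f z))
      have hfz : f z ∈ ⋃ i, V i := by rw [hVu]; exact hgW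
      obtain ⟨i, hi⟩ := mem_iUnion.1 hfz
      refine ⟨f ⁻¹' (V i) ∩ g ⁻¹' (V i), ?_, (hVo i).preimage hf |>.inter ((hVo i).preimage hg),
        ⟨hi, by rw [mem_preimage, ← hz]; exact hi⟩⟩
      rintro w ⟨hwi, hwj⟩
      have h1 := hsecInv i (f w) hwi
      have h2 := hsecInv i (g w) hwj
      show f w = g w
      rw [← h1, ← h2, hfg w]
  intro z
  have : {z | f z = g z} = univ := hcl.eq_univ ⟨z₀, h0⟩
  exact (this ▸ (mem_univ z) : z ∈ {z | f z = g z})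


/-- The total space of a finite covering of a compact base is compact. -/
theorem compactX [Nonempty X] [CompactSpace G] {k : ℕ} {p : X → G}
    (hp : IsCoveringOfDegree k p) : CompactSpace X := by
  constructor
  apply isCompact_of_finite_subcover
  intro ι U hUo hcov
  -- for each g, build a small open set W' g whose preimage is inside finitely many U's
  have key : ∀ g : G, ∃ (W' : Set G) (a : Fin k → ι), IsOpen W' ∧ g ∈ W' ∧
      p ⁻¹' W' ⊆ ⋃ i : Fin k, U (a i) := by
    intro g
    obtain ⟨W, V, sec, hWo, hgW, hVo, hVu, hdisj, hsecCont, hsecMem, hsecP, hsecInv⟩ := sheets hp g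
    have hfib : ∀ i : Fin k, ∃ a : ι, sec i g ∈ U a := by
      intro i
      have := hcov (mem_univ (sec i g))
      exact mem_iUnion.1 this
    choose a ha using hfib
    refine ⟨W ∩ ⋂ i : Fin k, {g' ∈ W | sec i g' ∈ U (a i)}, a, ?_, ?_, ?_⟩
    · apply hWo.inter
      apply isOpen_iInter_of_finite
      intro i
      exact (hsecCont i).isOpen_inter_preimage hWo (hUo (a i))
    · exact ⟨hgW, mem_iInter.2 fun i => ⟨hgW, ha i⟩⟩
    · intro x hx
      have hxW : p x ∈ W := hx.1
      have hxV : x ∈ ⋃ i, V i := by rw [hVu]; exact hxW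
      obtain ⟨i, hi⟩ := mem_iUnion.1 hxV
      have hsec := hsecInv i x hi
      have := (mem_iInter.1 hx.2 i).2
      rw [hsec] at this
      exact mem_iUnion.2 ⟨i, this⟩
  choose W' a hW'o hgW' hsub using key
  obtain ⟨t, ht⟩ := isCompact_univ.elim_finite_subcover W' hW'o
    (fun g _ => mem_iUnion.2 ⟨g, hgW' g⟩)
  refine ⟨t.biUnion fun g => Finset.image (a g) Finset.univ, ?_⟩
  intro x _
  have : p x ∈ ⋃ g ∈ t, W' g := ht (mem_univ (p x))
  obtain ⟨g, hg, hpg⟩ := mem_iUnion₂.1 this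
  have := hsub g hpg
  obtain ⟨i, hi⟩ := mem_iUnion.1 this
  refine mem_iUnion₂.2 ⟨a g i, ?_, hi⟩
  exact Finset.mem_biUnion.2 ⟨g, hg, Finset.mem_image.2 ⟨i, Finset.mem_univ i, rfl⟩⟩

/-- A covering map is open. -/
theorem pOpen [Nonempty X] {k : ℕ} {p : X → G} (hp : IsCoveringOfDegree k p) :
    IsOpenMap p := by
  intro O hO
  rw [isOpen_iff_forall_mem_open]
  rintro g ⟨x, hxO, rfl⟩
  obtain ⟨W, V, sec, hWo, hgW, hVo, hVu, hdisj, hsecCont, hsecMem, hsecP, hsecInv⟩ :=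
    sheets hp (p x)
  have hxV : x ∈ ⋃ i, V i := by rw [hVu]; exact hgW
  obtain ⟨i, hi⟩ := mem_iUnion.1 hxV
  refine ⟨{g' ∈ W | sec i g' ∈ O}, ?_, (hsecCont i).isOpen_inter_preimage hWo hO, ?_⟩
  · rintro g' ⟨hg'W, hg'O⟩
    exact ⟨sec i g', hg'O, hsecP i g' hg'W⟩
  · exact ⟨hgW, by rw [hsecInv i x hi]; exact hxO⟩

/-- Gluing continuity over a finite relatively closed cover of an open set. -/
theorem glue_continuousOn {α β : Type*} [TopologicalSpace α] [TopologicalSpace β]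
    {ι : Type*} [Fintype ι] {D : ι → Set α} (hD : ∀ i, IsClosed (D i))
    {s : Set α} (hcov : ∀ x ∈ s, ∃ i, x ∈ D i)
    {f : α → β} (hf : ∀ i, ContinuousOn f (D i ∩ s)) : ContinuousOn f s := by
  intro x hx
  have hall : ∀ i : ι, ContinuousWithinAt f (D i ∩ s) x := by
    intro i
    by_cases h : x ∈ D i
    · exact hf i x ⟨h, hx⟩
    · apply continuousWithinAt_of_notMem_closure
      intro hcl
      exact h ((hD i).closure_subset ((closure_mono inter_subset_left) hcl))
  have hfin : ∀ fs : Finset ι, ContinuousWithinAt f (⋃ i ∈ fs, (D i ∩ s)) x := by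
    intro fs
    induction fs using Finset.induction with
    | empty =>
        simp only [Finset.notMem_empty, Set.iUnion_of_empty, Set.iUnion_empty]
        unfold ContinuousWithinAt
        rw [nhdsWithin_empty]
        exact Filter.tendsto_bot
    | insert j fs' hni ih =>
        rw [Finset.set_biUnion_insert]
        exact (hall j).union ih
  have := hfin Finset.univ
  apply this.mono
  intro y hy
  obtain ⟨i, hi⟩ := hcov y hy
  exact mem_iUnion₂.2 ⟨i, Finset.mem_univ i, ⟨hi, hy⟩⟩


section MulPart
variable [Mul G]

/-- An atlas of trivializations along a compact slice, with transition data constant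
near `y₀`. -/
structure CovAtlas (k : ℕ) (p : X → G) (y₀ : X) where
  t : Finset X
  Cc : X → Set X
  W : X → Set G
  V : X → Fin k → Set X
  sec : X → Fin k → G → X
  N : Set X
  closedC : ∀ j ∈ t, IsClosed (Cc j)
  coverC : ∀ x : X, ∃ j ∈ t, x ∈ Cc j
  openN : IsOpen N
  memN : y₀ ∈ N
  memW : ∀ j ∈ t, ∀ x ∈ Cc j, ∀ y ∈ N, p x * p y ∈ W j
  openV : ∀ j ∈ t, ∀ i, IsOpen (V j i)
  unionV : ∀ j ∈ t, (⋃ i, V j i) = p ⁻¹' (W j)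
  disjV : ∀ j ∈ t, ∀ i i', i ≠ i' → ∀ x, x ∈ V j i → x ∈ V j i' → False
  contSec : ∀ j ∈ t, ∀ i, ContinuousOn (sec j i) (W j)
  secMem : ∀ j ∈ t, ∀ i, ∀ g ∈ W j, sec j i g ∈ V j i
  secP : ∀ j ∈ t, ∀ i, ∀ g ∈ W j, p (sec j i g) = g
  secInv : ∀ j ∈ t, ∀ i, ∀ x, x ∈ V j i → sec j i (p x) = x
  const : ∀ j ∈ t, ∀ l ∈ t, ∀ i : Fin k, ∀ x : X, x ∈ Cc j → x ∈ Cc l → ∀ y ∈ N, ∀ i',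
      (sec j i (p x * p y) ∈ V l i' ↔ sec j i (p x * p y₀) ∈ V l i')

theorem atlas_exists [ContinuousMul G] [Nonempty X] [CompactSpace X] [T2Space X]
    {k : ℕ} {p : X → G} (hp : IsCoveringOfDegree k p) (y₀ : X) :
    Nonempty (CovAtlas k p y₀) := by
  have hpc : Continuous p := hp.1
  have hm : Continuous fun z : X × X => p z.1 * p z.2 :=
    (hpc.comp continuous_fst).mul (hpc.comp continuous_snd)
  choose Wf Vf secf hWo hgW hVo hVu hdisj hsecCont hsecMem hsecP hsecInv using
    fun x : X => sheets hp (p x * p y₀)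
  have hnb : ∀ x : X, ∃ U Nx : Set X, IsOpen U ∧ IsOpen Nx ∧ x ∈ U ∧ y₀ ∈ Nx ∧
      ∀ x' ∈ U, ∀ y ∈ Nx, p x' * p y ∈ Wf x := by
    intro x
    have ho : IsOpen ((fun z : X × X => p z.1 * p z.2) ⁻¹' Wf x) := (hWo x).preimage hm
    obtain ⟨u, v, hu, hv, hxu, hyv, hsub⟩ := isOpen_prod_iff.1 ho x y₀ (hgW x)
    exact ⟨u, v, hu, hv, hxu, hyv, fun x' hx' y hy => hsub (Set.mk_mem_prod hx' hy)⟩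
  choose Uf Nf hUo hNo hxU hyN hUN using hnb
  obtain ⟨t, ht⟩ := isCompact_univ.elim_finite_subcover Uf hUo
    (fun x _ => mem_iUnion.2 ⟨x, hxU x⟩)
  have us : (univ : Set X) ⊆ ⋃ i : {j // j ∈ t}, Uf ↑i := by
    intro x hx
    obtain ⟨j, hj, hxj⟩ := mem_iUnion₂.1 (ht hx)
    exact mem_iUnion.2 ⟨⟨j, hj⟩, hxj⟩
  obtain ⟨v, hvcov, hvcl, hvsub⟩ := exists_subset_iUnion_closed_subset isClosed_univ
    (fun i : {j // j ∈ t} => hUo ↑i) (fun x _ => Set.toFinite _) us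
  classical
  set Cc : X → Set X := fun j => if h : j ∈ t then v ⟨j, h⟩ else ∅ with hCc
  have hCcU : ∀ j ∈ t, Cc j ⊆ Uf j := by
    intro j hj
    simp only [hCc, dif_pos hj]
    exact hvsub ⟨j, hj⟩
  have hCcCl : ∀ j ∈ t, IsClosed (Cc j) := by
    intro j hj
    simp only [hCc, dif_pos hj]
    exact hvcl ⟨j, hj⟩
  have hCov : ∀ x : X, ∃ j ∈ t, x ∈ Cc j := by
    intro x
    obtain ⟨i, hi⟩ := mem_iUnion.1 (hvcov (mem_univ x))
    refine ⟨↑i, i.2, ?_⟩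
    simp only [hCc, dif_pos i.2]
    have : (⟨↑i, i.2⟩ : {j // j ∈ t}) = i := Subtype.ext rfl
    rw [this]
    exact hi
  -- tube lemma: transitions constant near y₀
  have tube : ∀ j l : {j // j ∈ t}, ∀ i : Fin k, ∃ Nt : Set X, IsOpen Nt ∧ y₀ ∈ Nt ∧
      ∀ x : X, x ∈ Cc ↑j → x ∈ Cc ↑l → ∀ y ∈ Nt, ∀ i',
        (secf ↑j i (p x * p y) ∈ Vf ↑l i' ↔ secf ↑j i (p x * p y₀) ∈ Vf ↑l i') := by
    rintro ⟨j, hj⟩ ⟨l, hl⟩ i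
    set K : Set X := Cc j ∩ Cc l with hK
    have hKcl : IsClosed K := (hCcCl j hj).inter (hCcCl l hl)
    have hKc : IsCompact K := hKcl.isCompact
    set F : X × X → X := fun z => secf j i (p z.1 * p z.2) with hF
    set F₀ : X → X := fun x => secf j i (p x * p y₀) with hF₀
    have hFc : ContinuousOn F ((Uf j ∩ Uf l) ×ˢ Nf j) := by
      apply (hsecCont j i).comp (hm.continuousOn)
      rintro ⟨x, y⟩ ⟨⟨hxj, _⟩, hy⟩
      exact hUN j x hxj y hy
    have hF₀c : ContinuousOn F₀ (Uf j ∩ Uf l) := by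
      apply (hsecCont j i).comp ((hpc.mul continuous_const).continuousOn)
      intro x hx
      exact hUN j x hx.1 y₀ (hyN j)
    set Ω : Set (X × X) := ⋃ i' : Fin k,
      ((((Uf j ∩ Uf l) ∩ F₀ ⁻¹' (Vf l i')) ×ˢ (univ : Set X)) ∩
        (((Uf j ∩ Uf l) ×ˢ Nf j) ∩ F ⁻¹' (Vf l i'))) with hΩ
    have hΩo : IsOpen Ω := by
      apply isOpen_iUnion
      intro i'
      apply IsOpen.inter
      · exact (hF₀c.isOpen_inter_preimage ((hUo j).inter (hUo l)) (hVo l i')).prod isOpen_univ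
      · exact hFc.isOpen_inter_preimage (((hUo j).inter (hUo l)).prod (hNo j)) (hVo l i')
    have hKΩ : K ×ˢ ({y₀} : Set X) ⊆ Ω := by
      rintro ⟨x, y⟩ ⟨hxK, hy⟩
      rw [show y = y₀ from hy]
      have hxUU : x ∈ Uf j ∩ Uf l := ⟨hCcU j hj hxK.1, hCcU l hl hxK.2⟩
      have hmem : F₀ x ∈ p ⁻¹' (Wf l) := by
        have h1 : p (F₀ x) = p x * p y₀ := hsecP j i _ (hUN j x hxUU.1 y₀ (hyN j))
        have h2 : p x * p y₀ ∈ Wf l := hUN l x hxUU.2 y₀ (hyN l)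
        simpa [h1] using h2
      rw [← hVu l] at hmem
      obtain ⟨i', hi'⟩ := mem_iUnion.1 hmem
      apply mem_iUnion.2 ⟨i', ?_⟩
      exact ⟨⟨⟨hxUU, hi'⟩, mem_univ _⟩, ⟨⟨hxUU, hyN j⟩, hi'⟩⟩
    obtain ⟨u', n', hu'o, hn'o, hKu', hyn', hsub'⟩ :=
      generalized_tube_lemma hKc isCompact_singleton hΩo hKΩ
    refine ⟨n', hn'o, hyn' rfl, ?_⟩
    intro x hxj hxl y hy i''
    have hxy : (x, y) ∈ Ω := hsub' ⟨hKu' ⟨hxj, hxl⟩, hy⟩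
    obtain ⟨i', hi'⟩ := mem_iUnion.1 hxy
    obtain ⟨⟨⟨-, h0⟩, -⟩, ⟨-, hF'⟩⟩ := hi'
    constructor
    · intro h
      by_cases hii : i'' = i'
      · rw [hii]; exact h0
      · exact (hdisj l i'' i' hii _ h hF').elim
    · intro h
      by_cases hii : i'' = i'
      · rw [hii]; exact hF'
      · exact (hdisj l i'' i' hii _ h h0).elim
  choose NT hNTo hNTy hNTp using tube
  set N : Set X := (⋂ j : {j // j ∈ t}, Nf ↑j) ∩
      ⋂ j : {j // j ∈ t}, ⋂ l : {j // j ∈ t}, ⋂ i : Fin k, NT j l i with hN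
  have hNo' : IsOpen N := by
    apply IsOpen.inter
    · exact isOpen_iInter_of_finite fun j => hNo ↑j
    · exact isOpen_iInter_of_finite fun j => isOpen_iInter_of_finite fun l =>
        isOpen_iInter_of_finite fun i => hNTo j l i
  have hNy : y₀ ∈ N := by
    constructor
    · exact mem_iInter.2 fun j => hyN ↑j
    · exact mem_iInter.2 fun j => mem_iInter.2 fun l => mem_iInter.2 fun i => hNTy j l i
  have hNsub : ∀ j ∈ t, N ⊆ Nf j := by
    intro j hj x hx
    exact mem_iInter.1 hx.1 ⟨j, hj⟩
  refine ⟨⟨t, Cc, Wf, Vf, secf, N, hCcCl, hCov, hNo', hNy, ?_, ?_, ?_, ?_, ?_, ?_, ?_, ?_, ?_⟩⟩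
  · intro j hj x hx y hy
    exact hUN j x (hCcU j hj hx) y (hNsub j hj hy)
  · intro j _ i; exact hVo j i
  · intro j _; exact hVu j
  · intro j _ i i' h x hx hx'; exact hdisj j i i' h x hx hx'
  · intro j _ i; exact hsecCont j i
  · intro j _ i g hg; exact hsecMem j i g hg
  · intro j _ i g hg; exact hsecP j i g hg
  · intro j _ i x hx; exact hsecInv j i x hx
  · intro j hj l hl i x hxj hxl y hy i'
    have hyNT : y ∈ NT ⟨j, hj⟩ ⟨l, hl⟩ i :=
      mem_iInter.1 (mem_iInter.1 (mem_iInter.1 hy.2 ⟨j, hj⟩) ⟨l, hl⟩) i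
    exact hNTp ⟨j, hj⟩ ⟨l, hl⟩ i x hxj hxl y hyNT i'


theorem CovAtlas.secInj {k : ℕ} {p : X → G} {y₀ : X} (A : CovAtlas k p y₀) :
    ∀ j ∈ A.t, ∀ i : Fin k, ∀ a b, a ∈ A.V j i → b ∈ A.V j i → p a = p b → a = b := by
  intro j hj i a b ha hb hab
  rw [← A.secInv j hj i a ha, ← A.secInv j hj i b hb, hab]

theorem transport [ContinuousMul G] {k : ℕ} {p : X → G} (hpc : Continuous p) {y₀ : X}
    (A : CovAtlas k p y₀) {y' y'' : X} (hy' : y' ∈ A.N) (hy'' : y'' ∈ A.N)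
    {f : X → X} (hf : Continuous f) (hpf : ∀ x, p (f x) = p x * p y') :
    ∃ f' : X → X, Continuous f' ∧ (∀ x, p (f' x) = p x * p y'') ∧
      (∀ j ∈ A.t, ∀ i : Fin k, ∀ x, x ∈ A.Cc j → f x ∈ A.V j i → f' x ∈ A.V j i) ∧
      ∀ j ∈ A.t, ∀ i : Fin k, ∀ x, x ∈ A.Cc j → f x ∈ A.V j i →
        f' x = A.sec j i (p x * p y'') := by
  classical
  choose jf hjt hjC using A.coverC
  have hfV : ∀ x : X, ∃ i, f x ∈ A.V (jf x) i := by
    intro x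
    have hW : p (f x) ∈ A.W (jf x) := by
      rw [hpf]; exact A.memW _ (hjt x) x (hjC x) y' hy'
    have : f x ∈ ⋃ i, A.V (jf x) i := by rw [A.unionV _ (hjt x)]; exact hW
    exact mem_iUnion.1 this
  choose ifn hifn using hfV
  set f' : X → X := fun x => A.sec (jf x) (ifn x) (p x * p y'') with hf'
  have claim : ∀ j ∈ A.t, ∀ l ∈ A.t, ∀ i i' : Fin k, ∀ x, x ∈ A.Cc j → x ∈ A.Cc l →
      f x ∈ A.V j i → f x ∈ A.V l i' →
      A.sec j i (p x * p y'') ∈ A.V l i' ∧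
        A.sec j i (p x * p y'') = A.sec l i' (p x * p y'') := by
    intro j hj l hl i i' x hxj hxl hfj hfl
    have hstep1 : A.sec j i (p x * p y') = f x := by
      have := A.secInv j hj i (f x) hfj
      rw [hpf] at this; exact this
    have h2 : A.sec j i (p x * p y') ∈ A.V l i' := by rw [hstep1]; exact hfl
    have h3 : A.sec j i (p x * p y₀) ∈ A.V l i' :=
      (A.const j hj l hl i x hxj hxl y' hy' i').1 h2
    have h4 : A.sec j i (p x * p y'') ∈ A.V l i' :=
      (A.const j hj l hl i x hxj hxl y'' hy'' i').2 h3
    refine ⟨h4, ?_⟩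
    apply A.secInj l hl i' _ _ h4 (A.secMem l hl i' _ (A.memW l hl x hxl y'' hy''))
    rw [A.secP j hj i _ (A.memW j hj x hxj y'' hy''),
      A.secP l hl i' _ (A.memW l hl x hxl y'' hy'')]
  have key : ∀ j ∈ A.t, ∀ i : Fin k, ∀ x, x ∈ A.Cc j → f x ∈ A.V j i →
      f' x = A.sec j i (p x * p y'') ∧ f' x ∈ A.V j i := by
    intro j hj i x hxj hfVj
    have h := claim (jf x) (hjt x) j hj (ifn x) i x (hjC x) hxj (hifn x) hfVj
    exact ⟨h.2, h.1⟩
  have hp' : ∀ x, p (f' x) = p x * p y'' := by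
    intro x
    exact A.secP _ (hjt x) _ _ (A.memW _ (hjt x) x (hjC x) y'' hy'')
  have hpres : ∀ j ∈ A.t, ∀ i : Fin k, ∀ x, x ∈ A.Cc j → f x ∈ A.V j i → f' x ∈ A.V j i :=
    fun j hj i x hxj hfVj => (key j hj i x hxj hfVj).2
  refine ⟨f', ?_, hp', hpres, fun j hj i x hxj hfVj => (key j hj i x hxj hfVj).1⟩
  -- continuity by gluing over closed pieces
  rw [← continuousOn_univ]
  set D : {j // j ∈ A.t} × Fin k → Set X :=
    fun q => {x | x ∈ A.Cc ↑q.1 ∧ f x ∈ A.V ↑q.1 q.2} with hD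
  apply glue_continuousOn (D := D)
  · rintro ⟨⟨j, hj⟩, i⟩
    have hDeq : D (⟨j, hj⟩, i) = A.Cc j ∩ (f ⁻¹' (⋃ i' ∈ {i' : Fin k | i' ≠ i}, A.V j i'))ᶜ := by
      ext x
      constructor
      · rintro ⟨hxC, hxV⟩
        refine ⟨hxC, ?_⟩
        intro hmem
        obtain ⟨i', hi', hV⟩ := mem_iUnion₂.1 hmem
        exact A.disjV j hj i' i hi' (f x) hV hxV
      · rintro ⟨hxC, hxV⟩
        refine ⟨hxC, ?_⟩
        have hW : p (f x) ∈ A.W j := by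
          rw [hpf]; exact A.memW j hj x hxC y' hy'
        have : f x ∈ ⋃ i', A.V j i' := by rw [A.unionV j hj]; exact hW
        obtain ⟨i₂, hi₂⟩ := mem_iUnion.1 this
        by_cases hii : i₂ = i
        · rw [← hii]; exact hi₂
        · exact absurd (mem_iUnion₂.2 ⟨i₂, hii, hi₂⟩) hxV
    rw [hDeq]
    apply (A.closedC j hj).inter
    exact ((isOpen_biUnion fun i' _ => A.openV j hj i').preimage hf).isClosed_compl
  · intro x _
    exact ⟨(⟨jf x, hjt x⟩, ifn x), hjC x, hifn x⟩
  · rintro ⟨⟨j, hj⟩, i⟩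
    apply ContinuousOn.congr (f := fun x => A.sec j i (p x * p y''))
    · apply (A.contSec j hj i).comp ((hpc.mul continuous_const).continuousOn)
      rintro x ⟨⟨hxC, -⟩, -⟩
      exact A.memW j hj x hxC y'' hy''
    · rintro x ⟨⟨hxC, hxV⟩, -⟩
      exact (key j hj i x hxC hxV).1

end MulPart

section MonPart
variable [Monoid G] [ContinuousMul G] [Nonempty X] [CompactSpace X] [T2Space X]
  [ConnectedSpace X]

theorem lift_exists {k : ℕ} {p : X → G} (hp : IsCoveringOfDegree k p)
    (e' : X) (he : p e' = 1) (y : X) :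
    ∃ f : X → X, Continuous f ∧ (∀ x, p (f x) = p x * p y) ∧ f e' = y := by
  have hpc := hp.1
  set S : Set X := {y | ∃ f : X → X, Continuous f ∧ (∀ x, p (f x) = p x * p y) ∧ f e' = y}
    with hS
  have hmem : ∀ y₀ : X, ∀ A : CovAtlas k p y₀, ∃ j₀ ∈ A.t, ∃ i₀ : Fin k,
      e' ∈ A.Cc j₀ ∧ y₀ ∈ A.V j₀ i₀ := by
    intro y₀ A
    obtain ⟨j₀, hj₀, hej₀⟩ := A.coverC e'
    have hW : p y₀ ∈ A.W j₀ := by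
      have := A.memW j₀ hj₀ e' hej₀ y₀ A.memN
      rwa [he, one_mul] at this
    have : y₀ ∈ ⋃ i, A.V j₀ i := by rw [A.unionV j₀ hj₀]; exact hW
    obtain ⟨i₀, hi₀⟩ := mem_iUnion.1 this
    exact ⟨j₀, hj₀, i₀, hej₀, hi₀⟩
  have hclopen : IsClopen S := by
    constructor
    · rw [← closure_subset_iff_isClosed]
      intro y₀ hy₀
      obtain ⟨A⟩ := atlas_exists hp y₀
      obtain ⟨j₀, hj₀, i₀, hej₀, hi₀⟩ := hmem y₀ A
      have hopen : IsOpen (A.N ∩ A.V j₀ i₀) := A.openN.inter (A.openV j₀ hj₀ i₀)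
      obtain ⟨y', hy'mem, hy'S⟩ := mem_closure_iff.1 hy₀ _ hopen ⟨A.memN, hi₀⟩
      obtain ⟨f, hfc, hpf, hfe⟩ := hy'S
      obtain ⟨f', hf'c, hpf', hpres, -⟩ := transport hpc A hy'mem.1 A.memN hfc hpf
      refine ⟨f', hf'c, hpf', ?_⟩
      have h1 : f e' ∈ A.V j₀ i₀ := by rw [hfe]; exact hy'mem.2
      have h2 : f' e' ∈ A.V j₀ i₀ := hpres j₀ hj₀ i₀ e' hej₀ h1
      apply A.secInj j₀ hj₀ i₀ _ _ h2 hi₀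
      rw [hpf' e', he, one_mul]
    · rw [isOpen_iff_forall_mem_open]
      intro y' hy'S
      obtain ⟨f, hfc, hpf, hfe⟩ := hy'S
      obtain ⟨A⟩ := atlas_exists hp y'
      obtain ⟨j₀, hj₀, i₀, hej₀, hi₀⟩ := hmem y' A
      refine ⟨A.N ∩ A.V j₀ i₀, ?_, A.openN.inter (A.openV j₀ hj₀ i₀), ⟨A.memN, hi₀⟩⟩
      rintro y'' ⟨hy''N, hy''V⟩
      obtain ⟨f', hf'c, hpf', hpres, -⟩ := transport hpc A A.memN hy''N hfc hpf
      refine ⟨f', hf'c, hpf', ?_⟩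
      have h1 : f e' ∈ A.V j₀ i₀ := by rw [hfe]; exact hi₀
      have h2 : f' e' ∈ A.V j₀ i₀ := hpres j₀ hj₀ i₀ e' hej₀ h1
      apply A.secInj j₀ hj₀ i₀ _ _ h2 hy''V
      rw [hpf' e', he, one_mul]
  have huniv : S = univ :=
    hclopen.eq_univ ⟨e', ⟨id, continuous_id, fun x => by simp [he], rfl⟩⟩
  exact (huniv ▸ mem_univ y : y ∈ S)

theorem mul_lift {k : ℕ} {p : X → G} (hp : IsCoveringOfDegree k p)
    (e' : X) (he : p e' = 1) :
    ∃ μ : X × X → X, Continuous μ ∧ (∀ z : X × X, p (μ z) = p z.1 * p z.2) ∧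
      (∀ y, μ (e', y) = y) ∧ ∀ x, μ (x, e') = x := by
  classical
  have hpc := hp.1
  choose F hFc hFp hFe using lift_exists hp e' he
  refine ⟨fun z => F z.2 z.1, ?_, fun z => hFp z.2 z.1, fun y => hFe y, ?_⟩
  · -- continuity
    rw [continuous_iff_continuousAt]
    rintro ⟨x₀, y₀⟩
    obtain ⟨A⟩ := atlas_exists hp y₀
    set f : X → X := F y₀ with hfdef
    obtain ⟨j₀, hj₀, hej₀⟩ := A.coverC e'
    have hWy₀ : p y₀ ∈ A.W j₀ := by
      have := A.memW j₀ hj₀ e' hej₀ y₀ A.memN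
      rwa [he, one_mul] at this
    have : y₀ ∈ ⋃ i, A.V j₀ i := by rw [A.unionV j₀ hj₀]; exact hWy₀
    obtain ⟨i₀, hi₀⟩ := mem_iUnion.1 this
    set B : Set X := A.N ∩ A.V j₀ i₀ with hB
    have hBopen : IsOpen B := A.openN.inter (A.openV j₀ hj₀ i₀)
    have hy₀B : y₀ ∈ B := ⟨A.memN, hi₀⟩
    have claim : ∀ y'' ∈ B, ∀ j ∈ A.t, ∀ i : Fin k, ∀ x, x ∈ A.Cc j → f x ∈ A.V j i →
        F y'' x = A.sec j i (p x * p y'') := by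
      rintro y'' ⟨hy''N, hy''V⟩ j hj i x hxj hfV
      obtain ⟨f', hf'c, hpf', hpres, hform⟩ :=
        transport hpc A A.memN hy''N (hFc y₀) (hFp y₀)
      have hfey : f e' ∈ A.V j₀ i₀ := by rw [hfdef, hFe y₀]; exact hi₀
      have hf'e : f' e' = y'' := by
        apply A.secInj j₀ hj₀ i₀ _ _ (hpres j₀ hj₀ i₀ e' hej₀ hfey) hy''V
        rw [hpf' e', he, one_mul]
      have huniq : ∀ x', F y'' x' = f' x' := by
        apply unique_lift hp (hFc y'') hf'c
        · intro x'
          rw [hFp y'' x', hpf' x']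
        · rw [hFe y'', hf'e]
      rw [huniq x]
      exact hform j hj i x hxj hfV
    have hcov : ∀ x : X, ∃ q : {j // j ∈ A.t} × Fin k,
        x ∈ A.Cc ↑q.1 ∧ f x ∈ A.V ↑q.1 q.2 := by
      intro x
      obtain ⟨j, hj, hxj⟩ := A.coverC x
      have hW : p (f x) ∈ A.W j := by
        rw [hFp y₀ x]; exact A.memW j hj x hxj y₀ A.memN
      have : f x ∈ ⋃ i, A.V j i := by rw [A.unionV j hj]; exact hW
      obtain ⟨i, hi⟩ := mem_iUnion.1 this
      exact ⟨(⟨j, hj⟩, i), hxj, hi⟩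
    have hcont : ContinuousOn (fun z : X × X => F z.2 z.1) (univ ×ˢ B) := by
      set D : {j // j ∈ A.t} × Fin k → Set (X × X) :=
        fun q => {x | x ∈ A.Cc ↑q.1 ∧ f x ∈ A.V ↑q.1 q.2} ×ˢ (univ : Set X) with hD
      apply glue_continuousOn (D := D)
      · rintro ⟨⟨j, hj⟩, i⟩
        apply IsClosed.prod ?_ isClosed_univ
        have hDeq : {x | x ∈ A.Cc j ∧ f x ∈ A.V j i} =
            A.Cc j ∩ (f ⁻¹' (⋃ i' ∈ {i' : Fin k | i' ≠ i}, A.V j i'))ᶜ := by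
          ext x
          constructor
          · rintro ⟨hxC, hxV⟩
            refine ⟨hxC, ?_⟩
            intro hmem2
            obtain ⟨i', hi', hV⟩ := mem_iUnion₂.1 hmem2
            exact A.disjV j hj i' i hi' (f x) hV hxV
          · rintro ⟨hxC, hxV⟩
            refine ⟨hxC, ?_⟩
            have hW : p (f x) ∈ A.W j := by
              rw [hFp y₀ x]; exact A.memW j hj x hxC y₀ A.memN
            have : f x ∈ ⋃ i', A.V j i' := by rw [A.unionV j hj]; exact hW
            obtain ⟨i₂, hi₂⟩ := mem_iUnion.1 this
            by_cases hii : i₂ = i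
            · rw [← hii]; exact hi₂
            · exact absurd (mem_iUnion₂.2 ⟨i₂, hii, hi₂⟩) hxV
        rw [hDeq]
        exact (A.closedC j hj).inter
          ((isOpen_biUnion fun i' _ => A.openV j hj i').preimage (hFc y₀)).isClosed_compl
      · rintro ⟨x, y⟩ ⟨-, hyB⟩
        obtain ⟨q, hq1, hq2⟩ := hcov x
        exact ⟨q, ⟨hq1, hq2⟩, mem_univ y⟩
      · rintro ⟨⟨j, hj⟩, i⟩
        apply ContinuousOn.congr (f := fun z : X × X => A.sec j i (p z.1 * p z.2))
        · apply (A.contSec j hj i).comp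
            (((hpc.comp continuous_fst).mul (hpc.comp continuous_snd)).continuousOn)
          rintro ⟨x, y⟩ ⟨⟨⟨hxC, -⟩, -⟩, ⟨-, hyB⟩⟩
          exact A.memW j hj x hxC y hyB.1
        · rintro ⟨x, y⟩ ⟨⟨⟨hxC, hxV⟩, -⟩, ⟨-, hyB⟩⟩
          exact claim y hyB j hj i x hxC hxV
    exact hcont.continuousAt ((isOpen_univ.prod hBopen).mem_nhds ⟨mem_univ x₀, hy₀B⟩)
  · -- right unit
    intro x
    apply unique_lift hp (hFc e') continuous_id (f := F e') (g := id) ?_ (hFe e')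
    intro x'
    rw [hFp e' x', he, mul_one]
    rfl

end MonPart

end CoverProofAux



open Set in
/-- Abelian covering group theorem: a finite-sheeted covering of a compact connected
abelian Hausdorff topological group from a connected Hausdorff space carries an abelian
topological group structure making the covering map a homomorphism. -/
theorem covering_group_theorem_abelian
    {X G : Type*} [TopologicalSpace G] [CommGroup G] [IsTopologicalGroup G]
    [CompactSpace G] [ConnectedSpace G] [T2Space G]
    [TopologicalSpace X] [ConnectedSpace X] [T2Space X]
    (k : ℕ) (hk : 0 < k) (p : X → G) (hp : IsCoveringOfDegree k p)
    (e' : X) (he : p e' = 1) :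
    ∃ gr : CommGroup X, gr.one = e' ∧ (@IsTopologicalGroup X _ gr.toGroup) ∧
      ∀ x y : X, p (gr.mul x y) = p x * p y := by
  classical
  have hpc : Continuous p := hp.1
  haveI : CompactSpace X := CoverProofAux.compactX hp
  obtain ⟨μ, hμc, hμp, hμl, hμr⟩ := CoverProofAux.mul_lift hp e' he
  have hcomm : ∀ x y : X, μ (x, y) = μ (y, x) := by
    have huniq := CoverProofAux.unique_lift hp (Z := X × X)
      (f := fun z : X × X => μ z) (g := fun z : X × X => μ (z.2, z.1))
      hμc (hμc.comp (continuous_snd.prodMk continuous_fst))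
      (fun z => by rw [hμp z, hμp (z.2, z.1)]; exact mul_comm _ _) (z₀ := (e', e')) rfl
    intro x y
    exact huniq (x, y)
  have hassoc : ∀ x y z : X, μ (μ (x, y), z) = μ (x, μ (y, z)) := by
    have huniq := CoverProofAux.unique_lift hp (Z := X × X × X)
      (f := fun w : X × X × X => μ (μ (w.1, w.2.1), w.2.2))
      (g := fun w : X × X × X => μ (w.1, μ (w.2.1, w.2.2)))
      (hμc.comp ((hμc.comp (continuous_fst.prodMk
        (continuous_fst.comp continuous_snd))).prodMk
        (continuous_snd.comp continuous_snd)))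
      (hμc.comp (continuous_fst.prodMk (hμc.comp
        ((continuous_fst.comp continuous_snd).prodMk
        (continuous_snd.comp continuous_snd)))))
      (fun w => by
        simp only [hμp]
        exact mul_assoc _ _ _)
      (z₀ := (e', e', e'))
      (by show μ (μ (e', e'), e') = μ (e', μ (e', e')); rw [hμl e', hμl])
    intro x y z
    exact huniq (x, y, z)
  -- existence of inverses
  have hopenmap : IsOpenMap p := CoverProofAux.pOpen hp
  have hsurj : ∀ x : X, ∃ y : X, μ (x, y) = e' := by
    intro x
    set h : X → X := fun y => μ (x, y) with hh
    have hhc : Continuous h := hμc.comp (continuous_const.prodMk continuous_id)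
    have hrange : IsClopen (range h) := by
      constructor
      · exact (isCompact_range hhc).isClosed
      · rw [isOpen_iff_forall_mem_open]
        rintro w ⟨y, rfl⟩
        obtain ⟨W, V, sec, hWo, hgW, hVo, hVu, hdisj, hsecCont, hsecMem, hsecP, hsecInv⟩ :=
          CoverProofAux.sheets hp (p (h y))
        have : h y ∈ ⋃ i, V i := by rw [hVu]; exact hgW
        obtain ⟨i, hi⟩ := mem_iUnion.1 this
        set O' : Set X := h ⁻¹' (V i) with hO'
        refine ⟨V i ∩ p ⁻¹' ((fun g => p x * g) '' (p '' O')), ?_, ?_, ?_⟩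
        · rintro v ⟨hvV, hvP⟩
          obtain ⟨g, ⟨o, hoO, rfl⟩, hg⟩ := hvP
          refine ⟨o, ?_⟩
          have hg' : p x * p o = p v := hg
          have h1 : p (h o) = p x * p o := hμp (x, o)
          have h2 : h o ∈ V i := hoO
          calc h o = sec i (p (h o)) := (hsecInv i (h o) h2).symm
            _ = sec i (p v) := by rw [h1, hg']
            _ = v := hsecInv i v hvV
        · exact (hVo i).inter (((Homeomorph.mulLeft (p x)).isOpenMap _
            (hopenmap _ ((hVo i).preimage hhc))).preimage hpc)
        · refine ⟨hi, ?_⟩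
          refine ⟨p y, ⟨y, hi, rfl⟩, ?_⟩
          exact (hμp (x, y)).symm
    have huniv : range h = univ := hrange.eq_univ ⟨h e', e', rfl⟩
    have he'r : e' ∈ range h := by rw [huniv]; exact mem_univ e'
    exact he'r
  have hinvuniq : ∀ x y y' : X, μ (x, y) = e' → μ (x, y') = e' → y = y' := by
    intro x y y' h1 h2
    calc y = μ (e', y) := (hμl y).symm
      _ = μ (μ (x, y'), y) := by rw [h2]
      _ = μ (x, μ (y', y)) := hassoc x y' y
      _ = μ (x, μ (y, y')) := by rw [hcomm y' y]
      _ = μ (μ (x, y), y') := (hassoc x y y').symm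
      _ = μ (e', y') := by rw [h1]
      _ = y' := hμl y'
  set K : Set (X × X) := μ ⁻¹' {e'} with hK
  have hKcl : IsClosed K := isClosed_singleton.preimage hμc
  haveI : CompactSpace K := isCompact_iff_compactSpace.mp hKcl.isCompact
  have hbij : Function.Bijective (fun z : K => (z : X × X).1) := by
    constructor
    · rintro ⟨⟨x, y⟩, hxy⟩ ⟨⟨x', y'⟩, hxy'⟩ hfst
      simp only at hfst
      subst hfst
      have : y = y' := hinvuniq x y y' hxy hxy'
      subst this
      rfl
    · intro x
      obtain ⟨y, hy⟩ := hsurj x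
      exact ⟨⟨(x, y), hy⟩, rfl⟩
  set eqv : K ≃ X := Equiv.ofBijective _ hbij with heqv
  have heqvc : Continuous (eqv : K → X) := continuous_fst.comp continuous_subtype_val
  set homeo : K ≃ₜ X := heqvc.homeoOfEquivCompactToT2 with hhomeo
  set ι : X → X := fun x => ((homeo.symm x : K) : X × X).2 with hι
  have hιc : Continuous ι :=
    continuous_snd.comp (continuous_subtype_val.comp homeo.symm.continuous)
  have hιinv : ∀ x : X, μ (x, ι x) = e' := by
    intro x
    have hz : ((homeo.symm x : K) : X × X) ∈ K := (homeo.symm x).2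
    have hx1 : ((homeo.symm x : K) : X × X).1 = x := by
      have h3 : homeo (homeo.symm x) = x := homeo.apply_symm_apply x
      exact h3
    have hpair : (x, ι x) = ((homeo.symm x : K) : X × X) := by
      apply Prod.ext
      · exact hx1.symm
      · rfl
    show μ (x, ι x) = e'
    rw [hpair]
    exact hz
  letI gr : CommGroup X :=
    { mul := fun x y => μ (x, y)
      one := e'
      inv := ι
      mul_assoc := hassoc
      one_mul := hμl
      mul_one := hμr
      inv_mul_cancel := fun x => by
        show μ (ι x, x) = e'
        rw [hcomm]
        exact hιinv x
      mul_comm := hcomm }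
  have hTG : @IsTopologicalGroup X _ gr.toGroup :=
    @IsTopologicalGroup.mk X _ gr.toGroup ⟨hμc⟩ ⟨hιc⟩
  exact ⟨gr, rfl, hTG, fun x y => hμp (x, y)⟩
end

section
/- Let G be a compact connected abelian Hausdorff topological group and let k ≥ 2 be an integer. If there exists a k-sheeted covering map from a connected Hausdorff topological space onto G, then G does not admit a k-mean. -/
/-- An `n`-mean on a topological space `G`: a continuous symmetric map `Gⁿ → G`
restricting to the identity on the diagonal. -/
def IsMean {G : Type*} [TopologicalSpace G] (n : ℕ) (μ : (Fin n → G) → G) : Prop :=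
  Continuous μ ∧ (∀ (g : Fin n → G) (σ : Equiv.Perm (Fin n)), μ (g ∘ σ) = μ g) ∧
    ∀ x : G, μ (fun _ => x) = x


namespace NoMeanAux


/-- increase coordinate `d` of a grid position -/
def bump {m : ℕ} (t : Fin m → ℕ) (d : Fin m) : Fin m → ℕ := fun i => if i = d then t i + 1 else t i

lemma bump_comm {m : ℕ} (t : Fin m → ℕ) (d₁ d₂ : Fin m) :
    bump (bump t d₁) d₂ = bump (bump t d₂) d₁ := by
  funext i; simp only [bump]
  by_cases h1 : i = d₁ <;> by_cases h2 : i = d₂ <;> simp [h1, h2] <;> split_ifs <;> omega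

/-- the list of grid values along a word of directions, starting position `t` (exclusive) -/
def steps {m : ℕ} {G : Type*} (h : (Fin m → ℕ) → G) : (Fin m → ℕ) → List (Fin m) → List G
  | _, [] => []
  | t, d :: w => h (bump t d) :: steps h (bump t d) w

def posOf {m : ℕ} (t : Fin m → ℕ) (w : List (Fin m)) : Fin m → ℕ :=
  fun i => t i + w.count i

lemma posOf_nil {m : ℕ} (t : Fin m → ℕ) : posOf t [] = t := by
  funext i; simp [posOf]

lemma posOf_cons {m : ℕ} (t : Fin m → ℕ) (d : Fin m) (w : List (Fin m)) :
    posOf (bump t d) w = posOf t (d :: w) := by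
  funext i; simp only [posOf, bump, List.count_cons]
  by_cases h : i = d <;> simp [h] <;> omega

lemma steps_append {m : ℕ} {G : Type*} (h : (Fin m → ℕ) → G) :
    ∀ (w₁ w₂ : List (Fin m)) (t), steps h t (w₁ ++ w₂) = steps h t w₁ ++ steps h (posOf t w₁) w₂ := by
  intro w₁
  induction w₁ with
  | nil => intro w₂ t; simp [steps, posOf_nil]
  | cons d w ih =>
      intro w₂ t
      show h (bump t d) :: steps h (bump t d) (w ++ w₂) = _
      rw [ih w₂ (bump t d), posOf_cons]
      rfl

lemma chain_steps {m : ℕ} {G : Type*} [CommGroup G] {U : Set G} (h : (Fin m → ℕ) → G)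
    (hf : ∀ t d, (h t)⁻¹ * h (bump t d) ∈ U) :
    ∀ (w : List (Fin m)) (t), List.Chain (fun a b => a⁻¹ * b ∈ U) (h t) (steps h t w) := by
  intro w
  induction w with
  | nil => intro t; exact List.Chain.nil
  | cons d w ih => intro t; exact List.Chain.cons (hf t d) (ih (bump t d))

lemma getLastD_steps {m : ℕ} {G : Type*} (h : (Fin m → ℕ) → G) :
    ∀ (w : List (Fin m)) (t), (steps h t w).getLastD (h t) = h (posOf t w) := by
  intro w
  induction w with
  | nil => intro t; rw [posOf_nil]; rfl
  | cons d w ih => intro t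
                   rw [steps, List.getLastD_cons, ih (bump t d), posOf_cons]

def addN {m : ℕ} (t : Fin m → ℕ) (d : Fin m) (n : ℕ) : Fin m → ℕ := fun i => if i = d then t i + n else t i

lemma addN_zero {m : ℕ} (t : Fin m → ℕ) (d : Fin m) : addN t d 0 = t := by
  funext i; simp [addN]

lemma addN_bump {m : ℕ} (t : Fin m → ℕ) (d : Fin m) (n : ℕ) :
    addN (bump t d) d n = addN t d (n + 1) := by
  funext i; simp only [addN, bump]; by_cases h : i = d <;> simp [h] <;> omega

lemma steps_replicate {m : ℕ} {G : Type*} (h : (Fin m → ℕ) → G) :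
    ∀ (N : ℕ) (t) (d : Fin m),
      steps h t (List.replicate N d) = (List.range N).map (fun s => h (addN t d (s + 1))) := by
  intro N
  induction N with
  | zero => intro t d; rfl
  | succ N ih =>
      intro t d
      rw [List.replicate_succ, List.range_succ_eq_map]
      simp only [steps, List.map_cons, ih (bump t d) d, List.map_map]
      have h0 : bump t d = addN t d (0 + 1) := by
        funext i; simp [bump, addN]
      rw [← h0]
      refine congrArg₂ _ rfl (List.map_congr_left ?_)
      intro s _
      simp only [Function.comp_apply, addN_bump]
  
lemma TT_p {X G : Type*} [CommGroup G] (p : X → G) (hop : X → G → X) (U : Set G)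
    (hop_p : ∀ x g', (p x)⁻¹ * g' ∈ U → p (hop x g') = g') :
    ∀ (c : List G) (x : X), List.Chain (fun a b => a⁻¹ * b ∈ U) (p x) c →
      p (c.foldl hop x) = c.getLastD (p x) := by
  intro c
  induction c with
  | nil => intro x _; rfl
  | cons g c ih =>
      intro x hc
      rcases List.chain_cons.mp hc with ⟨h1, h2⟩
      have hg : p (hop x g) = g := hop_p x g h1
      rw [List.foldl_cons, List.getLastD_cons, ih (hop x g) (by rw [hg]; exact h2), hg]

lemma perm_transport {X G : Type*} [CommGroup G] (p : X → G) (hop : X → G → X) (U : Set G)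
    {m : ℕ} (h : (Fin m → ℕ) → G)
    (hop_p : ∀ x g', (p x)⁻¹ * g' ∈ U → p (hop x g') = g')
    (hfine : ∀ t d, (h t)⁻¹ * h (bump t d) ∈ U)
    (hswap : ∀ (x : X) (t) (d₁ d₂ : Fin m), p x = h t →
      hop (hop x (h (bump t d₁))) (h (bump (bump t d₁) d₂))
        = hop (hop x (h (bump t d₂))) (h (bump (bump t d₂) d₁))) :
    ∀ {w₁ w₂ : List (Fin m)}, w₁.Perm w₂ → ∀ (t) (x : X), p x = h t →
      (steps h t w₁).foldl hop x = (steps h t w₂).foldl hop x := by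
  intro w₁ w₂ hperm
  induction hperm with
  | nil => intro t x _; rfl
  | cons d hl ih =>
      intro t x hx
      simp only [steps, List.foldl_cons]
      exact ih (bump t d) (hop x (h (bump t d)))
        (by rw [hop_p x _ (by rw [hx]; exact hfine t d)])
  | swap d₁ d₂ l =>
      intro t x hx
      simp only [steps, List.foldl_cons]
      rw [hswap x t d₂ d₁ hx, bump_comm]
  | trans h₁ h₂ ih₁ ih₂ =>
      intro t x hx
      exact (ih₁ t x hx).trans (ih₂ t x hx)



section Geometry

variable {X G : Type*} [TopologicalSpace X] [TopologicalSpace G] [CommGroup G]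
  [IsTopologicalGroup G] [CompactSpace G] [T2Space G]

/-- A basic chart of a covering: an even neighborhood with its sheets
(we only record bijectivity of `p` on each sheet). -/
structure Chart (k : ℕ) (p : X → G) : Type _ where
  W : Set G
  V : Fin k → Set X
  openW : IsOpen W
  openV : ∀ i, IsOpen (V i)
  disj : Pairwise fun i j => Disjoint (V i) (V j)
  unionEq : (⋃ i, V i) = p ⁻¹' W
  bij : ∀ i, Set.BijOn p (V i) W

variable {k : ℕ} {p : X → G}

lemma exists_chart (hp : IsCoveringOfDegree k p) (g : G) : ∃ C : Chart k p, g ∈ C.W := by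
  obtain ⟨W, hWo, hgW, V, hVo, hdisj, hun, hhom⟩ := hp.2.2 g
  choose e he using hhom
  refine ⟨⟨W, V, hWo, hVo, hdisj, hun, fun i => ⟨?_, ?_, ?_⟩⟩, hgW⟩
  · intro x hx
    rw [he i ⟨x, hx⟩]
    exact (e i ⟨x, hx⟩).2
  · intro x hx y hy hxy
    have h1 : ((e i ⟨x, hx⟩ : W) : G) = ((e i ⟨y, hy⟩ : W) : G) := by
      rw [← he i ⟨x, hx⟩, ← he i ⟨y, hy⟩]; exact hxy
    have h2 : (⟨x, hx⟩ : V i) = ⟨y, hy⟩ := (e i).injective (Subtype.coe_injective h1)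
    exact congrArg Subtype.val h2
  · intro w hw
    refine ⟨((e i).symm ⟨w, hw⟩ : V i), ((e i).symm ⟨w, hw⟩).2, ?_⟩
    rw [he i ((e i).symm ⟨w, hw⟩), Homeomorph.apply_symm_apply]

lemma isOpenMap_of_cov (hp : IsCoveringOfDegree k p) : IsOpenMap p := by
  intro A hA
  rw [isOpen_iff_forall_mem_open]
  rintro g ⟨x, hxA, rfl⟩
  obtain ⟨W, hWo, hgW, V, hVo, hdisj, hun, hhom⟩ := hp.2.2 (p x)
  have hx : x ∈ ⋃ i, V i := by rw [hun]; exact hgW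
  obtain ⟨i, hxi⟩ := Set.mem_iUnion.mp hx
  obtain ⟨e, he⟩ := hhom i
  refine ⟨Subtype.val '' (e '' {v : (V i) | (v : X) ∈ A}), ?_, ?_, ?_⟩
  · rintro _ ⟨w, ⟨v, hv, rfl⟩, rfl⟩
    exact ⟨v, hv, he v⟩
  · apply (hWo.isOpenMap_subtype_val)
    have hS : IsOpen {v : (V i) | (v : X) ∈ A} := continuous_subtype_val.isOpen_preimage A hA
    exact e.isOpenMap _ hS
  · exact ⟨e ⟨x, hxi⟩, ⟨⟨x, hxi⟩, hxA, rfl⟩, (he ⟨x, hxi⟩).symm⟩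

lemma chart_shrink (hpc : Continuous p) (hopen : IsOpenMap p) (C : Chart k p) (A : Fin k → Set X)
    (hAo : ∀ i, IsOpen (A i)) (g : G) (hg : g ∈ C.W)
    (hgA : ∀ i, ∃ x, x ∈ C.V i ∩ A i ∧ p x = g) :
    ∃ C' : Chart k p, g ∈ C'.W ∧ ∀ i, C'.V i ⊆ A i := by
  classical
  set W' := C.W ∩ ⋂ i, p '' (C.V i ∩ A i) with hW'def
  have hW'o : IsOpen W' :=
    C.openW.inter (isOpen_iInter_of_finite fun i => hopen _ ((C.openV i).inter (hAo i)))
  have hW'sub : W' ⊆ C.W := Set.inter_subset_left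
  have hgW' : g ∈ W' := by
    refine ⟨hg, Set.mem_iInter.mpr fun i => ?_⟩
    obtain ⟨x, hx, hpx⟩ := hgA i
    exact ⟨x, hx, hpx⟩
  refine ⟨⟨W', fun i => C.V i ∩ A i ∩ p ⁻¹' W', hW'o,
      fun i => ((C.openV i).inter (hAo i)).inter (hW'o.preimage hpc), ?_, ?_, ?_⟩,
      hgW', fun i => fun x hx => hx.1.2⟩
  · intro i j hij
    exact (C.disj hij).mono (fun x hx => hx.1.1) (fun x hx => hx.1.1)
  · apply Set.eq_of_subset_of_subset
    · intro z hz
      obtain ⟨i, hzi⟩ := Set.mem_iUnion.mp hz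
      exact hzi.2
    · intro z hz
      have hzU : z ∈ ⋃ i, C.V i := by
        rw [C.unionEq]; exact hW'sub hz
      obtain ⟨i, hzi⟩ := Set.mem_iUnion.mp hzU
      have hmem : p z ∈ ⋂ i, p '' (C.V i ∩ A i) := hz.2
      obtain ⟨z', hz', hpz'⟩ := Set.mem_iInter.mp hmem i
      have : z' = z := (C.bij i).2.1 hz'.1 hzi hpz'
      subst this
      exact Set.mem_iUnion.mpr ⟨i, ⟨⟨hzi, hz'.2⟩, hz⟩⟩
  · intro i
    refine ⟨fun z hz => hz.2, fun z hz z' hz' h => (C.bij i).2.1 hz.1.1 hz'.1.1 h, ?_⟩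
    intro w hw
    obtain ⟨x, hx, hpx⟩ := Set.mem_iInter.mp hw.2 i
    exact ⟨x, ⟨hx, by rw [Set.mem_preimage, hpx]; exact hw⟩, hpx⟩


lemma exists_atlas (P : Chart k p → Prop)
    (hcharts : ∀ g : G, ∃ C : Chart k p, g ∈ C.W ∧ P C) :
    ∃ (s : Finset G) (C : G → Chart k p) (K : G → Set G),
      (∀ g, P (C g)) ∧ (∀ g, IsCompact (K g)) ∧ (∀ g, K g ⊆ (C g).W) ∧
      (∀ a : G, ∃ g ∈ s, a ∈ interior (K g)) := by
  choose C hCW hCP using hcharts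
  have hK : ∀ g : G, ∃ K, IsCompact K ∧ g ∈ interior K ∧ K ⊆ (C g).W :=
    fun g => exists_compact_subset (C g).openW (hCW g)
  choose K hKc hKint hKsub using hK
  have hcov : (Set.univ : Set G) ⊆ ⋃ g : G, interior (K g) :=
    fun a _ => Set.mem_iUnion.mpr ⟨a, hKint a⟩
  obtain ⟨s, hs⟩ := isCompact_univ.elim_finite_subcover (fun g => interior (K g))
    (fun _ => isOpen_interior) hcov
  exact ⟨s, C, K, hCP, hKc, hKsub, fun a => by simpa using Set.mem_iUnion₂.mp (hs (Set.mem_univ a))⟩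

/-- The level-1 relation: pairs that lie in a common sheet of every atlas chart
whose compact core contains both of their images. -/
def E1set (s : Finset G) (C : G → Chart k p) (K : G → Set G) : Set (X × X) :=
  ⋂ g ∈ s, (((p ⁻¹' (K g)) ×ˢ (p ⁻¹' (K g)))ᶜ ∪ ⋃ i, (C g).V i ×ˢ (C g).V i)

lemma E1_open {s : Finset G} {C : G → Chart k p} {K : G → Set G}
    (hpc : Continuous p) (hKc : ∀ g, IsCompact (K g)) : IsOpen (E1set s C K) :=
  Set.Finite.isOpen_biInter (s.finite_toSet) fun g _ =>
    ((((hKc g).isClosed.preimage hpc).prod ((hKc g).isClosed.preimage hpc)).isOpen_compl).union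
      (isOpen_iUnion fun i => ((C g).openV i).prod ((C g).openV i))

lemma E1_diag {s : Finset G} {C : G → Chart k p} {K : G → Set G}
    (hKsub : ∀ g, K g ⊆ (C g).W) (x : X) : (x, x) ∈ E1set s C K := by
  refine Set.mem_iInter₂.mpr fun g _ => ?_
  by_cases h : p x ∈ K g
  · right
    have : x ∈ ⋃ i, (C g).V i := by rw [(C g).unionEq]; exact hKsub g h
    obtain ⟨i, hi⟩ := Set.mem_iUnion.mp this
    exact Set.mem_iUnion.mpr ⟨i, hi, hi⟩
  · left; exact fun hmem => h hmem.1

lemma E1_symm {s : Finset G} {C : G → Chart k p} {K : G → Set G}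
    {x y : X} (h : (x, y) ∈ E1set s C K) : (y, x) ∈ E1set s C K := by
  refine Set.mem_iInter₂.mpr fun g hg => ?_
  rcases Set.mem_iInter₂.mp h g hg with h' | h'
  · left; exact fun hmem => h' ⟨hmem.2, hmem.1⟩
  · right
    obtain ⟨i, hi⟩ := Set.mem_iUnion.mp h'
    exact Set.mem_iUnion.mpr ⟨i, hi.2, hi.1⟩

lemma E1_prop {s : Finset G} {C : G → Chart k p} {K : G → Set G}
    {x y : X} (h : (x, y) ∈ E1set s C K) {g : G} (hg : g ∈ s)
    (hx : p x ∈ K g) (hy : p y ∈ K g) {i : Fin k} (hxi : x ∈ (C g).V i) :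
    y ∈ (C g).V i := by
  rcases Set.mem_iInter₂.mp h g hg with h' | h'
  · exact absurd ⟨hx, hy⟩ h'
  · obtain ⟨j, hj⟩ := Set.mem_iUnion.mp h'
    have : i = j := by
      by_contra hij
      exact Set.disjoint_left.mp ((C g).disj hij) hxi hj.1
    rw [this]; exact hj.2

lemma exists_small_chart (hp : IsCoveringOfDegree k p)
    (E : Set (X × X)) (hEo : IsOpen E) (hEdiag : ∀ x, (x, x) ∈ E) (a : G) :
    ∃ C : Chart k p, a ∈ C.W ∧ ∀ i, ((C.V i) ×ˢ (C.V i) : Set (X × X)) ⊆ E := by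
  obtain ⟨C, hC⟩ := exists_chart hp a
  have hfib : ∀ i, ∃ x, x ∈ C.V i ∧ p x = a := fun i => (C.bij i).2.2 hC
  choose xf hxf hpxf using hfib
  have hA : ∀ i, ∃ A : Set X, IsOpen A ∧ xf i ∈ A ∧ (A ×ˢ A : Set (X × X)) ⊆ E := by
    intro i
    obtain ⟨u, v, huo, hvo, hxu, hxv, huv⟩ :=
      isOpen_prod_iff.mp hEo (xf i) (xf i) (hEdiag (xf i))
    exact ⟨u ∩ v, huo.inter hvo, ⟨hxu, hxv⟩, fun q hq => huv ⟨hq.1.1, hq.2.2⟩⟩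
  choose A hAo hxA hAE using hA
  obtain ⟨C', hC'W, hC'A⟩ := chart_shrink hp.1 (isOpenMap_of_cov hp) C A hAo a hC
    (fun i => ⟨xf i, ⟨hxf i, hxA i⟩, hpxf i⟩)
  exact ⟨C', hC'W, fun i => fun q hq => hAE i ⟨hC'A i hq.1, hC'A i hq.2⟩⟩

lemma lebesgue_scale (s : Finset G) (O : G → Set G) (hOo : ∀ g, IsOpen (O g))
    (hcov : ∀ a : G, ∃ g ∈ s, a ∈ O g) :
    ∃ U : Set G, IsOpen U ∧ (1 : G) ∈ U ∧
      ∀ a : G, ∃ g ∈ s, ∀ b, a⁻¹ * b ∈ U → b ∈ O g := by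
  have h1 : ∀ a : G, ∃ g ∈ s, ∃ S : Set G, IsOpen S ∧ (1 : G) ∈ S ∧
      ∀ u v, u ∈ S → v ∈ S → a * (u * v) ∈ O g := by
    intro a
    obtain ⟨g, hgs, hgO⟩ := hcov a
    have hTo : IsOpen {t : G | a * t ∈ O g} :=
      (continuous_const.mul continuous_id).isOpen_preimage _ (hOo g)
    have hT1 : (1 : G) ∈ {t : G | a * t ∈ O g} := by simpa using hgO
    obtain ⟨S, hSo, hS1, hSS⟩ := exists_open_nhds_one_mul_subset (hTo.mem_nhds hT1)
    exact ⟨g, hgs, S, hSo, hS1, fun u v hu hv => hSS (Set.mul_mem_mul hu hv)⟩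
  choose ga hgas S hSo hS1 hSmul using h1
  have hcov2 : (Set.univ : Set G) ⊆ ⋃ a : G, (fun t => a * t) '' S a :=
    fun b _ => Set.mem_iUnion.mpr ⟨b, ⟨1, hS1 b, mul_one b⟩⟩
  obtain ⟨t, ht⟩ := isCompact_univ.elim_finite_subcover (fun a => (fun t => a * t) '' S a)
    (fun a => (Homeomorph.mulLeft a).isOpenMap _ (hSo a)) hcov2
  refine ⟨⋂ a ∈ t, S a, Set.Finite.isOpen_biInter t.finite_toSet (fun a _ => hSo a),
    Set.mem_iInter₂.mpr (fun a _ => hS1 a), ?_⟩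
  intro b
  obtain ⟨a, hat, u, hu, hub⟩ := Set.mem_iUnion₂.mp (ht (Set.mem_univ b))
  refine ⟨ga a, hgas a, fun c hc => ?_⟩
  have hc' : b⁻¹ * c ∈ S a := Set.mem_iInter₂.mp hc a hat
  simp only at hub
  have hcc : c = a * (u * (b⁻¹ * c)) := by rw [← mul_assoc, hub]; group
  rw [hcc]
  exact hSmul a u _ hu hc'

lemma exists_chain_scale : ∀ (n : ℕ) (Ub : Set G), IsOpen Ub → (1 : G) ∈ Ub →
    ∃ V : Set G, IsOpen V ∧ (1 : G) ∈ V ∧ (∀ g ∈ V, g⁻¹ ∈ V) ∧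
      ∀ (c : List G) (g₀ : G), List.Chain (fun a b => a⁻¹ * b ∈ V) g₀ c → c.length ≤ n →
        ∀ g ∈ c, g₀⁻¹ * g ∈ Ub := by
  intro n
  induction n with
  | zero =>
      intro Ub hUo hU1
      refine ⟨Ub ∩ {g | g⁻¹ ∈ Ub}, hUo.inter (continuous_inv.isOpen_preimage _ hUo),
        ⟨hU1, by simpa using hU1⟩, fun g hg => ⟨hg.2, by simpa using hg.1⟩, ?_⟩
      intro c g₀ _ hlen g hgc
      rw [Nat.le_zero, List.length_eq_zero_iff] at hlen
      subst hlen
      cases hgc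
  | succ n ih =>
      intro Ub hUo hU1
      obtain ⟨W, hWo, hW1, hWW⟩ := exists_open_nhds_one_mul_subset (hUo.mem_nhds hU1)
      have hWsub : W ⊆ Ub := fun w hw => by
        simpa using hWW (Set.mul_mem_mul hw hW1)
      obtain ⟨V, hVo, hV1, hVsym, hVacc⟩ := ih W hWo hW1
      refine ⟨V ∩ W ∩ {g | g⁻¹ ∈ V ∩ W},
        (hVo.inter hWo).inter (continuous_inv.isOpen_preimage _ (hVo.inter hWo)),
        ⟨⟨hV1, hW1⟩, by simpa using And.intro hV1 hW1⟩,
        fun g hg => ⟨hg.2, by simpa using And.intro hg.1.1 hg.1.2⟩, ?_⟩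
      intro c g₀ hc hlen g hgc
      cases c with
      | nil => cases hgc
      | cons a c' =>
          rcases List.chain_cons.mp hc with ⟨h1, h2⟩
          rcases List.mem_cons.mp hgc with rfl | hmem
          · exact hWsub h1.1.2
          · have hchain' : List.Chain (fun u v => u⁻¹ * v ∈ V) a c' :=
              List.Chain.imp (fun u v h => h.1.1) h2
            have ha : a⁻¹ * g ∈ W :=
              hVacc c' a hchain' (Nat.le_of_succ_le_succ hlen) g hmem
            have heq : g₀⁻¹ * g = (g₀⁻¹ * a) * (a⁻¹ * g) := by group
            rw [heq]
            exact hWW (Set.mul_mem_mul h1.1.2 ha)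

lemma exists_uc (μ : (Fin k → G) → G) (hμc : Continuous μ)
    (Ut : Set G) (hUo : IsOpen Ut) (hU1 : (1 : G) ∈ Ut) :
    ∃ V : Set G, IsOpen V ∧ (1 : G) ∈ V ∧ (∀ g ∈ V, g⁻¹ ∈ V) ∧
      ∀ a b : Fin k → G, (∀ i, (a i)⁻¹ * b i ∈ V) → (μ a)⁻¹ * μ b ∈ Ut := by
  classical
  have hΦ : Continuous fun q : (Fin k → G) × (Fin k → G) =>
      (μ q.1)⁻¹ * μ (fun i => q.1 i * q.2 i) := by
    refine ((hμc.comp continuous_fst).inv).mul (hμc.comp ?_)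
    exact continuous_pi fun i =>
      ((continuous_apply i).comp continuous_fst).mul ((continuous_apply i).comp continuous_snd)
  have hΩo : IsOpen ((fun q : (Fin k → G) × (Fin k → G) =>
      (μ q.1)⁻¹ * μ (fun i => q.1 i * q.2 i)) ⁻¹' Ut) := hΦ.isOpen_preimage _ hUo
  have key : ∀ a : Fin k → G, ∃ (N : Set (Fin k → G)) (S : Set G), IsOpen N ∧ a ∈ N ∧
      IsOpen S ∧ (1 : G) ∈ S ∧
      ∀ (a' t : Fin k → G), a' ∈ N → (∀ i, t i ∈ S) → (μ a')⁻¹ * μ (fun i => a' i * t i) ∈ Ut := by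
    intro a
    have hmem : (a, fun _ => (1 : G)) ∈ (fun q : (Fin k → G) × (Fin k → G) =>
        (μ q.1)⁻¹ * μ (fun i => q.1 i * q.2 i)) ⁻¹' Ut := by
      simp only [Set.mem_preimage, mul_one]
      simpa using hU1
    obtain ⟨N, T, hNo, hTo, haN, h1T, hNT⟩ := isOpen_prod_iff.mp hΩo a _ hmem
    obtain ⟨I, u, hu, hsub⟩ := isOpen_pi_iff.mp hTo _ h1T
    refine ⟨N, ⋂ i ∈ I, u i, hNo, haN,
      Set.Finite.isOpen_biInter I.finite_toSet (fun i hi => (hu i hi).1),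
      Set.mem_iInter₂.mpr (fun i hi => (hu i hi).2), ?_⟩
    intro a' t ha' ht
    have htT : t ∈ (I : Set (Fin k)).pi u := fun i hi => Set.mem_iInter₂.mp (ht i) i hi
    have hmem2 : (a', t) ∈ N ×ˢ T := Set.mem_prod.mpr ⟨ha', hsub htT⟩
    exact hNT hmem2
  choose N S hNo haN hSo hS1 hprop using key
  have hcov : (Set.univ : Set (Fin k → G)) ⊆ ⋃ a, N a :=
    fun a _ => Set.mem_iUnion.mpr ⟨a, haN a⟩
  obtain ⟨t, ht⟩ := isCompact_univ.elim_finite_subcover N hNo hcov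
  refine ⟨(⋂ a ∈ t, S a) ∩ {g | g⁻¹ ∈ ⋂ a ∈ t, S a},
    (Set.Finite.isOpen_biInter t.finite_toSet (fun a _ => hSo a)).inter
      (continuous_inv.isOpen_preimage _ (Set.Finite.isOpen_biInter t.finite_toSet (fun a _ => hSo a))),
    ⟨Set.mem_iInter₂.mpr (fun a _ => hS1 a), by
      simpa using Set.mem_iInter₂.mpr (fun (a : Fin k → G) (_ : a ∈ t) => hS1 a)⟩,
    fun g hg => ⟨hg.2, by simpa using hg.1⟩, ?_⟩
  intro a b hab
  obtain ⟨a₀, ha₀t, haN₀⟩ := Set.mem_iUnion₂.mp (ht (Set.mem_univ a))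
  have := hprop a₀ a (fun i => (a i)⁻¹ * b i) haN₀
    (fun i => Set.mem_iInter₂.mp (hab i).1 a₀ ha₀t)
  have hfix : (fun i => a i * ((a i)⁻¹ * b i)) = b := by
    funext i; group
  rwa [hfix] at this


/-- All the covering-geometry data we need downstream. -/
structure Pack (k : ℕ) (p : X → G) (μ : (Fin k → G) → G) : Type _ where
  U : Set G
  Uone : (1 : G) ∈ U
  Usymm : ∀ g ∈ U, g⁻¹ ∈ U
  Vm : Set G
  Vmopen : IsOpen Vm
  Vmone : (1 : G) ∈ Vm
  Vmsymm : ∀ g ∈ Vm, g⁻¹ ∈ Vm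
  VmU : Vm ⊆ U
  uc : ∀ a b : Fin k → G, (∀ i, (a i)⁻¹ * b i ∈ Vm) → (μ a)⁻¹ * μ b ∈ U
  hop : X → G → X
  hop_p : ∀ x g', (p x)⁻¹ * g' ∈ U → p (hop x g') = g'
  hop_inv : ∀ x g', (p x)⁻¹ * g' ∈ U → hop (hop x g') (p x) = x
  block : ∀ (x : X) (c₁ c₂ : List G), c₁.length ≤ k + 1 → c₂.length ≤ k + 1 →
      List.Chain (fun a b => a⁻¹ * b ∈ U) (p x) c₁ →
      List.Chain (fun a b => a⁻¹ * b ∈ U) (p x) c₂ →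
      c₁.getLastD (p x) = c₂.getLastD (p x) → c₁.foldl hop x = c₂.foldl hop x
  nbhd : ∀ y : X, ∃ N : Set X, IsOpen N ∧ y ∈ N ∧
      ∀ z ∈ N, (p y)⁻¹ * p z ∈ U → hop y (p z) = z
  fib : Fin k ≃ {x : X // p x = 1}

lemma exists_pack (hp : IsCoveringOfDegree k p) (μ : (Fin k → G) → G) (hμc : Continuous μ) :
    Nonempty (Pack k p μ) := by
  classical
  obtain ⟨s₁, C₁, K₁, -, hK₁c, hK₁sub, hcov₁⟩ :=
    exists_atlas (p := p) (fun _ => True)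
      (fun g => (exists_chart hp g).imp (fun C hC => ⟨hC, trivial⟩))
  set E1 := E1set s₁ C₁ K₁ with hE1def
  have hE1o : IsOpen E1 := E1_open hp.1 hK₁c
  have hE1diag : ∀ x : X, (x, x) ∈ E1 := E1_diag hK₁sub
  obtain ⟨s₂, C₂, K₂, hsmall, hK₂c, hK₂sub, hcov₂⟩ :=
    exists_atlas (p := p) (fun C => ∀ i, ((C.V i) ×ˢ (C.V i) : Set (X × X)) ⊆ E1)
      (fun g => exists_small_chart hp E1 hE1o hE1diag g)
  set E2 : Set (X × X) := ⋃ g ∈ s₂, ⋃ i, (C₂ g).V i ×ˢ (C₂ g).V i with hE2def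
  have hE2sub : E2 ⊆ E1 := by
    intro q hq
    obtain ⟨g, hg, hq2⟩ := Set.mem_iUnion₂.mp hq
    obtain ⟨i, hi⟩ := Set.mem_iUnion.mp hq2
    exact hsmall g i hi
  have hE2symm : ∀ x y : X, (x, y) ∈ E2 → (y, x) ∈ E2 := by
    intro x y h
    obtain ⟨g, hg, h2⟩ := Set.mem_iUnion₂.mp h
    obtain ⟨i, hi⟩ := Set.mem_iUnion.mp h2
    exact Set.mem_iUnion₂.mpr ⟨g, hg, Set.mem_iUnion.mpr ⟨i, hi.2, hi.1⟩⟩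
  obtain ⟨L₁, hL₁o, hL₁1, hleb₁⟩ :=
    lebesgue_scale s₁ (fun g => interior (K₁ g)) (fun _ => isOpen_interior) hcov₁
  obtain ⟨L₂, hL₂o, hL₂1, hleb₂⟩ :=
    lebesgue_scale s₂ (fun g => interior (K₂ g)) (fun _ => isOpen_interior) hcov₂
  obtain ⟨U, hUo, hU1, hUsym, hUacc⟩ :=
    exists_chain_scale (k + 2) (L₁ ∩ L₂) (hL₁o.inter hL₂o) ⟨hL₁1, hL₂1⟩
  have hUsub : U ⊆ L₁ ∩ L₂ := by
    intro g hg
    have hch : List.Chain (fun a b => a⁻¹ * b ∈ U) 1 [g] :=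
      List.chain_cons.mpr ⟨by simpa using hg, List.Chain.nil⟩
    have := hUacc [g] 1 hch (by simp) g (by simp)
    simpa using this
  have hopEx : ∀ (x : X) (g' : G), (p x)⁻¹ * g' ∈ U → ∃ y, p y = g' ∧ (x, y) ∈ E2 := by
    intro x g' hg'
    obtain ⟨g₂, hg₂s, hg₂⟩ := hleb₂ (p x)
    have hpx : p x ∈ interior (K₂ g₂) := hg₂ (p x) (by simpa using hL₂1)
    have hg'K : g' ∈ interior (K₂ g₂) := hg₂ g' (hUsub hg').2
    have hxW : x ∈ ⋃ i, (C₂ g₂).V i := by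
      rw [(C₂ g₂).unionEq]; exact hK₂sub g₂ (interior_subset hpx)
    obtain ⟨i, hxi⟩ := Set.mem_iUnion.mp hxW
    obtain ⟨y, hyV, hpy⟩ := ((C₂ g₂).bij i).2.2 (hK₂sub g₂ (interior_subset hg'K))
    exact ⟨y, hpy, Set.mem_iUnion₂.mpr ⟨g₂, hg₂s, Set.mem_iUnion.mpr ⟨i, hxi, hyV⟩⟩⟩
  have hopUniq : ∀ (x : X) (g' : G), (p x)⁻¹ * g' ∈ U → ∀ y y', p y = g' → (x, y) ∈ E2 →
      p y' = g' → (x, y') ∈ E2 → y = y' := by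
    intro x g' hg' y y' hpy hxy hpy' hxy'
    obtain ⟨g₁, hg₁s, hg₁⟩ := hleb₁ (p x)
    have hpx : p x ∈ K₁ g₁ := interior_subset (hg₁ (p x) (by simpa using hL₁1))
    have hg'K : g' ∈ K₁ g₁ := interior_subset (hg₁ g' (hUsub hg').1)
    have hxW : x ∈ ⋃ i, (C₁ g₁).V i := by
      rw [(C₁ g₁).unionEq]; exact hK₁sub g₁ hpx
    obtain ⟨i, hxi⟩ := Set.mem_iUnion.mp hxW
    have hy : y ∈ (C₁ g₁).V i :=
      E1_prop (hE2sub hxy) hg₁s hpx (by rw [hpy]; exact hg'K) hxi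
    have hy' : y' ∈ (C₁ g₁).V i :=
      E1_prop (hE2sub hxy') hg₁s hpx (by rw [hpy']; exact hg'K) hxi
    exact ((C₁ g₁).bij i).2.1 hy hy' (by rw [hpy, hpy'])
  set hop : X → G → X := fun x g' =>
    if h : ∃ y, p y = g' ∧ (x, y) ∈ E2 then h.choose else x with hhopdef
  have hop_spec : ∀ x g', (p x)⁻¹ * g' ∈ U → p (hop x g') = g' ∧ (x, hop x g') ∈ E2 := by
    intro x g' h
    have hex := hopEx x g' h
    simp only [hhopdef, dif_pos hex]
    exact hex.choose_spec
  have hop_det : ∀ x g' y, (p x)⁻¹ * g' ∈ U → p y = g' → (x, y) ∈ E2 → hop x g' = y := by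
    intro x g' y h hpy hxy
    obtain ⟨h1, h2⟩ := hop_spec x g' h
    exact hopUniq x g' h _ y h1 h2 hpy hxy
  have hop_p : ∀ x g', (p x)⁻¹ * g' ∈ U → p (hop x g') = g' := fun x g' h => (hop_spec x g' h).1
  have hop_inv : ∀ x g', (p x)⁻¹ * g' ∈ U → hop (hop x g') (p x) = x := by
    intro x g' h
    obtain ⟨h1, h2⟩ := hop_spec x g' h
    apply hop_det
    · rw [h1]
      have := hUsym _ h
      simpa using this
    · rfl
    · exact hE2symm _ _ h2
  have block : ∀ (x : X) (c₁ c₂ : List G), c₁.length ≤ k + 1 → c₂.length ≤ k + 1 →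
      List.Chain (fun a b => a⁻¹ * b ∈ U) (p x) c₁ →
      List.Chain (fun a b => a⁻¹ * b ∈ U) (p x) c₂ →
      c₁.getLastD (p x) = c₂.getLastD (p x) → c₁.foldl hop x = c₂.foldl hop x := by
    intro x c₁ c₂ hlen₁ hlen₂ hch₁ hch₂ hlast
    obtain ⟨g₁, hg₁s, hg₁⟩ := hleb₁ (p x)
    have hmem₁ : ∀ g ∈ c₁, g ∈ K₁ g₁ := fun g hg =>
      interior_subset (hg₁ g (hUacc c₁ (p x) hch₁ (le_trans hlen₁ (by omega)) g hg).1)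
    have hmem₂ : ∀ g ∈ c₂, g ∈ K₁ g₁ := fun g hg =>
      interior_subset (hg₁ g (hUacc c₂ (p x) hch₂ (le_trans hlen₂ (by omega)) g hg).1)
    have hpx : p x ∈ K₁ g₁ := interior_subset (hg₁ (p x) (by simpa using hL₁1))
    have hxW : x ∈ ⋃ i, (C₁ g₁).V i := by
      rw [(C₁ g₁).unionEq]; exact hK₁sub g₁ hpx
    obtain ⟨i, hxi⟩ := Set.mem_iUnion.mp hxW
    have sheet : ∀ (c : List G) (z : X), z ∈ (C₁ g₁).V i → p z ∈ K₁ g₁ →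
        (∀ g ∈ c, g ∈ K₁ g₁) → List.Chain (fun a b => a⁻¹ * b ∈ U) (p z) c →
        (c.foldl hop z ∈ (C₁ g₁).V i ∧ p (c.foldl hop z) = c.getLastD (p z)) := by
      intro c
      induction c with
      | nil => intro z hz hpz hmem hch; exact ⟨hz, rfl⟩
      | cons a c ih =>
          intro z hz hpz hmem hch
          rcases List.chain_cons.mp hch with ⟨h1, h2⟩
          obtain ⟨hpz1, hz1E⟩ := hop_spec z a h1
          have haK : a ∈ K₁ g₁ := hmem a (by simp)
          have hz1V : hop z a ∈ (C₁ g₁).V i :=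
            E1_prop (hE2sub hz1E) hg₁s hpz (by rw [hpz1]; exact haK) hz
          have hrec := ih (hop z a) hz1V (by rw [hpz1]; exact haK)
            (fun g hg => hmem g (by simp [hg])) (by rw [hpz1]; exact h2)
          refine ⟨hrec.1, ?_⟩
          rw [List.foldl_cons] at *
          rw [List.getLastD_cons, hrec.2, hpz1]
    have h₁ := sheet c₁ x hxi hpx hmem₁ hch₁
    have h₂ := sheet c₂ x hxi hpx hmem₂ hch₂
    exact ((C₁ g₁).bij i).2.1 h₁.1 h₂.1 (by rw [h₁.2, h₂.2, hlast])
  have nbhd : ∀ y : X, ∃ N : Set X, IsOpen N ∧ y ∈ N ∧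
      ∀ z ∈ N, (p y)⁻¹ * p z ∈ U → hop y (p z) = z := by
    intro y
    obtain ⟨g₂, hg₂s, hg₂⟩ := hleb₂ (p y)
    have hpy : p y ∈ interior (K₂ g₂) := hg₂ _ (by simpa using hL₂1)
    have hyW : y ∈ ⋃ i, (C₂ g₂).V i := by
      rw [(C₂ g₂).unionEq]; exact hK₂sub g₂ (interior_subset hpy)
    obtain ⟨i, hyi⟩ := Set.mem_iUnion.mp hyW
    exact ⟨(C₂ g₂).V i, (C₂ g₂).openV i, hyi, fun z hz hratio =>
      hop_det y (p z) z hratio rfl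
        (Set.mem_iUnion₂.mpr ⟨g₂, hg₂s, Set.mem_iUnion.mpr ⟨i, hyi, hz⟩⟩)⟩
  obtain ⟨Cf, hCf⟩ := exists_chart hp (1 : G)
  have hfib : ∀ i, ∃ x, x ∈ Cf.V i ∧ p x = 1 := fun i => (Cf.bij i).2.2 hCf
  choose xf hxfV hxfp using hfib
  have hbij : Function.Bijective (fun i => (⟨xf i, hxfp i⟩ : {x : X // p x = 1})) := by
    constructor
    · intro i j hij
      by_contra hne
      have hval : xf i = xf j := congrArg Subtype.val hij
      exact Set.disjoint_left.mp (Cf.disj hne) (hxfV i) (hval ▸ hxfV j)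
    · rintro ⟨x, hx⟩
      have hxW : x ∈ ⋃ i, Cf.V i := by
        rw [Cf.unionEq, Set.mem_preimage, hx]; exact hCf
      obtain ⟨i, hxi⟩ := Set.mem_iUnion.mp hxW
      exact ⟨i, Subtype.ext ((Cf.bij i).2.1 (hxfV i) hxi (by rw [hxfp i, hx]))⟩
  obtain ⟨Vm₀, hVo, hV1, hVsym, hVuc⟩ := exists_uc μ hμc U hUo hU1
  refine ⟨⟨U, hU1, hUsym, Vm₀ ∩ U, hVo.inter hUo, ⟨hV1, hU1⟩,
    fun g hg => ⟨hVsym g hg.1, hUsym g hg.2⟩, Set.inter_subset_right,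
    fun a b hab => hVuc a b (fun i => (hab i).1), hop, hop_p, hop_inv, block, nbhd,
    Equiv.ofBijective _ hbij⟩⟩

end Geometry

section Lists

variable {α : Type*}

lemma steps_length {m : ℕ} {H : Type*} (h : (Fin m → ℕ) → H) :
    ∀ (w : List (Fin m)) (t), (steps h t w).length = w.length := by
  intro w
  induction w with
  | nil => intro t; rfl
  | cons d w ih => intro t; simp [steps, ih]

lemma chain_snoc {R : α → α → Prop} :
    ∀ {l : List α} {a b : α}, List.Chain R a l → R (l.getLastD a) b → List.Chain R a (l ++ [b]) := by
  intro l
  induction l with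
  | nil => intro a b _ hr; exact List.chain_cons.mpr ⟨hr, List.Chain.nil⟩
  | cons c l ih =>
      intro a b hch hr
      rcases List.chain_cons.mp hch with ⟨h1, h2⟩
      rw [List.getLastD_cons] at hr
      exact List.chain_cons.mpr ⟨h1, ih h2 hr⟩

lemma bridge (d : α) : ∀ (l : List α), (List.range l.length).map (fun s => l.getD s d) = l := by
  intro l
  induction l with
  | nil => rfl
  | cons a l ih =>
      rw [List.length_cons, List.range_succ_eq_map, List.map_cons, List.map_map]
      rw [List.getD_cons_zero]
      have h2 : List.map ((fun s => (a :: l).getD s d) ∘ Nat.succ) (List.range l.length) = l := by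
        rw [show ((fun s => (a :: l).getD s d) ∘ Nat.succ) = (fun s => l.getD s d) from rfl]
        exact ih
      rw [h2]

lemma getD_length_cons (d : α) : ∀ (l : List α) (a : α), (a :: l).getD l.length d = l.getLastD a := by
  intro l
  induction l with
  | nil => intro a; rfl
  | cons b l ih =>
      intro a
      rw [List.length_cons, List.getD_cons_succ, ih b, List.getLastD_cons]

lemma getLastD_ne_nil (d : α) : ∀ (c : List α), c ≠ [] → ∀ a, c.getLastD a = c.getLastD d := by
  intro c
  induction c with
  | nil => intro h; exact absurd rfl h
  | cons b c ih =>
      intro _ a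
      rw [List.getLastD_cons, List.getLastD_cons]

end Lists

section Walks

variable {G : Type*} [CommGroup G]

lemma walk_ratio {S : Set G} (hone : (1 : G) ∈ S) :
    ∀ (c : List G) (a : G), List.Chain (fun u v => u⁻¹ * v ∈ S) a c → c.getLastD a = 1 →
      ∀ s, ((a :: c).getD s 1)⁻¹ * ((a :: c).getD (s + 1) 1) ∈ S := by
  intro c
  induction c with
  | nil =>
      intro a _ hlast s
      simp only [List.getLastD] at hlast
      subst hlast
      cases s with
      | zero => simpa using hone
      | succ s =>
          rw [List.getD_cons_succ]
          simp only [List.getD_nil]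
          rw [List.getD_eq_default _ _ (by simp)]
          simpa using hone
  | cons b c ih =>
      intro a hch hlast s
      rcases List.chain_cons.mp hch with ⟨h1, h2⟩
      rw [List.getLastD_cons] at hlast
      cases s with
      | zero =>
          rw [List.getD_cons_zero, List.getD_cons_succ, List.getD_cons_zero]
          exact h1
      | succ s =>
          rw [List.getD_cons_succ, List.getD_cons_succ]
          exact ih b h2 hlast s

lemma walk_ge : ∀ (c : List G), c.getLastD 1 = 1 → ∀ s, c.length ≤ s → (1 :: c).getD s 1 = 1 := by
  intro c hlast s hs
  rcases eq_or_lt_of_le hs with heq | hlt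
  · rw [← heq, getD_length_cons, hlast]
  · exact List.getD_eq_default _ _ (by simpa using hlt)

end Walks

section Reversal

variable {X G : Type*} [CommGroup G] (p : X → G) (hop : X → G → X) (U : Set G)

lemma rev_aux (hop_p : ∀ x g', (p x)⁻¹ * g' ∈ U → p (hop x g') = g')
    (hop_inv : ∀ x g', (p x)⁻¹ * g' ∈ U → hop (hop x g') (p x) = x) :
    ∀ (c : List G) (x : X), List.Chain (fun a b => a⁻¹ * b ∈ U) (p x) c →
      ((p x :: c).dropLast.reverse).foldl hop (c.foldl hop x) = x := by
  intro c
  induction c with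
  | nil => intro x _; rfl
  | cons a c ih =>
      intro x hch
      rcases List.chain_cons.mp hch with ⟨h1, h2⟩
      have hpa : p (hop x a) = a := hop_p x a h1
      have hd : (p x :: a :: c).dropLast.reverse = ((a :: c).dropLast.reverse) ++ [p x] := by
        show ((p x :: (a :: c).dropLast)).reverse = _
        rw [List.reverse_cons]
      rw [hd, List.foldl_append]
      have hinner : ((a :: c).dropLast.reverse).foldl hop ((a :: c).foldl hop x) = hop x a := by
        have := ih (hop x a) (by rw [hpa]; exact h2)
        rw [hpa] at this
        simpa using this
      rw [hinner]
      exact hop_inv x a h1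

lemma revrev : ∀ (c : List G), c.getLastD 1 = 1 →
    ((1 :: ((1 :: c).dropLast.reverse)).dropLast.reverse) = c := by
  intro c hlast
  cases hc : c with
  | nil => rfl
  | cons b l =>
      have hne : c ≠ [] := by rw [hc]; simp
      have hgl : c.getLast hne = 1 := by
        have h1 : c.getLastD 1 = c.getLast hne := by
          subst hc
          exact List.getLastD_eq_getLast?.trans (by rw [List.getLast?_eq_getLast hne]; rfl)
        rw [← h1, hlast]
      have hdec : c.dropLast ++ [(1 : G)] = c := by
        rw [← hgl]; exact List.dropLast_append_getLast hne
      rw [← hc]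
      conv_lhs => rw [← hdec]
      have e1 : (1 :: (c.dropLast ++ [(1:G)])).dropLast = 1 :: c.dropLast := by
        rw [← List.cons_append, List.dropLast_concat]
      rw [e1, List.reverse_cons]
      have e2 : (1 :: (c.dropLast.reverse ++ [(1:G)])).dropLast = 1 :: c.dropLast.reverse := by
        rw [← List.cons_append, List.dropLast_concat]
      rw [e2, List.reverse_cons, List.reverse_reverse, hdec]

lemma rev_getLastD (c : List G) (a : G) (hne : c ≠ []) :
    ∀ d, ((a :: c).dropLast.reverse).getLastD d = a := by
  intro d
  cases c with
  | nil => exact absurd rfl hne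
  | cons b l =>
      show ((a :: (b :: l).dropLast).reverse).getLastD d = a
      rw [List.reverse_cons, List.getLastD_concat]

lemma chain_rev {S : Set G} (hsym : ∀ g ∈ S, g⁻¹ ∈ S) :
    ∀ (c : List G) (a : G), List.Chain (fun u v => u⁻¹ * v ∈ S) a c →
      List.Chain (fun u v => u⁻¹ * v ∈ S) (c.getLastD a) ((a :: c).dropLast.reverse) := by
  intro c
  induction c with
  | nil => intro a _; exact List.Chain.nil
  | cons b c ih =>
      intro a hch
      rcases List.chain_cons.mp hch with ⟨h1, h2⟩
      have hstep : (a :: b :: c).dropLast.reverse = ((b :: c).dropLast.reverse) ++ [a] := by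
        show ((a :: (b :: c).dropLast)).reverse = _
        rw [List.reverse_cons]
      rw [hstep, List.getLastD_cons]
      refine chain_snoc (ih b h2) ?_
      have hlastrev : ((b :: c).dropLast.reverse).getLastD (c.getLastD b) = b := by
        cases hc : c with
        | nil => simp
        | cons c₁ c' => exact rev_getLastD _ _ (by simp) _
      rw [hlastrev]
      have : (a⁻¹ * b)⁻¹ ∈ S := hsym _ h1
      simpa using this

end Reversal

section Dyn

variable {X G : Type*} [TopologicalSpace X] [TopologicalSpace G] [CommGroup G]
  [IsTopologicalGroup G] [CompactSpace G] [T2Space G]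
variable {k : ℕ} {p : X → G} {μ : (Fin k → G) → G}

lemma chain_append' {α : Type*} {R : α → α → Prop} :
    ∀ (c : List α) (a : α) (c' : List α), List.Chain R a c → List.Chain R (c.getLastD a) c' →
      List.Chain R a (c ++ c') := by
  intro c
  induction c with
  | nil => intro a c' _ h2; exact h2
  | cons b c ih =>
      intro a c' h1 h2
      rcases List.chain_cons.mp h1 with ⟨hab, hbc⟩
      rw [List.getLastD_cons] at h2
      exact List.chain_cons.mpr ⟨hab, ih b c' hbc h2⟩

lemma getLastD_append {α : Type*} :
    ∀ (c c' : List α), c' ≠ [] → ∀ d, (c ++ c').getLastD d = c'.getLastD d := by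
  intro c
  induction c with
  | nil => intro c' _ d; rfl
  | cons a c ih =>
      intro c' hne d
      rw [List.cons_append, List.getLastD_cons, ih c' hne a]
      exact getLastD_ne_nil d c' hne a

lemma steps_axis {G : Type*} {m : ℕ} (h : (Fin m → ℕ) → G) (t : Fin m → ℕ) (d : Fin m)
    (dflt : G) (L : List G) (hval : ∀ s, s < L.length → h (addN t d (s + 1)) = L.getD s dflt) :
    steps h t (List.replicate L.length d) = L := by
  rw [steps_replicate]
  have h1 : ∀ s ∈ List.range L.length, h (addN t d (s + 1)) = L.getD s dflt :=
    fun s hs => hval s (List.mem_range.mp hs)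
  rw [List.map_congr_left h1]
  exact bridge dflt L

lemma walk_bridge (c : List G) :
    (List.range c.length).map (fun s => ((1 : G) :: c).getD (s + 1) 1) = c := by
  have h : (fun s => ((1 : G) :: c).getD (s + 1) 1) = fun s => c.getD s 1 := by
    funext s; rw [List.getD_cons_succ]
  rw [h]
  exact bridge 1 c

lemma swap_of_block (P : Pack k p μ) (hk1 : 1 ≤ k) {m : ℕ} (h : (Fin m → ℕ) → G)
    (hfine : ∀ t d, (h t)⁻¹ * h (bump t d) ∈ P.U) :
    ∀ (y : X) (t) (d₁ d₂ : Fin m), p y = h t →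
      P.hop (P.hop y (h (bump t d₁))) (h (bump (bump t d₁) d₂))
        = P.hop (P.hop y (h (bump t d₂))) (h (bump (bump t d₂) d₁)) := by
  intro y t d₁ d₂ hy
  have hb := P.block y [h (bump t d₁), h (bump (bump t d₁) d₂)]
    [h (bump t d₂), h (bump (bump t d₂) d₁)]
    (by simp; omega) (by simp; omega)
    (List.chain_cons.mpr ⟨by rw [hy]; exact hfine t d₁,
      List.chain_cons.mpr ⟨hfine (bump t d₁) d₂, List.Chain.nil⟩⟩)
    (List.chain_cons.mpr ⟨by rw [hy]; exact hfine t d₂,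
      List.chain_cons.mpr ⟨hfine (bump t d₂) d₁, List.Chain.nil⟩⟩)
    (by rw [List.getLastD_cons, List.getLastD_cons, List.getLastD_cons, List.getLastD_cons]
        simp only [List.getLastD]
        rw [bump_comm])
  simpa using hb

lemma comm_loops (P : Pack k p μ) (hk1 : 1 ≤ k) (c c' : List G)
    (hc : List.Chain (fun a b => a⁻¹ * b ∈ P.U) 1 c) (hcl : c.getLastD 1 = 1)
    (hc' : List.Chain (fun a b => a⁻¹ * b ∈ P.U) 1 c') (hcl' : c'.getLastD 1 = 1) :
    ∀ x : X, p x = 1 → (c ++ c').foldl P.hop x = (c' ++ c).foldl P.hop x := by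
  intro x hx
  set cf : ℕ → G := fun s => ((1 : G) :: c).getD s 1 with hcf
  set cf' : ℕ → G := fun s => ((1 : G) :: c').getD s 1 with hcf'
  set h₂ : (Fin 2 → ℕ) → G := fun t => cf (t 0) * cf' (t 1) with hh₂
  have hrat : ∀ s, (cf s)⁻¹ * cf (s + 1) ∈ P.U := walk_ratio P.Uone c 1 hc hcl
  have hrat' : ∀ s, (cf' s)⁻¹ * cf' (s + 1) ∈ P.U := walk_ratio P.Uone c' 1 hc' hcl'
  have hcan : ∀ a b z : G, (a * z)⁻¹ * (b * z) = a⁻¹ * b := by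
    intro a b z
    simp [mul_inv_rev, mul_comm, mul_left_comm, mul_assoc]
  have hcan' : ∀ a b z : G, (z * a)⁻¹ * (z * b) = a⁻¹ * b := by
    intro a b z; rw [mul_comm z a, mul_comm z b]; exact hcan a b z
  have hfine : ∀ t d, (h₂ t)⁻¹ * h₂ (bump t d) ∈ P.U := by
    intro t d
    fin_cases d
    · have hb0 : bump t 0 0 = t 0 + 1 := by simp [bump]
      have hb1 : bump t 0 1 = t 1 := by simp [bump]
      show (cf (t 0) * cf' (t 1))⁻¹ * (cf (bump t 0 0) * cf' (bump t 0 1)) ∈ P.U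
      rw [hb0, hb1, hcan]
      exact hrat (t 0)
    · have hb0 : bump t 1 0 = t 0 := by simp [bump]
      have hb1 : bump t 1 1 = t 1 + 1 := by simp [bump]
      show (cf (t 0) * cf' (t 1))⁻¹ * (cf (bump t 1 0) * cf' (bump t 1 1)) ∈ P.U
      rw [hb0, hb1, hcan']
      exact hrat' (t 1)
  have hswap := swap_of_block P hk1 h₂ hfine
  have hx2 : p x = h₂ (fun _ => 0) := by
    show p x = cf 0 * cf' 0
    simp only [hcf, hcf', List.getD_cons_zero]
    rw [hx, one_mul]
  have key := perm_transport p P.hop P.U h₂ P.hop_p hfine hswap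
    (List.perm_append_comm (l₁ := List.replicate c.length (0 : Fin 2))
      (l₂ := List.replicate c'.length (1 : Fin 2)))
    (fun _ => 0) x hx2
  have hge : ∀ s, c.length ≤ s → cf s = 1 := fun s hs => walk_ge c hcl s hs
  have hge' : ∀ s, c'.length ≤ s → cf' s = 1 := fun s hs => walk_ge c' hcl' s hs
  have hcf0 : cf 0 = 1 := by simp [hcf]
  have hcf'0 : cf' 0 = 1 := by simp [hcf']
  have hcfs : ∀ s, cf (s + 1) = c.getD s 1 := fun s => by simp [hcf, List.getD_cons_succ]
  have hcf's : ∀ s, cf' (s + 1) = c'.getD s 1 := fun s => by simp [hcf', List.getD_cons_succ]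
  -- evaluation of a two-block word
  have heval : ∀ (L L' : List G) (F F' : ℕ → G) (dd dd' : Fin 2), dd' ≠ dd →
      (∀ t, h₂ t = F (t dd) * F' (t dd')) →
      F 0 = 1 → F' 0 = 1 →
      (∀ s, F (s + 1) = L.getD s 1) → (∀ s, F' (s + 1) = L'.getD s 1) →
      (∀ s, L.length ≤ s → F s = 1) →
      steps h₂ (fun _ => 0) (List.replicate L.length dd ++ List.replicate L'.length dd')
        = L ++ L' := by
    intro L L' F F' dd dd' hne hsplit hF0 hF'0 hFs hF's hFge
    rw [steps_append]
    have e1 : steps h₂ (fun _ => 0) (List.replicate L.length dd) = L := by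
      apply steps_axis
      intro s _
      rw [hsplit]
      have ha : addN (fun _ => 0) dd (s + 1) dd = s + 1 := by simp [addN]
      have hb : addN (fun _ => 0) dd (s + 1) dd' = 0 := by simp [addN, hne]
      rw [ha, hb, hF'0, mul_one, hFs]
    rw [e1]
    have hpos : posOf (fun _ => 0) (List.replicate L.length dd) =
        fun j : Fin 2 => if j = dd then L.length else 0 := by
      funext j
      simp only [posOf, List.count_replicate, zero_add]
      by_cases hj : j = dd
      · simp [hj]
      · simp [hj, Ne.symm hj]
    rw [hpos]
    have e2 : steps h₂ (fun j : Fin 2 => if j = dd then L.length else 0)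
        (List.replicate L'.length dd') = L' := by
      apply steps_axis
      intro s _
      rw [hsplit]
      have ha : addN (fun j : Fin 2 => if j = dd then L.length else 0) dd' (s + 1) dd
          = L.length := by simp [addN, Ne.symm hne]
      have hb : addN (fun j : Fin 2 => if j = dd then L.length else 0) dd' (s + 1) dd'
          = s + 1 := by simp [addN, hne]
      rw [ha, hb, hFge L.length le_rfl, one_mul, hF's]
    rw [e2]
  have e₁ := heval c c' cf cf' 0 1 (by decide) (fun t => rfl) hcf0 hcf'0 hcfs hcf's hge
  have e₂ := heval c' c cf' cf 1 0 (by decide)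
    (fun t => by show cf (t 0) * cf' (t 1) = cf' (t 1) * cf (t 0); rw [mul_comm])
    hcf'0 hcf0 hcf's hcfs hge'
  rw [e₁, e₂] at key
  exact key

lemma reach (P : Pack k p μ) (hpc : Continuous p) [ConnectedSpace X] :
    ∀ x y : X, ∃ c : List G, List.Chain (fun a b => a⁻¹ * b ∈ P.Vm) (p x) c ∧
      c.getLastD (p x) = p y ∧ c.foldl P.hop x = y := by
  intro x y
  set A := {y : X | ∃ c : List G, List.Chain (fun a b => a⁻¹ * b ∈ P.Vm) (p x) c ∧
      c.getLastD (p x) = p y ∧ c.foldl P.hop x = y} with hAdef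
  have hxA : x ∈ A := ⟨[], List.Chain.nil, rfl, rfl⟩
  have hball : ∀ y : X, IsOpen {z : X | (p y)⁻¹ * p z ∈ P.Vm} := by
    intro y
    have : Continuous fun z : X => (p y)⁻¹ * p z := continuous_const.mul hpc
    exact this.isOpen_preimage _ P.Vmopen
  have hopen : IsOpen A := by
    rw [isOpen_iff_forall_mem_open]
    intro y hy
    obtain ⟨N, hNo, hyN, hNprop⟩ := P.nbhd y
    refine ⟨N ∩ {z : X | (p y)⁻¹ * p z ∈ P.Vm}, ?_, hNo.inter (hball y), hyN, by
      show (p y)⁻¹ * p y ∈ P.Vm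
      simpa using P.Vmone⟩
    rintro z ⟨hzN, hzV⟩
    obtain ⟨c, hch, hlast, hfold⟩ := hy
    refine ⟨c ++ [p z], chain_snoc hch (by rw [hlast]; exact hzV),
      by rw [List.getLastD_concat], ?_⟩
    rw [List.foldl_append, hfold]
    exact hNprop z hzN (P.VmU hzV)
  have hclosed : IsClosed A := by
    rw [← isOpen_compl_iff, isOpen_iff_forall_mem_open]
    intro y hy
    obtain ⟨N, hNo, hyN, hNprop⟩ := P.nbhd y
    refine ⟨N ∩ {z : X | (p y)⁻¹ * p z ∈ P.Vm}, ?_, hNo.inter (hball y), hyN, by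
      show (p y)⁻¹ * p y ∈ P.Vm
      simpa using P.Vmone⟩
    rintro z ⟨hzN, hzV⟩
    intro hzA
    apply hy
    obtain ⟨c, hch, hlast, hfold⟩ := hzA
    have h1 : P.hop y (p z) = z := hNprop z hzN (P.VmU hzV)
    have h2 : P.hop z (p y) = y := by
      have := P.hop_inv y (p z) (P.VmU hzV)
      rw [h1] at this
      exact this
    refine ⟨c ++ [p y], chain_snoc hch ?_, by rw [List.getLastD_concat], ?_⟩
    · rw [hlast]
      have := P.Vmsymm _ hzV
      simpa using this
    · rw [List.foldl_append, hfold]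
      exact h2
  have hAuniv : A = Set.univ := IsClopen.eq_univ ⟨hclosed, hopen⟩ ⟨x, hxA⟩
  have : y ∈ A := by rw [hAuniv]; trivial
  exact this

def diagword (k : ℕ) : ℕ → List (Fin k)
  | 0 => []
  | M + 1 => List.finRange k ++ diagword k M

def stairword {k : ℕ} (N : ℕ) : List (Fin k) → List (Fin k)
  | [] => []
  | i :: l => List.replicate N i ++ stairword N l

lemma count_finRange {k : ℕ} (j : Fin k) : List.count j (List.finRange k) = 1 :=
  List.count_eq_one_of_mem (List.nodup_finRange k) (List.mem_finRange j)

lemma count_diagword {k : ℕ} (M : ℕ) (j : Fin k) : List.count j (diagword k M) = M := by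
  induction M with
  | zero => rfl
  | succ M ih =>
      show List.count j (List.finRange k ++ diagword k M) = M + 1
      rw [List.count_append, ih, count_finRange]
      omega

lemma count_stairword {k : ℕ} (N : ℕ) :
    ∀ (l : List (Fin k)) (j : Fin k), List.count j (stairword N l) = N * List.count j l := by
  intro l
  induction l with
  | nil => intro j; simp [stairword]
  | cons i l ih =>
      intro j
      show List.count j (List.replicate N i ++ stairword N l) = _
      rw [List.count_append, List.count_replicate, ih, List.count_cons]
      by_cases hj : j = i
      · subst hj; simp; ring
      · simp [hj, Ne.symm hj]

lemma perm_diag_stair {k : ℕ} (N : ℕ) :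
    (diagword k N).Perm (stairword N (List.finRange k)) := by
  classical
  rw [List.perm_iff_count]
  intro j
  rw [count_diagword, count_stairword, count_finRange, mul_one]

lemma main_identity (P : Pack k p μ) (hμ : IsMean k μ) (hk : 2 ≤ k)
    (ℓ : List G) (hch : List.Chain (fun a b => a⁻¹ * b ∈ P.Vm) 1 ℓ)
    (hlast : ℓ.getLastD 1 = 1) :
    ∃ mlist : List G,
      (List.Chain (fun a b => a⁻¹ * b ∈ P.U) 1 mlist ∧ mlist.getLastD 1 = 1) ∧
      ∀ x : X, p x = 1 → ℓ.foldl P.hop x = (fun z => mlist.foldl P.hop z)^[k] x := by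
  classical
  set i₀ : Fin k := ⟨0, by omega⟩ with hi₀
  set N := ℓ.length with hN
  set lf : ℕ → G := fun s => ((1 : G) :: ℓ).getD s 1 with hlf
  set h : (Fin k → ℕ) → G := fun t => μ (fun i => lf (t i)) with hh
  have hdiagval : ∀ n, h (fun _ => n) = lf n := fun n => hμ.2.2 (lf n)
  have hratV : ∀ s, (lf s)⁻¹ * lf (s + 1) ∈ P.Vm := walk_ratio P.Vmone ℓ 1 hch hlast
  have hge : ∀ s, N ≤ s → lf s = 1 := fun s hs => walk_ge ℓ hlast s hs
  have hlf0 : lf 0 = 1 := by simp [hlf]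
  have hfine : ∀ t d, (h t)⁻¹ * h (bump t d) ∈ P.U := by
    intro t d
    apply P.uc
    intro i
    by_cases hi : i = d
    · subst hi; simp only [bump, if_pos rfl]; exact hratV (t i)
    · simp only [bump, if_neg hi]
      simpa using P.Vmone
  have hdfine : ∀ t : Fin k → ℕ, (h t)⁻¹ * h (fun i => t i + 1) ∈ P.U := by
    intro t
    apply P.uc
    intro i
    exact hratV (t i)
  have hswap := swap_of_block P (by omega) h hfine
  -- the single-slot loop
  set mlist : List G := (List.range N).map (fun s => μ (fun j => if j = i₀ then lf (s + 1) else 1))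
    with hmlist
  have hmlen : mlist.length = N := by simp [hmlist]
  have hmget : ∀ s, s < N → mlist.getD s 1 = μ (fun j => if j = i₀ then lf (s + 1) else 1) := by
    intro s hs
    rw [hmlist, List.getD_eq_getElem _ _ (by simpa using hs)]
    simp
  -- axis blocks all equal mlist
  have hm_eq : ∀ (t : Fin k → ℕ) (i : Fin k), (∀ j, lf (t j) = 1) → t i = 0 →
      steps h t (List.replicate N i) = mlist := by
    intro t i hall hti
    rw [← hmlen]
    apply steps_axis h t i 1
    intro s hs
    rw [hmget s (by rw [← hmlen]; exact hs)]
    have hfun : (fun j => lf (addN t i (s + 1) j))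
        = (fun j => if j = i₀ then lf (s + 1) else 1) ∘ (Equiv.swap i₀ i) := by
      funext j
      simp only [Function.comp_apply, addN]
      by_cases hj : j = i
      · subst hj
        rw [if_pos rfl, Equiv.swap_apply_right, if_pos rfl, hti, zero_add]
      · rw [if_neg hj, hall j]
        by_cases hj0 : j = i₀
        · subst hj0
          rw [Equiv.swap_apply_left]
          have hii : i ≠ i₀ := fun hii => hj hii.symm
          rw [if_neg hii]
        · rw [Equiv.swap_apply_of_ne_of_ne hj0 hj, if_neg hj0]
    show μ (fun j => lf (addN t i (s + 1) j)) = _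
    rw [hfun]
    exact hμ.2.1 _ _
  -- mlist is a U-fine loop at 1
  have hmzero : ∀ j : Fin k, lf ((fun _ => (0:ℕ)) j) = 1 := fun _ => hlf0
  have hmsteps : mlist = steps h (fun _ => 0) (List.replicate N i₀) :=
    (hm_eq (fun _ => 0) i₀ hmzero rfl).symm
  have hmchain : List.Chain (fun a b => a⁻¹ * b ∈ P.U) 1 mlist := by
    rw [hmsteps]
    have := chain_steps h hfine (List.replicate N i₀) (fun _ => 0)
    rwa [hdiagval 0, hlf0] at this
  have hmlast : mlist.getLastD 1 = 1 := by
    cases hNz : N with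
    | zero =>
        have : mlist = [] := by rw [← List.length_eq_zero_iff, hmlen, hNz]
        rw [this]; rfl
    | succ n =>
        have hne : mlist ≠ [] := by
          intro hcon
          have := hmlen
          rw [hcon] at this
          simp [hNz] at this
        rw [getLastD_ne_nil (h (fun _ => 0)) mlist hne 1, hmsteps,
          getLastD_steps h (List.replicate N i₀) (fun _ => 0)]
        have hfun : (fun j => lf (posOf (fun _ => 0) (List.replicate N i₀) j)) = fun _ => (1:G) := by
          funext j
          simp only [posOf, List.count_replicate, zero_add]
          by_cases hj : i₀ = j
          · simp [hj]
            exact hge N le_rfl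
          · have : (i₀ == j) = false := by simpa using hj
            rw [this]
            simpa using hlf0
        show μ (fun j => lf (posOf (fun _ => 0) (List.replicate N i₀) j)) = 1
        rw [hfun]
        exact hμ.2.2 1
  refine ⟨mlist, ⟨hmchain, hmlast⟩, ?_⟩
  -- diagonal evaluation
  have diag_eval : ∀ (M n : ℕ) (x : X), p x = lf n →
      (steps h (fun _ => n) (diagword k M)).foldl P.hop x
        = ((List.range M).map (fun s => lf (n + s + 1))).foldl P.hop x := by
    intro M
    induction M with
    | zero => intro n x _; rfl
    | succ M ih =>
        intro n x hx
        have hpxh : p x = h (fun _ => n) := by rw [hx, hdiagval n]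
        show (steps h (fun _ => n) (List.finRange k ++ diagword k M)).foldl P.hop x = _
        rw [steps_append, List.foldl_append]
        have hposd : posOf (fun _ => n) (List.finRange k) = fun _ : Fin k => n + 1 := by
          funext j
          simp [posOf, count_finRange]
        set B := steps h (fun _ => n) (List.finRange k) with hB
        have hBlen : B.length = k := by rw [hB, steps_length, List.length_finRange]
        have hBchain : List.Chain (fun a b => a⁻¹ * b ∈ P.U) (p x) B := by
          rw [hpxh]
          exact chain_steps h hfine (List.finRange k) (fun _ => n)
        have hBlast : B.getLastD (p x) = lf (n + 1) := by
          rw [hpxh, hB, getLastD_steps h (List.finRange k) (fun _ => n), hposd]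
          exact hdiagval (n + 1)
        have hstep1 : (p x)⁻¹ * lf (n + 1) ∈ P.U := by
          rw [hx]
          exact P.VmU (hratV n)
        have hBfold : B.foldl P.hop x = P.hop x (lf (n + 1)) := by
          have hblock := P.block x B [lf (n + 1)] (by rw [hBlen]; omega) (by simp) hBchain
            (List.chain_cons.mpr ⟨hstep1, List.Chain.nil⟩)
            (by rw [hBlast]; rfl)
          simpa using hblock
        rw [hBfold, hposd]
        have hx' : p (P.hop x (lf (n + 1))) = lf (n + 1) := P.hop_p x _ hstep1
        have hrec := ih (n + 1) (P.hop x (lf (n + 1))) hx'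
        rw [hrec]
        rw [List.range_succ_eq_map, List.map_cons, List.foldl_cons, List.map_map]
        have hmc : List.map ((fun s => lf (n + s + 1)) ∘ Nat.succ) (List.range M)
            = List.map (fun s => lf (n + 1 + s + 1)) (List.range M) := by
          apply List.map_congr_left
          intro s _
          show lf (n + (s + 1) + 1) = lf (n + 1 + s + 1)
          congr 1
          omega
        rw [hmc]
  -- staircase evaluation
  have stair_eval : ∀ (l : List (Fin k)) (t : Fin k → ℕ) (x : X), p x = 1 →
      (∀ j, lf (t j) = 1) → (∀ j ∈ l, t j = 0) → l.Nodup →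
      (steps h t (stairword N l)).foldl P.hop x
        = (fun z => mlist.foldl P.hop z)^[l.length] x := by
    intro l
    induction l with
    | nil => intro t x _ _ _ _; rfl
    | cons i l ih =>
        intro t x hx hall h0 hnd
        show (steps h t (List.replicate N i ++ stairword N l)).foldl P.hop x = _
        rw [steps_append, List.foldl_append, hm_eq t i hall (h0 i List.mem_cons_self)]
        set t' := posOf t (List.replicate N i) with ht'def
        have ht' : ∀ j, t' j = if j = i then t j + N else t j := by
          intro j
          simp only [ht'def, posOf, List.count_replicate]
          by_cases hj : j = i
          · simp [hj]
          · simp [hj, Ne.symm hj]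
        have hall' : ∀ j, lf (t' j) = 1 := by
          intro j
          rw [ht' j]
          by_cases hj : j = i
          · rw [if_pos hj]; exact hge _ (by omega)
          · rw [if_neg hj]; exact hall j
        have h0' : ∀ j ∈ l, t' j = 0 := by
          intro j hj
          have hji : j ≠ i := by
            rintro rfl
            exact (List.nodup_cons.mp hnd).1 hj
          rw [ht' j, if_neg hji]
          exact h0 j (List.mem_cons_of_mem i hj)
        have hx' : p (mlist.foldl P.hop x) = 1 := by
          have := TT_p p P.hop P.U P.hop_p mlist x (by rw [hx]; exact hmchain)
          rw [this, hx, hmlast]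
        have hrec := ih t' (mlist.foldl P.hop x) hx' hall' h0' (List.nodup_cons.mp hnd).2
        rw [hrec, List.length_cons]
        exact (Function.iterate_succ_apply (fun z => mlist.foldl P.hop z) l.length x).symm
  -- put everything together
  intro x hx
  have hpxh : p x = h (fun _ => 0) := by rw [hx, hdiagval 0, hlf0]
  have hperm := perm_transport p P.hop P.U h P.hop_p hfine hswap
    (perm_diag_stair (k := k) N) (fun _ => 0) x hpxh
  have hdiag := diag_eval N 0 x (by rw [hx, hlf0])
  have hstair := stair_eval (List.finRange k) (fun _ => 0) x hx
    (fun _ => hlf0) (fun _ _ => rfl) (List.nodup_finRange k)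
  rw [List.length_finRange] at hstair
  have hbridge : (List.range N).map (fun s => lf (0 + s + 1)) = ℓ := by
    have : (fun s => lf (0 + s + 1)) = fun s => ((1:G) :: ℓ).getD (s + 1) 1 := by
      funext s
      simp [hlf]
    rw [this, hN]
    exact walk_bridge ℓ
  rw [hbridge] at hdiag
  rw [← hdiag, hperm, hstair]

lemma no_mean_aux [ConnectedSpace X] (hk : 2 ≤ k) (hp : IsCoveringOfDegree k p)
    (hμ : IsMean k μ) (P : Pack k p μ) : False := by
  classical
  set F := {x : X // p x = 1} with hF
  haveI : Fintype F := Fintype.ofEquiv (Fin k) P.fib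
  have hcardF : Fintype.card F = k := by
    have := Fintype.card_congr P.fib.symm
    rwa [Fintype.card_fin] at this
  have fact : ∀ (c : List G), List.Chain (fun a b => a⁻¹ * b ∈ P.U) 1 c → c.getLastD 1 = 1 →
      ∀ x : F, p (c.foldl P.hop x.1) = 1 := by
    intro c h1 h2 x
    have := TT_p p P.hop P.U P.hop_p c x.1 (by rw [x.2]; exact h1)
    rw [this, x.2, h2]
  have inj : ∀ (c : List G) (h1 : List.Chain (fun a b => a⁻¹ * b ∈ P.U) 1 c)
      (h2 : c.getLastD 1 = 1),
      Function.Injective (fun x : F => (⟨c.foldl P.hop x.1, fact c h1 h2 x⟩ : F)) := by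
    intro c h1 h2 x y hxy
    have hval : c.foldl P.hop x.1 = c.foldl P.hop y.1 := congrArg Subtype.val hxy
    have hx' := rev_aux p P.hop P.U P.hop_p P.hop_inv c x.1 (by rw [x.2]; exact h1)
    rw [x.2] at hx'
    have hy' := rev_aux p P.hop P.U P.hop_p P.hop_inv c y.1 (by rw [y.2]; exact h1)
    rw [y.2] at hy'
    apply Subtype.ext
    rw [← hx', ← hy', hval]
  have mk : ∀ (c : List G) (h1 : List.Chain (fun a b => a⁻¹ * b ∈ P.U) 1 c)
      (h2 : c.getLastD 1 = 1),
      ∃ σ : Equiv.Perm F, ∀ x : F, (σ x : X) = c.foldl P.hop x.1 := by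
    intro c h1 h2
    have hbij := Finite.injective_iff_bijective.mp (inj c h1 h2)
    exact ⟨Equiv.ofBijective _ hbij, fun x => rfl⟩
  set Scar : Set (Equiv.Perm F) := {σ | ∃ c : List G,
      List.Chain (fun a b => a⁻¹ * b ∈ P.U) 1 c ∧ c.getLastD 1 = 1 ∧
      ∀ x : F, (σ x : X) = c.foldl P.hop x.1} with hScar
  have hmul : ∀ σ τ : Equiv.Perm F, σ ∈ Scar → τ ∈ Scar → σ * τ ∈ Scar := by
    rintro σ τ ⟨cσ, hσ1, hσ2, hσ3⟩ ⟨cτ, hτ1, hτ2, hτ3⟩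
    refine ⟨cτ ++ cσ, ?_, ?_, ?_⟩
    · exact chain_append' cτ 1 cσ hτ1 (by rw [hτ2]; exact hσ1)
    · cases hcσ : cσ with
      | nil => rw [List.append_nil]; exact hτ2
      | cons a' l' =>
          rw [getLastD_append cτ (a' :: l') (by simp) 1, ← hcσ]
          exact hσ2
    · intro x
      show (σ (τ x) : X) = _
      rw [List.foldl_append, hσ3 (τ x), hτ3 x]
  have hone : (1 : Equiv.Perm F) ∈ Scar := ⟨[], List.Chain.nil, rfl, fun x => rfl⟩
  have hinv : ∀ σ : Equiv.Perm F, σ ∈ Scar → σ⁻¹ ∈ Scar := by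
    rintro σ ⟨c, h1, h2, h3⟩
    refine ⟨((1 : G) :: c).dropLast.reverse, ?_, ?_, ?_⟩
    · have := chain_rev P.Usymm c 1 h1
      rwa [h2] at this
    · cases hc : c with
      | nil => rfl
      | cons a' l' => exact rev_getLastD (a' :: l') 1 (by simp) 1
    · intro x
      set y := σ⁻¹ x with hy
      have hxy : σ y = x := σ.apply_symm_apply x
      have hfold : c.foldl P.hop y.1 = x.1 := by rw [← h3 y, hxy]
      have hrev := rev_aux p P.hop P.U P.hop_p P.hop_inv c y.1 (by rw [y.2]; exact h1)
      rw [y.2, hfold] at hrev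
      exact hrev.symm
  set S : Subgroup (Equiv.Perm F) :=
    { carrier := Scar
      mul_mem' := fun ha hb => hmul _ _ ha hb
      one_mem' := hone
      inv_mem' := fun ha => hinv _ ha } with hSdef
  have hcomm : ∀ σ τ : Equiv.Perm F, σ ∈ Scar → τ ∈ Scar → σ * τ = τ * σ := by
    rintro σ τ ⟨cσ, hσ1, hσ2, hσ3⟩ ⟨cτ, hτ1, hτ2, hτ3⟩
    apply Equiv.ext
    intro x
    apply Subtype.ext
    show ((σ (τ x)) : X) = ((τ (σ x)) : X)
    rw [hσ3 (τ x), hτ3 x, hτ3 (σ x), hσ3 x, ← List.foldl_append, ← List.foldl_append]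
    exact comm_loops P (by omega) cτ cσ hτ1 hτ2 hσ1 hσ2 x.1 x.2
  have htrans : ∀ x y : F, ∃ σ, σ ∈ Scar ∧ σ x = y := by
    intro x y
    obtain ⟨c, hch, hlastc, hfold⟩ := reach P hp.1 x.1 y.1
    rw [x.2] at hch hlastc
    rw [y.2] at hlastc
    have hch1 : List.Chain (fun a b => a⁻¹ * b ∈ P.U) 1 c :=
      List.Chain.imp (fun a b hab => P.VmU hab) hch
    obtain ⟨σ, hσ⟩ := mk c hch1 hlastc
    refine ⟨σ, ⟨c, hch1, hlastc, hσ⟩, ?_⟩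
    apply Subtype.ext
    rw [hσ x, hfold]
  set a : F := P.fib ⟨0, by omega⟩ with ha
  set b : F := P.fib ⟨1, by omega⟩ with hb
  have hab : a ≠ b := by
    intro hcon
    have := P.fib.injective hcon
    simp at this
  obtain ⟨c, hch, hlastc, hfold⟩ := reach P hp.1 a.1 b.1
  rw [a.2] at hch hlastc
  rw [b.2] at hlastc
  obtain ⟨mlist, ⟨hm1, hm2⟩, hmain⟩ := main_identity P hμ hk c hch hlastc
  obtain ⟨σm, hσm⟩ := mk mlist hm1 hm2
  have hσmS : σm ∈ Scar := ⟨mlist, hm1, hm2, hσm⟩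
  have hpow : ∀ (n : ℕ) (x : F), ((σm ^ n) x : X) = (fun z => mlist.foldl P.hop z)^[n] x.1 := by
    intro n
    induction n with
    | zero => intro x; rfl
    | succ n ih =>
        intro x
        rw [pow_succ]
        show ((σm ^ n) (σm x) : X) = _
        rw [Function.iterate_succ_apply, ih (σm x)]
        congr 1
        exact hσm x
  haveI : Fintype S := Fintype.ofFinite S
  have hev : Function.Bijective (fun σ : S => (σ : Equiv.Perm F) a) := by
    constructor
    · rintro ⟨σ, hσ⟩ ⟨τ, hτ⟩ hστ
      simp only at hστ
      apply Subtype.ext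
      apply Equiv.ext
      intro y
      obtain ⟨γ, hγS, hγ⟩ := htrans a y
      have h1 : σ * γ = γ * σ := hcomm σ γ hσ hγS
      have h2 : τ * γ = γ * τ := hcomm τ γ hτ hγS
      calc σ y = σ (γ a) := by rw [hγ]
        _ = (σ * γ) a := rfl
        _ = (γ * σ) a := by rw [h1]
        _ = γ (σ a) := rfl
        _ = γ (τ a) := by rw [hστ]
        _ = (γ * τ) a := rfl
        _ = (τ * γ) a := by rw [← h2]
        _ = τ (γ a) := rfl
        _ = τ y := by rw [hγ]
    · intro y
      obtain ⟨σ, hσS, hσ⟩ := htrans a y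
      exact ⟨⟨σ, hσS⟩, hσ⟩
  have hcardS : Fintype.card S = k := by
    rw [Fintype.card_congr (Equiv.ofBijective _ hev), hcardF]
  have hσmk : (⟨σm, hσmS⟩ : S) ^ k = 1 := by
    rw [← hcardS]
    exact pow_card_eq_one
  have hσmk' : σm ^ k = 1 := by
    have := congrArg (Subtype.val) hσmk
    simpa using this
  have hfinal : a.1 = b.1 := by
    have h1 := hmain a.1 a.2
    rw [hfold] at h1
    have h2 := hpow k a
    rw [hσmk'] at h2
    simp only [Equiv.Perm.coe_one, id_eq] at h2
    rw [← h2] at h1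
    exact h1.symm
  exact hab (Subtype.ext hfinal)

end Dyn

end NoMeanAux


/-- If there is a `k`-sheeted covering map (`k ≥ 2`) from a connected Hausdorff space
onto a compact connected abelian Hausdorff group `G`, then `G` admits no `k`-mean. -/
theorem no_mean_of_covering
    {X G : Type*} [TopologicalSpace G] [CommGroup G] [IsTopologicalGroup G]
    [CompactSpace G] [ConnectedSpace G] [T2Space G]
    [TopologicalSpace X] [ConnectedSpace X] [T2Space X]
    (k : ℕ) (hk : 2 ≤ k) (p : X → G) (hp : IsCoveringOfDegree k p) :
    ¬ ∃ μ : (Fin k → G) → G, IsMean k μ := by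
  rintro ⟨μ, hμ⟩
  obtain ⟨P⟩ := NoMeanAux.exists_pack hp μ hμ.1
  exact NoMeanAux.no_mean_aux hk hp hμ P
end

section
/- Let G be a compact connected abelian Hausdorff topological group, let k be a positive integer, and let f₁, …, f_k : G → ℂ be continuous functions such that for every g ∈ G the complex polynomial w^k + f₁(g)w^{k−1} + … + f_k(g) has no multiple roots in ℂ (i.e., it has k distinct complex roots). Let X = {(g,z) ∈ G × ℂ : z^k + f₁(g)z^{k−1} + … + f_k(g) = 0} with the subspace topology of G × ℂ. Then the projection p : X → G, (g,z) ↦ g, is a k-sheeted covering map. -/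
open Polynomial Finset in
lemma factor_of_roots {k : ℕ} (hk : 0 < k) (c r : Fin k → ℂ) (hr : Function.Injective r)
    (h : ∀ z : ℂ, z ^ k + ∑ i : Fin k, c i * z ^ (k - 1 - (i : ℕ)) = 0 ↔ ∃ j, z = r j) :
    ∀ z : ℂ, z ^ k + ∑ i : Fin k, c i * z ^ (k - 1 - (i : ℕ)) = ∏ j, (z - r j) := by
  set Q : ℂ[X] := X ^ k + ∑ i : Fin k, C (c i) * X ^ (k - 1 - (i : ℕ)) with hQ
  set R : ℂ[X] := ∏ j : Fin k, (X - C (r j)) with hR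
  have hQeval : ∀ z, Q.eval z = z ^ k + ∑ i : Fin k, c i * z ^ (k - 1 - (i : ℕ)) := by
    intro z; simp [hQ, eval_finset_sum]
  have hReval : ∀ z, R.eval z = ∏ j, (z - r j) := by intro z; simp [hR, eval_prod]
  have hTdeg : (∑ i : Fin k, C (c i) * X ^ (k - 1 - (i : ℕ)) : ℂ[X]).degree < (X ^ k : ℂ[X]).degree := by
    rw [degree_X_pow]
    refine lt_of_le_of_lt (degree_sum_le _ _) ?_
    rw [Finset.sup_lt_iff (by exact_mod_cast WithBot.bot_lt_coe k)]
    intro i _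
    refine lt_of_le_of_lt (degree_C_mul_X_pow_le _ _) ?_
    exact_mod_cast Nat.lt_of_le_of_lt (Nat.sub_le _ _) (Nat.sub_lt hk one_pos)
  have hQmonic : Q.Monic := (monic_X_pow k).add_of_left hTdeg
  have hQdeg : Q.degree = k := by
    rw [hQ, degree_add_eq_left_of_degree_lt hTdeg, degree_X_pow]
  have hRmonic : R.Monic := monic_prod_of_monic _ _ (fun j _ => monic_X_sub_C (r j))
  have hRdeg : R.degree = k := by
    rw [hR, degree_prod]
    simp [degree_X_sub_C]
  have hQR : Q = R := by
    by_contra hne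
    have hD : Q - R ≠ 0 := sub_ne_zero.2 hne
    have hdeg : (Q - R).degree < k := by
      rw [← hQdeg]
      exact degree_sub_lt (hQdeg.trans hRdeg.symm) hQmonic.ne_zero
        (by rw [hQmonic.leadingCoeff, hRmonic.leadingCoeff])
    have hnd : (Q - R).natDegree < Fintype.card (Fin k) := by
      rw [Fintype.card_fin]
      exact natDegree_lt_iff_degree_lt hD |>.2 (by exact_mod_cast hdeg)
    refine hD (eq_zero_of_natDegree_lt_card_of_eval_eq_zero _ hr ?_ hnd)
    intro j
    have h1 : Q.eval (r j) = 0 := by rw [hQeval]; exact (h (r j)).2 ⟨j, rfl⟩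
    have h2 : R.eval (r j) = 0 := by
      rw [hReval]
      exact Finset.prod_eq_zero (Finset.mem_univ j) (by ring)
    simp [eval_sub, h1, h2]
  intro z
  rw [← hQeval, hQR, hReval]

open Finset in

lemma root_bound {k : ℕ} (hk : 0 < k) (c : Fin k → ℂ) (z : ℂ)
    (hz : z ^ k + ∑ i : Fin k, c i * z ^ (k - 1 - (i : ℕ)) = 0) :
    ‖z‖ ≤ max 1 (∑ i, ‖c i‖) := by
  by_cases h1 : ‖z‖ ≤ 1
  · exact h1.trans (le_max_left _ _)
  push_neg at h1
  refine le_trans ?_ (le_max_right _ _)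
  have hzk : z ^ k = -∑ i : Fin k, c i * z ^ (k - 1 - (i : ℕ)) := by linear_combination hz
  have hb : ‖z‖ ^ k ≤ (∑ i, ‖c i‖) * ‖z‖ ^ (k - 1) := by
    calc ‖z‖ ^ k = ‖z ^ k‖ := (norm_pow _ _).symm
      _ = ‖∑ i : Fin k, c i * z ^ (k - 1 - (i : ℕ))‖ := by
          rw [hzk, norm_neg]
      _ ≤ ∑ i : Fin k, ‖c i * z ^ (k - 1 - (i : ℕ))‖ := norm_sum_le _ _
      _ ≤ ∑ i : Fin k, ‖c i‖ * ‖z‖ ^ (k - 1) := by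
          refine Finset.sum_le_sum fun i _ => ?_
          rw [norm_mul, norm_pow]
          exact mul_le_mul_of_nonneg_left
            (pow_le_pow_right₀ h1.le (Nat.sub_le _ _)) (norm_nonneg _)
      _ = (∑ i, ‖c i‖) * ‖z‖ ^ (k - 1) := by rw [Finset.sum_mul]
  have hpos : 0 < ‖z‖ ^ (k - 1) := pow_pos (lt_trans one_pos h1) _
  have hk' : ‖z‖ ^ k = ‖z‖ ^ (k - 1) * ‖z‖ := by
    rw [← pow_succ, Nat.sub_add_cancel hk]
  rw [hk', mul_comm (∑ i, ‖c i‖) _] at hb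
  exact le_of_mul_le_mul_left hb hpos

lemma diff_bound {k : ℕ} (c c' : Fin k → ℂ) (z : ℂ) (L : ℝ) (hL : 1 ≤ L)
    (hzL : ‖z‖ ≤ L) :
    ‖(z ^ k + ∑ i : Fin k, c i * z ^ (k - 1 - (i : ℕ)))
      - (z ^ k + ∑ i : Fin k, c' i * z ^ (k - 1 - (i : ℕ)))‖
      ≤ (∑ i, ‖c i - c' i‖) * L ^ (k - 1) := by
  have : (z ^ k + ∑ i : Fin k, c i * z ^ (k - 1 - (i : ℕ)))
      - (z ^ k + ∑ i : Fin k, c' i * z ^ (k - 1 - (i : ℕ)))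
      = ∑ i : Fin k, (c i - c' i) * z ^ (k - 1 - (i : ℕ)) := by
    simp only [sub_mul, Finset.sum_sub_distrib]; ring
  rw [this]
  calc ‖∑ i : Fin k, (c i - c' i) * z ^ (k - 1 - (i : ℕ))‖
      ≤ ∑ i : Fin k, ‖(c i - c' i) * z ^ (k - 1 - (i : ℕ))‖ := norm_sum_le _ _
    _ ≤ ∑ i : Fin k, ‖c i - c' i‖ * L ^ (k - 1) := by
        refine Finset.sum_le_sum fun i _ => ?_
        rw [norm_mul, norm_pow]
        refine mul_le_mul_of_nonneg_left ?_ (norm_nonneg _)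
        calc ‖z‖ ^ (k - 1 - (i : ℕ)) ≤ L ^ (k - 1 - (i : ℕ)) :=
              pow_le_pow_left₀ (norm_nonneg _) hzL _
          _ ≤ L ^ (k - 1) := pow_le_pow_right₀ hL (Nat.sub_le _ _)
    _ = (∑ i, ‖c i - c' i‖) * L ^ (k - 1) := by rw [Finset.sum_mul]

open Finset in
lemma key_local {G : Type*} [TopologicalSpace G]
    {k : ℕ} (hk : 0 < k) (f : Fin k → G → ℂ) (hf : ∀ i, Continuous (f i))
    (hsep : ∀ g : G, ∃ r : Fin k → ℂ, Function.Injective r ∧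
      ∀ z : ℂ, (z ^ k + ∑ i : Fin k, f i g * z ^ (k - 1 - (i : ℕ)) = 0 ↔ ∃ j, z = r j))
    (g₀ : G) (r : Fin k → ℂ) (hr : Function.Injective r)
    (hroot : ∀ z : ℂ, (z ^ k + ∑ i : Fin k, f i g₀ * z ^ (k - 1 - (i : ℕ)) = 0 ↔ ∃ j, z = r j))
    (ε : ℝ) (hε : 0 < ε) (hε3 : ∀ i j, i ≠ j → 3 * ε ≤ dist (r i) (r j)) :
    ∃ W : Set G, IsOpen W ∧ g₀ ∈ W ∧ ∀ g ∈ W,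
      (∀ z : ℂ, z ^ k + ∑ i : Fin k, f i g * z ^ (k - 1 - (i : ℕ)) = 0 →
        ∃ j, dist z (r j) < ε) ∧
      (∀ j, ∃ z : ℂ, z ^ k + ∑ i : Fin k, f i g * z ^ (k - 1 - (i : ℕ)) = 0 ∧
        dist z (r j) < ε) ∧
      (∀ j (z z' : ℂ), z ^ k + ∑ i : Fin k, f i g * z ^ (k - 1 - (i : ℕ)) = 0 →
        dist z (r j) < ε →
        z' ^ k + ∑ i : Fin k, f i g * z' ^ (k - 1 - (i : ℕ)) = 0 →
        dist z' (r j) < ε → z = z') := by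
  classical
  set S₀ : ℝ := ∑ i, ‖f i g₀‖ with hS₀
  set L : ℝ := max 1 (S₀ + 1) with hLdef
  have hL1 : (1 : ℝ) ≤ L := le_max_left _ _
  have hLpow : (0 : ℝ) < L ^ (k - 1) := pow_pos (lt_of_lt_of_le one_pos hL1) _
  set δ : ℝ := min 1 (ε ^ k / (2 * L ^ (k - 1))) with hδdef
  have hδpos : 0 < δ := lt_min one_pos (by positivity)
  have hδ1 : δ ≤ 1 := min_le_left _ _
  have hδL : δ * L ^ (k - 1) < ε ^ k := by
    have h2 : δ ≤ ε ^ k / (2 * L ^ (k - 1)) := min_le_right _ _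
    have : δ * L ^ (k - 1) ≤ ε ^ k / 2 := by
      rw [div_mul_eq_div_div] at h2
      calc δ * L ^ (k - 1) ≤ (ε ^ k / 2 / L ^ (k - 1)) * L ^ (k - 1) :=
            mul_le_mul_of_nonneg_right h2 hLpow.le
        _ = ε ^ k / 2 := div_mul_cancel₀ _ hLpow.ne'
    linarith [pow_pos hε k]
  refine ⟨{g | ∑ i, dist (f i g) (f i g₀) < δ}, ?_, ?_, ?_⟩
  · have hcont : Continuous fun g => ∑ i, dist (f i g) (f i g₀) :=
      continuous_finset_sum _ fun i _ => (hf i).dist continuous_const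
    exact isOpen_lt hcont continuous_const
  · simp [hδpos]
  intro g hg
  simp only [Set.mem_setOf_eq] at hg
  have hsum : ∑ i, ‖f i g - f i g₀‖ < δ := by
    simpa [Complex.dist_eq] using hg
  have hsumnn : ∀ (c : Fin k → ℂ), (0:ℝ) ≤ ∑ i, ‖c i‖ :=
    fun c => Finset.sum_nonneg fun i _ => norm_nonneg _
  -- all roots of P g, and all r j, have abs ≤ L
  have hfg_le : ∑ i, ‖f i g‖ ≤ S₀ + 1 := by
    have h1 : ∀ i : Fin k, ‖f i g‖ ≤ ‖f i g₀‖ + ‖f i g - f i g₀‖ := by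
      intro i
      calc ‖f i g‖ = ‖f i g₀ + (f i g - f i g₀)‖ := by ring_nf
        _ ≤ _ := norm_add_le _ _
    calc ∑ i, ‖f i g‖
        ≤ ∑ i, (‖f i g₀‖ + ‖f i g - f i g₀‖) :=
          Finset.sum_le_sum fun i _ => h1 i
      _ = S₀ + ∑ i, ‖f i g - f i g₀‖ := by rw [Finset.sum_add_distrib]
      _ ≤ S₀ + 1 := by linarith
  have hrootL : ∀ z : ℂ, z ^ k + ∑ i : Fin k, f i g * z ^ (k - 1 - (i : ℕ)) = 0 →
      ‖z‖ ≤ L := by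
    intro z hz
    exact (root_bound hk _ z hz).trans (max_le_max le_rfl hfg_le)
  have hrL : ∀ j, ‖r j‖ ≤ L := by
    intro j
    have : ‖r j‖ ≤ max 1 S₀ :=
      root_bound hk _ _ ((hroot (r j)).2 ⟨j, rfl⟩)
    exact this.trans (max_le_max le_rfl (by linarith))
  -- difference bound
  have hdiff : ∀ z : ℂ, ‖z‖ ≤ L →
      ‖(z ^ k + ∑ i : Fin k, f i g * z ^ (k - 1 - (i : ℕ)))
        - (z ^ k + ∑ i : Fin k, f i g₀ * z ^ (k - 1 - (i : ℕ)))‖ < ε ^ k := by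
    intro z hz
    calc ‖_‖ ≤ (∑ i, ‖f i g - f i g₀‖) * L ^ (k - 1) :=
          diff_bound _ _ z L hL1 hz
      _ < δ * L ^ (k - 1) := mul_lt_mul_of_pos_right hsum hLpow
      _ < ε ^ k := hδL
  have hfac₀ := factor_of_roots hk _ r hr hroot
  -- Claim 1
  have claim1 : ∀ z : ℂ, z ^ k + ∑ i : Fin k, f i g * z ^ (k - 1 - (i : ℕ)) = 0 →
      ∃ j, dist z (r j) < ε := by
    intro z hz
    by_contra hcon
    push_neg at hcon
    have hlow : ε ^ k ≤ ‖z ^ k + ∑ i : Fin k, f i g₀ * z ^ (k - 1 - (i : ℕ))‖ := by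
      rw [hfac₀ z, norm_prod]
      calc ε ^ k = ∏ _j : Fin k, ε := by rw [Finset.prod_const, Finset.card_univ, Fintype.card_fin]
        _ ≤ ∏ j, ‖z - r j‖ :=
          Finset.prod_le_prod (fun _ _ => hε.le)
            (fun j _ => by rw [← Complex.dist_eq]; exact hcon j)
    have hup : ‖z ^ k + ∑ i : Fin k, f i g₀ * z ^ (k - 1 - (i : ℕ))‖ < ε ^ k := by
      have := hdiff z (hrootL z hz)
      rw [hz, zero_sub, norm_neg] at this
      exact this
    exact absurd (hlow.trans_lt hup) (lt_irrefl _)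
  obtain ⟨s, hs_inj, hs_root⟩ := hsep g
  have hfacg := factor_of_roots hk _ s hs_inj hs_root
  -- Claim 2
  have claim2 : ∀ j, ∃ z : ℂ, z ^ k + ∑ i : Fin k, f i g * z ^ (k - 1 - (i : ℕ)) = 0 ∧
      dist z (r j) < ε := by
    intro j
    by_contra hcon
    push_neg at hcon
    have hfar : ∀ m : Fin k, 2 * ε ≤ dist (s m) (r j) := by
      intro m
      have hsm : (s m) ^ k + ∑ i : Fin k, f i g * (s m) ^ (k - 1 - (i : ℕ)) = 0 :=
        (hs_root (s m)).2 ⟨m, rfl⟩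
      obtain ⟨i, hi⟩ := claim1 (s m) hsm
      have hij : i ≠ j := by
        rintro rfl
        exact absurd hi (not_lt.2 (hcon _ hsm))
      have := hε3 i j hij
      have htri : dist (r i) (r j) ≤ dist (s m) (r i) + dist (s m) (r j) :=
        dist_triangle_left _ _ _
      linarith
    have hlow : ε ^ k ≤ ‖(r j) ^ k + ∑ i : Fin k, f i g * (r j) ^ (k - 1 - (i : ℕ))‖ := by
      rw [hfacg (r j), norm_prod]
      calc ε ^ k ≤ (2 * ε) ^ k := pow_le_pow_left₀ hε.le (by linarith) _
        _ = ∏ _m : Fin k, (2 * ε) := by rw [Finset.prod_const, Finset.card_univ, Fintype.card_fin]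
        _ ≤ ∏ m, ‖r j - s m‖ := by
          refine Finset.prod_le_prod (fun _ _ => by linarith) (fun m _ => ?_)
          rw [← Complex.dist_eq, dist_comm]
          exact hfar m
    have hup : ‖(r j) ^ k + ∑ i : Fin k, f i g * (r j) ^ (k - 1 - (i : ℕ))‖ < ε ^ k := by
      have hzero : (r j) ^ k + ∑ i : Fin k, f i g₀ * (r j) ^ (k - 1 - (i : ℕ)) = 0 :=
        (hroot (r j)).2 ⟨j, rfl⟩
      have := hdiff (r j) (hrL j)
      rw [hzero, sub_zero] at this
      exact this
    exact absurd (hlow.trans_lt hup) (lt_irrefl _)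
  refine ⟨claim1, claim2, ?_⟩
  -- uniqueness
  have hball_disj : ∀ (z : ℂ) (i j : Fin k), dist z (r i) < ε → dist z (r j) < ε → i = j := by
    intro z i j hi hj
    by_contra hij
    have := hε3 i j hij
    have htri : dist (r i) (r j) ≤ dist z (r i) + dist z (r j) := dist_triangle_left _ _ _
    linarith
  have hτ : ∀ m : Fin k, ∃ j, dist (s m) (r j) < ε :=
    fun m => claim1 (s m) ((hs_root (s m)).2 ⟨m, rfl⟩)
  set τ : Fin k → Fin k := fun m => (hτ m).choose with hτdef
  have hτ_spec : ∀ m, dist (s m) (r (τ m)) < ε := fun m => (hτ m).choose_spec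
  have hτ_surj : Function.Surjective τ := by
    intro j
    obtain ⟨z, hz, hzj⟩ := claim2 j
    obtain ⟨m, rfl⟩ := (hs_root z).1 hz
    exact ⟨m, hball_disj (s m) _ _ (hτ_spec m) hzj⟩
  have hτ_inj : Function.Injective τ := Finite.injective_iff_surjective.2 hτ_surj
  intro j z z' hz hzj hz' hz'j
  obtain ⟨m, rfl⟩ := (hs_root z).1 hz
  obtain ⟨m', rfl⟩ := (hs_root z').1 hz'
  have h1 : τ m = j := hball_disj (s m) _ _ (hτ_spec m) hzj
  have h2 : τ m' = j := hball_disj (s m') _ _ (hτ_spec m') hz'j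
  rw [hτ_inj (h1.trans h2.symm)]

open Finset in
lemma exists_gap {k : ℕ} (r : Fin k → ℂ) (hr : Function.Injective r) :
    ∃ ε : ℝ, 0 < ε ∧ ∀ i j, i ≠ j → 3 * ε ≤ dist (r i) (r j) := by
  classical
  by_cases hone : ∀ i j : Fin k, i = j
  · exact ⟨1, one_pos, fun i j hij => absurd (hone i j) hij⟩
  push_neg at hone
  obtain ⟨i₀, j₀, hij₀⟩ := hone
  set t : Finset (Fin k × Fin k) := Finset.univ.filter (fun p => p.1 ≠ p.2) with ht
  have htne : t.Nonempty := ⟨(i₀, j₀), by simp [ht, hij₀]⟩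
  set d := t.inf' htne (fun p => dist (r p.1) (r p.2)) with hd
  have hdpos : 0 < d := by
    rw [hd, Finset.lt_inf'_iff]
    intro p hp
    have hne : p.1 ≠ p.2 := by simpa [ht] using (Finset.mem_filter.1 hp).2
    exact dist_pos.2 fun h => hne (hr h)
  refine ⟨d / 3, by linarith, fun i j hij => ?_⟩
  have hmem : (i, j) ∈ t := by simp [ht, hij]
  have := Finset.inf'_le (fun p : Fin k × Fin k => dist (r p.1) (r p.2)) hmem
  simp only [← hd] at this
  linarith

/-- A separable monic polynomial of degree `k` over `C(G)` (i.e. with continuous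
coefficients `f₁, …, f_k` such that for each `g` the polynomial
`w^k + f₁(g)w^(k-1) + ⋯ + f_k(g)` has `k` distinct complex roots) generates a
`k`-sheeted covering map of `G` via projection from its zero set. -/
theorem separable_polynomial_covering
    {G : Type*} [TopologicalSpace G] [CommGroup G] [IsTopologicalGroup G]
    [CompactSpace G] [ConnectedSpace G] [T2Space G]
    (k : ℕ) (hk : 0 < k) (f : Fin k → G → ℂ) (hf : ∀ i, Continuous (f i))
    (hsep : ∀ g : G, ∃ r : Fin k → ℂ, Function.Injective r ∧
      ∀ z : ℂ, (z ^ k + ∑ i : Fin k, f i g * z ^ (k - 1 - (i : ℕ)) = 0 ↔ ∃ j, z = r j)) :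
    IsCoveringOfDegree k
      (fun x : {x : G × ℂ // x.2 ^ k + ∑ i : Fin k, f i x.1 * x.2 ^ (k - 1 - (i : ℕ)) = 0} =>
        x.1.1) := by
  classical
  refine ⟨continuous_fst.comp continuous_subtype_val, ?_, ?_⟩
  · intro g
    obtain ⟨r, hr, hroot⟩ := hsep g
    exact ⟨⟨(g, r ⟨0, hk⟩), (hroot _).2 ⟨_, rfl⟩⟩, rfl⟩
  intro g₀
  obtain ⟨r, hr, hroot⟩ := hsep g₀
  obtain ⟨ε, hε, hε3⟩ := exists_gap r hr
  obtain ⟨W, hWopen, hg₀W, hW⟩ := key_local hk f hf hsep g₀ r hr hroot ε hε hε3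
  refine ⟨W, hWopen, hg₀W,
    fun j => {x | x.1.1 ∈ W ∧ dist x.1.2 (r j) < ε}, ?_, ?_, ?_, ?_⟩
  · intro j
    have hEq : {x : {x : G × ℂ // x.2 ^ k + ∑ i : Fin k, f i x.1 * x.2 ^ (k - 1 - (i : ℕ)) = 0} |
        x.1.1 ∈ W ∧ dist x.1.2 (r j) < ε} =
        Subtype.val ⁻¹' (W ×ˢ Metric.ball (r j) ε) := by
      ext x
      simp [Set.mem_prod, Metric.mem_ball]
    show IsOpen {x : {x : G × ℂ // x.2 ^ k + ∑ i : Fin k, f i x.1 * x.2 ^ (k - 1 - (i : ℕ)) = 0} |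
        x.1.1 ∈ W ∧ dist x.1.2 (r j) < ε}
    rw [hEq]
    exact (hWopen.prod Metric.isOpen_ball).preimage continuous_subtype_val
  · intro i j hij
    rw [Set.disjoint_left]
    rintro x ⟨hxW, hxi⟩ ⟨-, hxj⟩
    have h3 := hε3 i j hij
    have htri : dist (r i) (r j) ≤ dist x.1.2 (r i) + dist x.1.2 (r j) :=
      dist_triangle_left _ _ _
    linarith
  · ext x
    simp only [Set.mem_iUnion, Set.mem_preimage, Set.mem_setOf_eq]
    constructor
    · rintro ⟨j, hjW, -⟩; exact hjW
    · intro hxW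
      obtain ⟨j, hj⟩ := (hW _ hxW).1 x.1.2 x.2
      exact ⟨j, hxW, hj⟩
  · intro j
    have hex : ∀ w : W, ∃ z : ℂ,
        z ^ k + ∑ i : Fin k, f i (↑w) * z ^ (k - 1 - (i : ℕ)) = 0 ∧ dist z (r j) < ε :=
      fun w => (hW _ w.2).2.1 j
    set ρ : W → ℂ := fun w => (hex w).choose with hρdef
    have hρ_root : ∀ w : W,
        (ρ w) ^ k + ∑ i : Fin k, f i ↑w * (ρ w) ^ (k - 1 - (i : ℕ)) = 0 :=
      fun w => (hex w).choose_spec.1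
    have hρ_ball : ∀ w : W, dist (ρ w) (r j) < ε := fun w => (hex w).choose_spec.2
    have huniq : ∀ g (hg : g ∈ W), ∀ (z z' : ℂ),
        z ^ k + ∑ i : Fin k, f i g * z ^ (k - 1 - (i : ℕ)) = 0 → dist z (r j) < ε →
        z' ^ k + ∑ i : Fin k, f i g * z' ^ (k - 1 - (i : ℕ)) = 0 → dist z' (r j) < ε →
        z = z' := fun g hg => (hW g hg).2.2 j
    have hρ_cont : Continuous ρ := by
      rw [continuous_iff_continuousAt]
      intro w₁
      refine Metric.tendsto_nhds.mpr ?_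
      intro ε' hε'
      obtain ⟨r₁, hr₁, hroot₁⟩ := hsep (↑w₁ : G)
      obtain ⟨j₁, hj₁⟩ := (hroot₁ (ρ w₁)).1 (hρ_root w₁)
      obtain ⟨ε₁g, hε₁g, hε₁3⟩ := exists_gap r₁ hr₁
      set ε₁ : ℝ := min (min ε' (ε - dist (ρ w₁) (r j))) ε₁g with hε₁def
      have hballw₁ := hρ_ball w₁
      have hε₁pos : 0 < ε₁ := lt_min (lt_min hε' (by linarith)) hε₁g
      have hε₁3' : ∀ i j', i ≠ j' → 3 * ε₁ ≤ dist (r₁ i) (r₁ j') := by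
        intro i j' hij
        have h1 : ε₁ ≤ ε₁g := min_le_right _ _
        have := hε₁3 i j' hij
        linarith
      obtain ⟨W₁, hW₁open, hw₁W₁, hW₁⟩ :=
        key_local hk f hf hsep (↑w₁ : G) r₁ hr₁ hroot₁ ε₁ hε₁pos hε₁3'
      have hmem : {w : W | (↑w : G) ∈ W₁} ∈ nhds w₁ :=
        continuous_subtype_val.continuousAt.preimage_mem_nhds (hW₁open.mem_nhds hw₁W₁)
      filter_upwards [hmem] with w hw
      obtain ⟨sroot, hs0, hsball⟩ := (hW₁ ↑w hw).2.1 j₁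
      have hd1 : dist sroot (ρ w₁) < ε₁ := by rw [hj₁]; exact hsball
      have hsballj : dist sroot (r j) < ε := by
        have h2 : dist sroot (r j) ≤ dist sroot (ρ w₁) + dist (ρ w₁) (r j) :=
          dist_triangle _ _ _
        have h3 : ε₁ ≤ ε - dist (ρ w₁) (r j) :=
          le_trans (min_le_left _ _) (min_le_right _ _)
        linarith
      have hEqs : ρ w = sroot :=
        huniq ↑w w.2 (ρ w) sroot (hρ_root w) (hρ_ball w) hs0 hsballj
      rw [hEqs]
      calc dist sroot (ρ w₁) < ε₁ := hd1
        _ ≤ ε' := le_trans (min_le_left _ _) (min_le_left _ _)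
    refine ⟨⟨⟨fun x => ⟨x.val.val.1, x.prop.1⟩,
      fun w => ⟨⟨(↑w, ρ w), hρ_root w⟩, ⟨w.2, hρ_ball w⟩⟩, ?_, ?_⟩, ?_, ?_⟩, fun x => rfl⟩
    · intro x
      refine Subtype.ext (Subtype.ext (Prod.ext rfl ?_))
      exact huniq x.val.val.1 x.prop.1 _ _ (hρ_root ⟨x.val.val.1, x.prop.1⟩)
        (hρ_ball ⟨x.val.val.1, x.prop.1⟩) x.val.prop x.prop.2
    · intro w
      exact Subtype.ext rfl
    · exact Continuous.subtype_mk
        ((continuous_fst.comp continuous_subtype_val).comp continuous_subtype_val) _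
    · exact Continuous.subtype_mk
        (Continuous.subtype_mk (continuous_subtype_val.prodMk hρ_cont) _) _
end

section
/- Let G be a compact connected abelian Hausdorff topological group and let k be a positive integer. Suppose that for all continuous functions f₁, …, f_k : G → ℂ such that for every g ∈ G the complex polynomial w^k + f₁(g)w^{k−1} + … + f_k(g) has no multiple roots in ℂ, there exist continuous functions h₁, …, h_k : G → ℂ with w^k + f₁(g)w^{k−1} + … + f_k(g) = (w − h₁(g))(w − h₂(g))⋯(w − h_k(g)) as polynomials in w for every g ∈ G (i.e., every separable polynomial of degree k over C(G) is totally reducible). Then the character group of G is k!-divisible. -/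
/-- A character of a topological abelian group `G` is a continuous homomorphism from `G`
to the circle group, i.e. a continuous multiplicative map into the unit circle in `ℂ`. -/
def IsCharacter {G : Type*} [TopologicalSpace G] [CommGroup G] (χ : G → ℂ) : Prop :=
  Continuous χ ∧ (∀ g, ‖χ g‖ = 1) ∧ ∀ g h : G, χ (g * h) = χ g * χ h

/-- The character group of `G` is `n`-divisible: every character is an `n`-th power
of some character. -/
def CharGroupDivisibleBy (G : Type*) [TopologicalSpace G] [CommGroup G] (n : ℕ) : Prop :=
  ∀ χ : G → ℂ, IsCharacter χ → ∃ η : G → ℂ, IsCharacter η ∧ ∀ g : G, (η g) ^ n = χ g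

private lemma real_pow_eq_one' {x : ℝ} (hx : 0 ≤ x) {m : ℕ} (hm : m ≠ 0) (h : x ^ m = 1) :
    x = 1 := by
  rcases lt_trichotomy x 1 with h1 | h1 | h1
  · have := pow_lt_one₀ hx h1 hm; linarith
  · exact h1
  · have := one_lt_pow₀ h1 hm; linarith

private lemma abs_nat_add_three' (n : ℕ) : ‖(n : ℂ) + 3‖ = (n : ℝ) + 3 := by
  have h : ((n : ℂ) + 3) = ((n + 3 : ℕ) : ℂ) := by push_cast; ring
  rw [h, Complex.norm_natCast]; push_cast; ring

private lemma const_of_finite' {X : Type*} [TopologicalSpace X] [PreconnectedSpace X]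
    {f : X → ℂ} (hf : Continuous f) {s : Set ℂ} (hs : s.Finite) (hmem : ∀ x, f x ∈ s)
    (x y : X) : f x = f y := by
  haveI := hs.to_subtype
  exact IsPreconnected.constant_of_mapsTo isPreconnected_univ hs.isDiscrete hf.continuousOn
    (fun z _ => hmem z) (Set.mem_univ x) (Set.mem_univ y)

open Polynomial in
private lemma charDivStep' {G : Type*} [TopologicalSpace G] [CommGroup G] [IsTopologicalGroup G]
    [ConnectedSpace G]
    (k : ℕ)
    (h : ∀ f : Fin k → G → ℂ, (∀ i, Continuous (f i)) →
      (∀ g : G, ∃ r : Fin k → ℂ, Function.Injective r ∧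
        ∀ z : ℂ, (z ^ k + ∑ i : Fin k, f i g * z ^ (k - 1 - (i : ℕ)) = 0 ↔ ∃ j, z = r j)) →
      ∃ hfun : Fin k → G → ℂ, (∀ i, Continuous (hfun i)) ∧
        ∀ (g : G) (w : ℂ),
          w ^ k + ∑ i : Fin k, f i g * w ^ (k - 1 - (i : ℕ)) = ∏ i : Fin k, (w - hfun i g))
    (m : ℕ) (hm0 : 0 < m) (hmk : m ≤ k) :
    CharGroupDivisibleBy G m := by
  intro χ hχfull
  obtain ⟨hχc, hχabs, hχmul⟩ := hχfull
  have hm : m ≠ 0 := hm0.ne'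
  have hχne : ∀ g, χ g ≠ 0 := by
    intro g h0
    have := hχabs g; rw [h0] at this; simp at this
  have hχ1 : χ 1 = 1 := by
    have h1 := hχmul 1 1
    rw [mul_one] at h1
    exact mul_left_cancel₀ (hχne 1) (by rw [mul_one, ← h1])
  have habs1 : ∀ (g : G) (z : ℂ), z ^ m = χ g → ‖z‖ = 1 := by
    intro g z hz
    have h1 : ‖z‖ ^ m = 1 := by rw [← norm_pow, hz, hχabs g]
    exact real_pow_eq_one' (norm_nonneg z) hm h1
  -- the polynomial family
  set Q : Polynomial ℂ := ∏ j : Fin (k - m), (X - C ((j : ℕ) + 3 : ℂ)) with hQ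
  have hQmonic : Q.Monic := monic_prod_of_monic _ _ fun j _ => monic_X_sub_C _
  have hQdeg : Q.natDegree = k - m := by
    rw [hQ, natDegree_prod_of_monic _ _ fun j _ => monic_X_sub_C _]
    simp only [natDegree_X_sub_C]
    simp
  have hQeval : ∀ z : ℂ, Q.eval z = ∏ j : Fin (k - m), (z - ((j : ℕ) + 3)) := by
    intro z; simp [hQ, eval_prod]
  set P : G → Polynomial ℂ := fun g => (X ^ m - C (χ g)) * Q with hP
  have hPmonic : ∀ g, (P g).Monic := fun g => (monic_X_pow_sub_C (χ g) hm).mul hQmonic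
  have hPdeg : ∀ g, (P g).natDegree = k := by
    intro g
    rw [hP]
    rw [Polynomial.natDegree_mul (monic_X_pow_sub_C (χ g) hm).ne_zero hQmonic.ne_zero,
      natDegree_X_pow_sub_C, hQdeg]
    omega
  have hPeval : ∀ (g : G) (z : ℂ), (P g).eval z = (z ^ m - χ g) * Q.eval z := by
    intro g z; simp [hP, eval_mul, eval_sub, eval_pow]
  set f : Fin k → G → ℂ := fun i g => (P g).coeff (k - 1 - (i : ℕ)) with hf
  have keyeval : ∀ (g : G) (z : ℂ),
      z ^ k + ∑ i : Fin k, f i g * z ^ (k - 1 - (i : ℕ)) = (P g).eval z := by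
    intro g z
    have hc : (P g).coeff k = 1 := (hPdeg g) ▸ (hPmonic g).coeff_natDegree
    rw [eval_eq_sum_range, hPdeg g, Finset.sum_range_succ, hc, one_mul]
    have hsum : ∑ i : Fin k, f i g * z ^ (k - 1 - (i : ℕ))
        = ∑ i ∈ Finset.range k, (P g).coeff i * z ^ i := by
      rw [Fin.sum_univ_eq_sum_range (fun i => (P g).coeff (k - 1 - i) * z ^ (k - 1 - i))]
      exact Finset.sum_range_reflect (fun i => (P g).coeff i * z ^ i) k
    rw [hsum, add_comm]
  have hfc : ∀ i, Continuous (f i) := by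
    intro i
    have hrepr : f i = fun g =>
        (X ^ m * Q).coeff (k - 1 - (i : ℕ)) - χ g * Q.coeff (k - 1 - (i : ℕ)) := by
      funext g
      simp only [hf, hP, sub_mul, coeff_sub, coeff_C_mul]
    rw [hrepr]
    exact continuous_const.sub (hχc.mul continuous_const)
  have hroots : ∀ g : G, ∃ r : Fin k → ℂ, Function.Injective r ∧
      ∀ z : ℂ, (z ^ k + ∑ i : Fin k, f i g * z ^ (k - 1 - (i : ℕ)) = 0 ↔ ∃ j, z = r j) := by
    intro g
    have ha : χ g ≠ 0 := hχne g
    set w₀ : ℂ := Complex.exp (Complex.log (χ g) / m) with hw₀def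
    have hw₀ : w₀ ^ m = χ g := by
      rw [hw₀def, ← Complex.exp_nat_mul, mul_div_cancel₀ _ (Nat.cast_ne_zero.mpr hm),
        Complex.exp_log ha]
    have hw₀ne : w₀ ≠ 0 := Complex.exp_ne_zero _
    set ζ : ℂ := Complex.exp (2 * Real.pi * Complex.I / m) with hζdef
    have hζ : IsPrimitiveRoot ζ m := Complex.isPrimitiveRoot_exp m hm
    haveI : NeZero m := ⟨hm⟩
    have hpow : ∀ z : ℂ, z ^ m = χ g ↔ ∃ i : ℕ, i < m ∧ z = ζ ^ i * w₀ := by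
      intro z
      constructor
      · intro hz
        have hdiv : (z / w₀) ^ m = 1 := by rw [div_pow, hz, hw₀, div_self ha]
        obtain ⟨i, him, hi⟩ := hζ.eq_pow_of_pow_eq_one hdiv
        refine ⟨i, him, ?_⟩
        field_simp at hi
        exact hi.symm
      · rintro ⟨i, _, rfl⟩
        rw [mul_pow, ← pow_mul, mul_comm i m, pow_mul, hζ.pow_eq_one, one_pow, one_mul, hw₀]
    refine ⟨fun j => if (j : ℕ) < m then ζ ^ (j : ℕ) * w₀ else (((j : ℕ) - m : ℕ) : ℂ) + 3,
      ?_, ?_⟩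
    · -- injectivity
      intro j1 j2 heq
      dsimp only at heq
      have habsroot : ∀ i : ℕ, i < m → ‖ζ ^ i * w₀‖ = 1 := fun i hi =>
        habs1 g _ ((hpow _).mpr ⟨i, hi, rfl⟩)
      by_cases h1 : (j1 : ℕ) < m <;> by_cases h2 : (j2 : ℕ) < m
      · rw [if_pos h1, if_pos h2] at heq
        exact Fin.ext (hζ.pow_inj h1 h2 (mul_right_cancel₀ hw₀ne heq))
      · rw [if_pos h1, if_neg h2] at heq
        have habs := congrArg norm heq
        rw [habsroot _ h1, abs_nat_add_three'] at habs
        have : (0 : ℝ) ≤ (((j2 : ℕ) - m : ℕ) : ℝ) := Nat.cast_nonneg _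
        linarith
      · rw [if_neg h1, if_pos h2] at heq
        have habs := congrArg norm heq.symm
        rw [habsroot _ h2, abs_nat_add_three'] at habs
        have : (0 : ℝ) ≤ (((j1 : ℕ) - m : ℕ) : ℝ) := Nat.cast_nonneg _
        linarith
      · rw [if_neg h1, if_neg h2] at heq
        have h3 := add_right_cancel heq
        have h4 : ((j1 : ℕ) - m : ℕ) = ((j2 : ℕ) - m : ℕ) := Nat.cast_injective h3
        exact Fin.ext (by omega)
    · intro z
      rw [keyeval g z, hPeval g z]
      constructor
      · intro h0
        rcases mul_eq_zero.mp h0 with h0 | h0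
        · have hz : z ^ m = χ g := by
            have := sub_eq_zero.mp h0; exact this
          obtain ⟨i, him, rfl⟩ := (hpow z).mp hz
          refine ⟨⟨i, lt_of_lt_of_le him hmk⟩, ?_⟩
          dsimp only
          rw [if_pos him]
        · rw [hQeval] at h0
          obtain ⟨j, -, hj⟩ := Finset.prod_eq_zero_iff.mp h0
          have hz : z = ((j : ℕ) : ℂ) + 3 := sub_eq_zero.mp hj
          have hjlt : (j : ℕ) < k - m := j.isLt
          refine ⟨⟨m + (j : ℕ), by omega⟩, ?_⟩
          have hnot : ¬ (m + (j : ℕ) < m) := by omega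
          dsimp only
          rw [if_neg hnot]
          simpa [Nat.add_sub_cancel_left] using hz
      · rintro ⟨j, rfl⟩
        dsimp only
        by_cases hj : (j : ℕ) < m
        · rw [if_pos hj]
          apply mul_eq_zero_of_left
          rw [sub_eq_zero]
          exact (hpow _).mpr ⟨(j : ℕ), hj, rfl⟩
        · rw [if_neg hj]
          apply mul_eq_zero_of_right
          rw [hQeval]
          have hjk : (j : ℕ) - m < k - m := by
            have := j.isLt; omega
          apply Finset.prod_eq_zero (Finset.mem_univ (⟨(j : ℕ) - m, hjk⟩ : Fin (k - m)))
          simp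
  obtain ⟨hfun, hfc2, hfeq⟩ := h f hfc hroots
  -- pick a branch which equals 1 at g = 1
  have h1root : ∏ i : Fin k, ((1 : ℂ) - hfun i 1) = 0 := by
    rw [← hfeq 1 1, keyeval 1 1, hPeval 1 1, hχ1]
    simp
  obtain ⟨i0, -, hi0⟩ := Finset.prod_eq_zero_iff.mp h1root
  have hi01 : hfun i0 1 = 1 := (sub_eq_zero.mp hi0).symm
  set η := hfun i0 with hηdef
  have hηcont : Continuous η := hfc2 i0
  have hroot_eval : ∀ g, ((η g) ^ m - χ g) * Q.eval (η g) = 0 := by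
    intro g
    have h0 : (η g) ^ k + ∑ i : Fin k, f i g * (η g) ^ (k - 1 - (i : ℕ)) = 0 := by
      rw [hfeq g (η g)]
      exact Finset.prod_eq_zero (Finset.mem_univ i0) (by simp [hηdef])
    rw [keyeval g (η g), hPeval g (η g)] at h0
    exact h0
  have hQabs : ∀ z : ℂ, Q.eval z = 0 → 3 ≤ ‖z‖ := by
    intro z hz
    rw [hQeval] at hz
    obtain ⟨j, -, hj⟩ := Finset.prod_eq_zero_iff.mp hz
    rw [sub_eq_zero.mp hj, abs_nat_add_three']
    have : (0 : ℝ) ≤ ((j : ℕ) : ℝ) := Nat.cast_nonneg _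
    linarith
  set B := {g : G | Q.eval (η g) = 0} with hBdef
  have hBclosed : IsClosed B := by
    have : B = (fun g => Q.eval (η g)) ⁻¹' {0} := rfl
    rw [this]
    exact IsClosed.preimage (Q.continuous.comp hηcont) isClosed_singleton
  have hcover : ∀ g, g ∉ B → (η g) ^ m = χ g := fun g hg =>
    sub_eq_zero.mp ((mul_eq_zero.mp (hroot_eval g)).resolve_right hg)
  have hdisj : ∀ g, g ∈ B → ¬ (η g) ^ m = χ g := by
    intro g hg hgA
    have ha1 := habs1 g _ hgA
    have ha3 := hQabs _ hg
    linarith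
  have hBopen : IsOpen B := by
    have hcompl : B = {g : G | (η g) ^ m = χ g}ᶜ := by
      ext g
      constructor
      · exact fun hg => hdisj g hg
      · intro hg
        by_contra hng
        exact hg (hcover g hng)
    rw [hcompl]
    exact (isClosed_eq (hηcont.pow m) hχc).isOpen_compl
  have hBempty : B = ∅ := by
    rcases isClopen_iff.mp ⟨hBclosed, hBopen⟩ with h0 | h0
    · exact h0
    · exfalso
      have h1B : (1 : G) ∈ B := h0 ▸ Set.mem_univ 1
      exact hdisj 1 h1B (by rw [hi01, one_pow, hχ1])
  have hroot : ∀ g, (η g) ^ m = χ g := by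
    intro g
    apply hcover
    rw [hBempty]
    exact Set.notMem_empty g
  have hηabs : ∀ g, ‖η g‖ = 1 := fun g => habs1 g _ (hroot g)
  have hηne : ∀ g, η g ≠ 0 := by
    intro g h0
    have := hηabs g; rw [h0] at this; simp at this
  -- multiplicativity via connectedness of G × G
  set c : G × G → ℂ := fun p => η p.1 * η p.2 / η (p.1 * p.2) with hcdef
  have hccont : Continuous c := by
    apply Continuous.div
    · exact (hηcont.comp continuous_fst).mul (hηcont.comp continuous_snd)
    · exact hηcont.comp continuous_mul
    · exact fun p => hηne _
  have hcpow : ∀ p : G × G, (c p) ^ m = 1 := by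
    intro p
    simp only [hcdef, div_pow, mul_pow, hroot]
    rw [hχmul]
    exact div_self (mul_ne_zero (hχne _) (hχne _))
  have hsfin : {z : ℂ | z ^ m = 1}.Finite := by
    have hset : {z : ℂ | z ^ m = 1} = {z : ℂ | (X ^ m - C 1 : Polynomial ℂ).IsRoot z} := by
      ext z
      simp [Polynomial.IsRoot, sub_eq_zero]
    rw [hset]
    exact Polynomial.finite_setOf_isRoot (monic_X_pow_sub_C (1 : ℂ) hm).ne_zero
  have hconst : ∀ p : G × G, c p = c (1, 1) :=
    fun p => const_of_finite' hccont hsfin (fun p => hcpow p) p (1, 1)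
  have hc11 : c (1, 1) = 1 := by
    simp only [hcdef, mul_one, hi01]
    norm_num
  refine ⟨η, ⟨hηcont, hηabs, ?_⟩, hroot⟩
  intro g g'
  have hcon := hconst (g, g')
  rw [hc11] at hcon
  have := (div_eq_one_iff_eq (hηne (g * g'))).mp hcon
  exact this.symm

/-- If every separable monic polynomial of degree `k` over `C(G)` is totally reducible,
then the character group of the compact connected abelian Hausdorff group `G` is
`k!`-divisible. -/
theorem factorial_divisible_of_totally_reducible
    {G : Type*} [TopologicalSpace G] [CommGroup G] [IsTopologicalGroup G]
    [CompactSpace G] [ConnectedSpace G] [T2Space G]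
    (k : ℕ) (hk : 0 < k)
    (h : ∀ f : Fin k → G → ℂ, (∀ i, Continuous (f i)) →
      (∀ g : G, ∃ r : Fin k → ℂ, Function.Injective r ∧
        ∀ z : ℂ, (z ^ k + ∑ i : Fin k, f i g * z ^ (k - 1 - (i : ℕ)) = 0 ↔ ∃ j, z = r j)) →
      ∃ hfun : Fin k → G → ℂ, (∀ i, Continuous (hfun i)) ∧
        ∀ (g : G) (w : ℂ),
          w ^ k + ∑ i : Fin k, f i g * w ^ (k - 1 - (i : ℕ)) = ∏ i : Fin k, (w - hfun i g)) :
    CharGroupDivisibleBy G (Nat.factorial k) := by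
  have step : ∀ m, 0 < m → m ≤ k → CharGroupDivisibleBy G m := fun m => charDivStep' k h m
  have key : ∀ m, m ≤ k → CharGroupDivisibleBy G (Nat.factorial m) := by
    intro m
    induction m with
    | zero =>
      intro _ χ hχ
      exact ⟨χ, hχ, fun g => by rw [Nat.factorial_zero, pow_one]⟩
    | succ n ih =>
      intro hle χ hχ
      obtain ⟨ψ, hψ, hψpow⟩ := step (n + 1) n.succ_pos hle χ hχ
      obtain ⟨η, hη, hηpow⟩ := ih (Nat.le_of_succ_le hle) ψ hψ
      refine ⟨η, hη, fun g => ?_⟩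
      rw [Nat.factorial_succ, mul_comm (n + 1) (Nat.factorial n), pow_mul, hηpow g, hψpow g]
  exact key k le_rfl
end
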